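/- arXiv:1103.0077 — 3 statements merged into one kernel-verified Lean document; each statement's English description precedes it below -/
import Mathlib

section
/- Let k ≥ 1 and let Υ ⊆ F_{2,k}. Then the following identity of formal power series in t with coefficients in ℚ[x] holds: (1 + Σ_{n≥1} (t^{2n}/(2kn)!) Σ_{F ∈ F^{(2),Υ}_{2n,k}} x^{Υ-mch^{(2)}(F)}) · (1 − Σ_{n≥1} (x−1)^{n−1} t^{2n} full_{2n}^Υ/(2kn)!) = 1. -/
/-- `F` is a filling of the `k × n` rectangle (row `i`, `1 ≤ i ≤ k`, counted from the
bottom; column `j`, `1 ≤ j ≤ n`) with the integers `1, …, kn`, each used exactly once,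
whose entries strictly increase up each column.  Cells outside the rectangle carry `0`. -/
def IsFilling (n k : ℕ) (F : ℕ → ℕ → ℕ) : Prop :=
  (∀ i j, F i j ≠ 0 → 1 ≤ i ∧ i ≤ k ∧ 1 ≤ j ∧ j ≤ n) ∧
  Set.BijOn (fun p : ℕ × ℕ => F p.1 p.2) (Set.Icc 1 k ×ˢ Set.Icc 1 n) (Set.Icc 1 (k * n)) ∧
  ∀ i j, 1 ≤ i → i < k → 1 ≤ j → j ≤ n → F i j < F (i + 1) j

/-- The entries of `F` in columns `i, …, i + j - 1` are in the same relative order as the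
`k × j` pattern `P`; i.e. `F` has a `P`-match starting at position `i`. -/
def MatchAt (j k : ℕ) (P F : ℕ → ℕ → ℕ) (i : ℕ) : Prop :=
  ∀ a b c d, 1 ≤ a → a ≤ k → 1 ≤ b → b ≤ j → 1 ≤ c → c ≤ k → 1 ≤ d → d ≤ j →
    (F a (i - 1 + b) < F c (i - 1 + d) ↔ P a b < P c d)

/-- `full_n^Υ`: the number of fillings `F ∈ F_{n,k}` having `Υ`-matches starting at
every position `1, …, n-1` (for two-column patterns `Υ ⊆ F_{2,k}`). -/
noncomputable def fullCount (n k : ℕ) (U : Set (ℕ → ℕ → ℕ)) : ℕ :=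
  Nat.card {F : ℕ → ℕ → ℕ // IsFilling n k F ∧
    ∀ i, 1 ≤ i → i ≤ n - 1 → ∃ P ∈ U, MatchAt 2 k P F i}

/-- `Υ-mch^{(2)}(F)`: the number of even positions `1 ≤ i ≤ n-1` at which `F` has an
`Υ`-match. -/
noncomputable def mch2Count (n k : ℕ) (U : Set (ℕ → ℕ → ℕ)) (F : ℕ → ℕ → ℕ) : ℕ :=
  Set.ncard {i | Even i ∧ 1 ≤ i ∧ i ≤ n - 1 ∧ ∃ P ∈ U, MatchAt 2 k P F i}

/-- `F^{(2),Υ}_{n,k}`: fillings with `Υ`-matches starting at every odd position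
`1 ≤ i ≤ n-1`. -/
def OddFull (n k : ℕ) (U : Set (ℕ → ℕ → ℕ)) (F : ℕ → ℕ → ℕ) : Prop :=
  IsFilling n k F ∧ ∀ i, Odd i → i ≤ n - 1 → ∃ P ∈ U, MatchAt 2 k P F i

namespace Stmt8Aux

/-! ### Rank / unrank toolkit -/

/-- Rank of `v` inside the finset `V`: the number of elements of `V` that are `≤ v`. -/
def rk (V : Finset ℕ) (v : ℕ) : ℕ := (V.filter (fun x => x ≤ v)).card

lemma rk_mono (V : Finset ℕ) {v w : ℕ} (h : v ≤ w) : rk V v ≤ rk V w := by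
  apply Finset.card_le_card
  intro x hx
  rw [Finset.mem_filter] at hx ⊢
  exact ⟨hx.1, le_trans hx.2 h⟩

lemma rk_lt_rk (V : Finset ℕ) {v w : ℕ} (hw : w ∈ V) (h : v < w) : rk V v < rk V w := by
  apply Finset.card_lt_card
  constructor
  · intro x hx
    rw [Finset.mem_filter] at hx ⊢
    exact ⟨hx.1, le_trans hx.2 h.le⟩
  intro hsub
  have := hsub (Finset.mem_filter.2 ⟨hw, le_refl w⟩)
  have := (Finset.mem_filter.1 this).2
  omega

lemma rk_pos (V : Finset ℕ) {v : ℕ} (hv : v ∈ V) : 1 ≤ rk V v := by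
  have : v ∈ V.filter (fun x => x ≤ v) := Finset.mem_filter.2 ⟨hv, le_refl v⟩
  exact Finset.card_pos.2 ⟨v, this⟩

lemma rk_le_card (V : Finset ℕ) (v : ℕ) : rk V v ≤ V.card :=
  Finset.card_le_card (Finset.filter_subset _ _)

lemma rk_zero (V : Finset ℕ) (hV : ∀ x ∈ V, 1 ≤ x) : rk V 0 = 0 := by
  unfold rk
  rw [Finset.card_eq_zero, Finset.filter_eq_empty_iff]
  intro x hx
  have := hV x hx; omega

lemma rk_lt_iff (V : Finset ℕ) {v w : ℕ} (hv : v ∈ V) (hw : w ∈ V) :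
    rk V v < rk V w ↔ v < w := by
  constructor
  · intro h
    by_contra hc
    push_neg at hc
    have := rk_mono V hc
    omega
  · exact rk_lt_rk V hw

lemma rk_injOn (V : Finset ℕ) : Set.InjOn (rk V) ↑V := by
  intro v hv w hw h
  by_contra hne
  rcases Nat.lt_or_ge v w with hlt | hge
  · have := rk_lt_rk V hw hlt; omega
  · have hlt : w < v := lt_of_le_of_ne hge (Ne.symm hne)
    have := rk_lt_rk V hv hlt; omega

lemma image_rk (V : Finset ℕ) : V.image (rk V) = Finset.Icc 1 V.card := by
  apply Finset.eq_of_subset_of_card_le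
  · intro r hr
    rcases Finset.mem_image.1 hr with ⟨v, hv, rfl⟩
    exact Finset.mem_Icc.2 ⟨rk_pos V hv, rk_le_card V v⟩
  · rw [Nat.card_Icc, Finset.card_image_of_injOn (rk_injOn V)]
    omega

/-- Inverse of `rk` on `V`. -/
noncomputable def unrk (V : Finset ℕ) (r : ℕ) : ℕ :=
  if h : ∃ v, v ∈ V ∧ rk V v = r then h.choose else 0

lemma unrk_rk (V : Finset ℕ) {v : ℕ} (hv : v ∈ V) : unrk V (rk V v) = v := by
  have h : ∃ w, w ∈ V ∧ rk V w = rk V v := ⟨v, hv, rfl⟩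
  rw [unrk, dif_pos h]
  exact rk_injOn V h.choose_spec.1 hv h.choose_spec.2

lemma unrk_mem_and_rk (V : Finset ℕ) {r : ℕ} (hr : 1 ≤ r) (hr' : r ≤ V.card) :
    unrk V r ∈ V ∧ rk V (unrk V r) = r := by
  have hmem : r ∈ V.image (rk V) := by
    rw [image_rk]; exact Finset.mem_Icc.2 ⟨hr, hr'⟩
  rcases Finset.mem_image.1 hmem with ⟨v, hv, hvr⟩
  have h : ∃ w, w ∈ V ∧ rk V w = r := ⟨v, hv, hvr⟩
  rw [unrk, dif_pos h]
  exact ⟨h.choose_spec.1, h.choose_spec.2⟩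

lemma unrk_mem (V : Finset ℕ) {r : ℕ} (hr : 1 ≤ r) (hr' : r ≤ V.card) : unrk V r ∈ V :=
  (unrk_mem_and_rk V hr hr').1

lemma rk_unrk (V : Finset ℕ) {r : ℕ} (hr : 1 ≤ r) (hr' : r ≤ V.card) :
    rk V (unrk V r) = r := (unrk_mem_and_rk V hr hr').2

lemma unrk_zero (V : Finset ℕ) : unrk V 0 = 0 := by
  rw [unrk, dif_neg]
  rintro ⟨v, hv, hr⟩
  have := rk_pos V hv; omega

lemma unrk_lt_iff (V : Finset ℕ) {r s : ℕ} (hr : 1 ≤ r) (hr' : r ≤ V.card)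
    (hs : 1 ≤ s) (hs' : s ≤ V.card) : unrk V r < unrk V s ↔ r < s := by
  have h1 := unrk_mem_and_rk V hr hr'
  have h2 := unrk_mem_and_rk V hs hs'
  rw [← rk_lt_iff V h1.1 h2.1, h1.2, h2.2]

lemma unrk_bijOn (V : Finset ℕ) : Set.BijOn (unrk V) (Set.Icc 1 V.card) ↑V := by
  refine ⟨fun r hr => unrk_mem V hr.1 hr.2, ?_, ?_⟩
  · intro r hr s hs h
    by_contra hne
    rcases Nat.lt_or_ge r s with hlt | hge
    · have := (unrk_lt_iff V hr.1 hr.2 hs.1 hs.2).2 hlt; omega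
    · have hlt : s < r := lt_of_le_of_ne hge (Ne.symm hne)
      have := (unrk_lt_iff V hs.1 hs.2 hr.1 hr.2).2 hlt; omega
  · intro v hv
    exact ⟨rk V v, ⟨rk_pos V hv, rk_le_card V v⟩, unrk_rk V hv⟩

lemma rk_bijOn (V : Finset ℕ) : Set.BijOn (rk V) ↑V (Set.Icc 1 V.card) := by
  refine ⟨fun v hv => ⟨rk_pos V hv, rk_le_card V v⟩, rk_injOn V, ?_⟩
  intro r hr
  exact ⟨unrk V r, unrk_mem V hr.1 hr.2, rk_unrk V hr.1 hr.2⟩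

end Stmt8Aux

namespace Stmt8Aux

/-! ### Filling basics -/

lemma filling_zero (m k : ℕ) {F : ℕ → ℕ → ℕ} (hF : IsFilling m k F) {i j : ℕ}
    (h : ¬ (1 ≤ i ∧ i ≤ k ∧ 1 ≤ j ∧ j ≤ m)) : F i j = 0 := by
  by_contra hc
  exact h (hF.1 i j hc)

lemma filling_mem (m k : ℕ) {F : ℕ → ℕ → ℕ} (hF : IsFilling m k F) {i j : ℕ}
    (hi : 1 ≤ i) (hik : i ≤ k) (hj : 1 ≤ j) (hjm : j ≤ m) :
    1 ≤ F i j ∧ F i j ≤ k * m := by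
  have := hF.2.1.mapsTo (show ((i, j) : ℕ × ℕ) ∈ Set.Icc 1 k ×ˢ Set.Icc 1 m from
    ⟨⟨hi, hik⟩, ⟨hj, hjm⟩⟩)
  exact this

lemma filling_le (m k : ℕ) {F : ℕ → ℕ → ℕ} (hF : IsFilling m k F) (i j : ℕ) :
    F i j ≤ k * m := by
  by_cases h : 1 ≤ i ∧ i ≤ k ∧ 1 ≤ j ∧ j ≤ m
  · exact (filling_mem m k hF h.1 h.2.1 h.2.2.1 h.2.2.2).2
  · rw [filling_zero m k hF h]; omega

lemma finite_fillings (m k : ℕ) : {F : ℕ → ℕ → ℕ | IsFilling m k F}.Finite := by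
  classical
  set Gr : Finset (ℕ × ℕ) := Finset.Icc 1 k ×ˢ Finset.Icc 1 m with hGr
  apply Set.Finite.subset (Set.finite_range
    (fun (g : Gr → Fin (k * m + 1)) (i j : ℕ) =>
      if h : (i, j) ∈ Gr then (g ⟨(i, j), h⟩ : ℕ) else 0))
  intro F hF
  refine ⟨fun p => ⟨F p.1.1 p.1.2, Nat.lt_succ_of_le (filling_le m k hF _ _)⟩, ?_⟩
  funext i j
  by_cases h : (i, j) ∈ Gr
  · simp [h]
  · show dite ((i,j) ∈ Gr) _ _ = F i j
    rw [dif_neg h]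
    refine (filling_zero m k hF ?_).symm
    intro hc
    exact h (by simp [hGr, Finset.mem_Icc]; omega)

/-- `F` has a `Υ`-match at position `i`. -/
def HasMatch (k : ℕ) (U : Set (ℕ → ℕ → ℕ)) (F : ℕ → ℕ → ℕ) (i : ℕ) : Prop :=
  ∃ P ∈ U, MatchAt 2 k P F i

/-- Matches only depend on the relative order of the two columns involved. -/
lemma hasMatch_congr (k : ℕ) (U : Set (ℕ → ℕ → ℕ)) {F F' : ℕ → ℕ → ℕ} {i i' : ℕ}
    (h : ∀ a b c d, 1 ≤ a → a ≤ k → 1 ≤ b → b ≤ 2 → 1 ≤ c → c ≤ k → 1 ≤ d → d ≤ 2 →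
      (F a (i - 1 + b) < F c (i - 1 + d) ↔ F' a (i' - 1 + b) < F' c (i' - 1 + d))) :
    HasMatch k U F i ↔ HasMatch k U F' i' := by
  constructor
  · rintro ⟨P, hP, hm⟩
    exact ⟨P, hP, fun a b c d ha hak hb hbj hc hck hd hdj =>
      (h a b c d ha hak hb hbj hc hck hd hdj).symm.trans (hm a b c d ha hak hb hbj hc hck hd hdj)⟩
  · rintro ⟨P, hP, hm⟩
    exact ⟨P, hP, fun a b c d ha hak hb hbj hc hck hd hdj =>
      (h a b c d ha hak hb hbj hc hck hd hdj).trans (hm a b c d ha hak hb hbj hc hck hd hdj)⟩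

/-- The filling of the empty rectangle. -/
lemma isFilling_zero_iff (k : ℕ) (F : ℕ → ℕ → ℕ) :
    IsFilling 0 k F ↔ F = fun _ _ => 0 := by
  constructor
  · intro hF
    funext i j
    exact filling_zero 0 k hF (by omega)
  · rintro rfl
    refine ⟨fun i j h => absurd rfl h, ?_, fun i j h1 h2 h3 h4 => by omega⟩
    have h1 : (Set.Icc 1 k ×ˢ Set.Icc (1:ℕ) 0 : Set (ℕ × ℕ)) = ∅ := by
      rw [Set.Icc_eq_empty (show ¬(1:ℕ) ≤ 0 by omega), Set.prod_empty]
    have h2 : (Set.Icc 1 (k * 0) : Set ℕ) = ∅ := by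
      rw [Nat.mul_zero, Set.Icc_eq_empty (show ¬(1:ℕ) ≤ 0 by omega)]
    rw [h1, h2]
    exact Set.bijOn_empty _

end Stmt8Aux

namespace Stmt8Aux

/-! ### Combining two fillings -/

/-- Glue a filling `G` of `c` columns and a filling `H` of the remaining columns,
sending the values of `G` into `V` and the values of `H` into `W`, order-preservingly. -/
noncomputable def combine (c : ℕ) (V W : Finset ℕ) (G H : ℕ → ℕ → ℕ) : ℕ → ℕ → ℕ :=
  fun i col => if col ≤ c then unrk V (G i col) else unrk W (H i (col - c))

/-- Column-grid of a `k × c` rectangle as a set of pairs. -/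
def sgrid (k c : ℕ) : Set (ℕ × ℕ) := Set.Icc 1 k ×ˢ Set.Icc 1 c

section CombineSplit

variable {k m c : ℕ} {V : Finset ℕ} {G H : ℕ → ℕ → ℕ}
variable (hc : c ≤ m) (hV : V ⊆ Finset.Icc 1 (k * m)) (hVc : V.card = k * c)
variable (hG : IsFilling c k G) (hH : IsFilling (m - c) k H)

lemma card_W (hV : V ⊆ Finset.Icc 1 (k * m)) (hVc : V.card = k * c) (hc : c ≤ m) :
    ((Finset.Icc 1 (k * m)) \ V).card = k * (m - c) := by
  rw [Finset.card_sdiff_of_subset hV, Nat.card_Icc, hVc, Nat.mul_sub]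
  omega

lemma V_pos (hV : V ⊆ Finset.Icc 1 (k * m)) : ∀ x ∈ V, 1 ≤ x :=
  fun x hx => (Finset.mem_Icc.1 (hV hx)).1

lemma W_pos : ∀ x ∈ (Finset.Icc 1 (k * m)) \ V, 1 ≤ x :=
  fun x hx => (Finset.mem_Icc.1 (Finset.mem_sdiff.1 hx).1).1

include hc hV hVc hG hH

lemma combine_bijOn_left :
    Set.BijOn (fun p : ℕ × ℕ => combine c V (Finset.Icc 1 (k * m) \ V) G H p.1 p.2)
      (sgrid k c) ↑V := by
  have h1 : Set.BijOn (unrk V ∘ fun p : ℕ × ℕ => G p.1 p.2) (sgrid k c) ↑V := by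
    apply Set.BijOn.comp (t := Set.Icc 1 (k * c))
    · rw [← hVc]; exact unrk_bijOn V
    · exact hG.2.1
  apply h1.congr
  intro p hp
  simp only [Function.comp]
  exact (if_pos hp.2.2).symm

lemma combine_bijOn_right :
    Set.BijOn (fun p : ℕ × ℕ => combine c V (Finset.Icc 1 (k * m) \ V) G H p.1 p.2)
      (Set.Icc 1 k ×ˢ Set.Icc (c + 1) m) ↑(Finset.Icc 1 (k * m) \ V) := by
  have hshift : Set.BijOn (fun p : ℕ × ℕ => (p.1, p.2 - c))
      (Set.Icc 1 k ×ˢ Set.Icc (c + 1) m) (sgrid k (m - c)) := by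
    refine ⟨?_, ?_, ?_⟩
    · rintro ⟨i, j⟩ ⟨hi, hj⟩
      simp only [Set.mem_Icc] at hi hj
      exact ⟨by simpa using hi, by simp only [Set.mem_Icc]; omega⟩
    · rintro ⟨i, j⟩ ⟨hi, hj⟩ ⟨i', j'⟩ ⟨hi', hj'⟩ h
      simp only [Set.mem_Icc] at hj hj'
      simp only [Prod.mk.injEq] at h
      have : j = j' := by omega
      simp [h.1, this]
    · rintro ⟨i, j⟩ ⟨hi, hj⟩
      simp only [Set.mem_Icc] at hi hj
      refine ⟨(i, c + j), ⟨Set.mem_Icc.2 ⟨hi.1, hi.2⟩,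
        Set.mem_Icc.2 ⟨by omega, by omega⟩⟩, ?_⟩
      show (i, c + j - c) = (i, j)
      simp only [Prod.mk.injEq]
      exact ⟨trivial, by omega⟩
  have h1 : Set.BijOn ((unrk (Finset.Icc 1 (k * m) \ V)) ∘ (fun p : ℕ × ℕ => H p.1 p.2) ∘
      (fun p : ℕ × ℕ => (p.1, p.2 - c)))
      (Set.Icc 1 k ×ˢ Set.Icc (c + 1) m) ↑(Finset.Icc 1 (k * m) \ V) := by
    apply Set.BijOn.comp (t := Set.Icc 1 ((Finset.Icc 1 (k * m) \ V).card))
    · exact unrk_bijOn _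
    · rw [card_W hV hVc hc]
      exact Set.BijOn.comp hH.2.1 hshift
  apply h1.congr
  rintro ⟨i, j⟩ ⟨hi, hj⟩
  simp only [Set.mem_Icc] at hj
  simp only [Function.comp, combine]
  rw [if_neg (by omega)]

lemma combine_filling : IsFilling m k (combine c V (Finset.Icc 1 (k * m) \ V) G H) := by
  set W := Finset.Icc 1 (k * m) \ V with hW
  refine ⟨?_, ?_, ?_⟩
  · intro i j h
    rw [combine] at h
    by_cases hj : j ≤ c
    · rw [if_pos hj] at h
      have hG0 : G i j ≠ 0 := by
        intro h0; rw [h0, unrk_zero] at h; exact h rfl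
      have := hG.1 i j hG0
      omega
    · rw [if_neg hj] at h
      have hH0 : H i (j - c) ≠ 0 := by
        intro h0; rw [h0, unrk_zero] at h; exact h rfl
      have := hH.1 i (j - c) hH0
      omega
  · have hdom : (Set.Icc 1 k ×ˢ Set.Icc 1 m : Set (ℕ × ℕ)) =
        sgrid k c ∪ Set.Icc 1 k ×ˢ Set.Icc (c + 1) m := by
      ext ⟨i, j⟩
      simp only [sgrid, Set.mem_union, Set.mem_prod, Set.mem_Icc]
      omega
    have htgt : (Set.Icc 1 (k * m) : Set ℕ) = ↑V ∪ ↑W := by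
      rw [hW, Finset.coe_sdiff, Finset.coe_Icc, Set.union_diff_cancel]
      intro x hx
      exact Set.mem_Icc.2 (Finset.mem_Icc.1 (hV hx))
    rw [hdom, htgt]
    have hl := combine_bijOn_left hc hV hVc hG hH
    have hr := combine_bijOn_right hc hV hVc hG hH
    apply Set.BijOn.union hl hr
    intro p hp q hq heq
    simp only [] at heq
    rcases hp with hp | hp
    · rcases hq with hq | hq
      · exact hl.injOn hp hq heq
      · exfalso
        have h1 := hl.mapsTo hp
        have h2 := hr.mapsTo hq
        rw [heq] at h1
        simp only [Finset.coe_sdiff, Set.mem_diff] at h2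
        exact h2.2 h1
    · rcases hq with hq | hq
      · exfalso
        have h1 := hr.mapsTo hp
        have h2 := hl.mapsTo hq
        rw [heq] at h1
        simp only [Finset.coe_sdiff, Set.mem_diff] at h1
        exact h1.2 h2
      · exact hr.injOn hp hq heq
  · intro i j h1 h2 h3 h4
    rw [combine, combine]
    by_cases hj : j ≤ c
    · rw [if_pos hj, if_pos hj]
      have hm1 := filling_mem c k hG h1 (by omega) h3 hj
      have hm2 := filling_mem c k hG (show 1 ≤ i + 1 by omega) h2 h3 hj
      rw [unrk_lt_iff V (by omega) (by omega) (by omega) (by omega)]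
      · exact hG.2.2 i j h1 h2 h3 hj
    · rw [if_neg hj, if_neg hj]
      push_neg at hj
      have hjc : 1 ≤ j - c ∧ j - c ≤ m - c := by omega
      have hm1 := filling_mem (m - c) k hH h1 (by omega) hjc.1 hjc.2
      have hm2 := filling_mem (m - c) k hH (show 1 ≤ i + 1 by omega) h2 hjc.1 hjc.2
      have hcW := card_W hV hVc hc
      rw [← hW] at hcW
      rw [unrk_lt_iff _ (by omega) (by omega) (by omega) (by omega)]
      · exact hH.2.2 i (j - c) h1 h2 hjc.1 hjc.2

end CombineSplit

end Stmt8Aux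

namespace Stmt8Aux

/-- Value set of the first `c` columns. -/
def Vof (k c : ℕ) (F : ℕ → ℕ → ℕ) : Finset ℕ :=
  (Finset.Icc 1 k ×ˢ Finset.Icc 1 c).image (fun p => F p.1 p.2)

section CombineSplit2

variable {k m c : ℕ} {V : Finset ℕ} {G H : ℕ → ℕ → ℕ} {U : Set (ℕ → ℕ → ℕ)}
variable (hc : c ≤ m) (hV : V ⊆ Finset.Icc 1 (k * m)) (hVc : V.card = k * c)
variable (hG : IsFilling c k G) (hH : IsFilling (m - c) k H)

include hc hV hVc hG hH

lemma Vof_combine : Vof k c (combine c V (Finset.Icc 1 (k * m) \ V) G H) = V := by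
  apply Finset.coe_injective
  rw [Vof, Finset.coe_image, Finset.coe_product, Finset.coe_Icc, Finset.coe_Icc]
  exact (combine_bijOn_left hc hV hVc hG hH).image_eq

omit hH in
lemma combine_match_left (i : ℕ) (hi : 1 ≤ i) (hic : i + 1 ≤ c) :
    HasMatch k U (combine c V (Finset.Icc 1 (k * m) \ V) G H) i ↔ HasMatch k U G i := by
  apply hasMatch_congr
  intro a b a' b' ha hak hb hb2 ha' hak' hb' hb2'
  have hcol : ∀ (x y : ℕ), 1 ≤ x → x ≤ k → 1 ≤ y → y ≤ 2 →
      combine c V (Finset.Icc 1 (k * m) \ V) G H x (i - 1 + y) = unrk V (G x (i - 1 + y)) ∧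
      1 ≤ G x (i - 1 + y) ∧ G x (i - 1 + y) ≤ V.card := by
    intro x y hx hxk hy hy2
    have hcc : i - 1 + y ≤ c := by omega
    refine ⟨by rw [combine, if_pos hcc], ?_⟩
    rw [hVc]
    exact filling_mem c k hG hx hxk (by omega) hcc
  obtain ⟨e1, l1, u1⟩ := hcol a b ha hak hb hb2
  obtain ⟨e2, l2, u2⟩ := hcol a' b' ha' hak' hb' hb2'
  rw [e1, e2]
  exact unrk_lt_iff V l1 u1 l2 u2

lemma combine_match_right (i : ℕ) (hi : c + 1 ≤ i) (him : i + 1 ≤ m) :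
    HasMatch k U (combine c V (Finset.Icc 1 (k * m) \ V) G H) i ↔ HasMatch k U H (i - c) := by
  apply hasMatch_congr
  intro a b a' b' ha hak hb hb2 ha' hak' hb' hb2'
  have hcW := card_W hV hVc hc
  have hcol : ∀ (x y : ℕ), 1 ≤ x → x ≤ k → 1 ≤ y → y ≤ 2 →
      combine c V (Finset.Icc 1 (k * m) \ V) G H x (i - 1 + y) =
        unrk (Finset.Icc 1 (k * m) \ V) (H x (i - c - 1 + y)) ∧
      1 ≤ H x (i - c - 1 + y) ∧ H x (i - c - 1 + y) ≤ (Finset.Icc 1 (k * m) \ V).card := by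
    intro x y hx hxk hy hy2
    have hcc : ¬ (i - 1 + y ≤ c) := by omega
    have heq : i - 1 + y - c = i - c - 1 + y := by omega
    refine ⟨by rw [combine, if_neg hcc, heq], ?_⟩
    rw [hcW]
    exact filling_mem (m - c) k hH hx hxk (by omega) (by omega)
  obtain ⟨e1, l1, u1⟩ := hcol a b ha hak hb hb2
  obtain ⟨e2, l2, u2⟩ := hcol a' b' ha' hak' hb' hb2'
  rw [e1, e2]
  exact unrk_lt_iff _ l1 u1 l2 u2

end CombineSplit2

end Stmt8Aux

namespace Stmt8Aux

/-- Standardization of the first `c` columns. -/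
noncomputable def splitL (k c : ℕ) (F : ℕ → ℕ → ℕ) : ℕ → ℕ → ℕ :=
  fun i col => if col ≤ c then rk (Vof k c F) (F i col) else 0

/-- Standardization of the columns after the first `c`. -/
noncomputable def splitR (k m c : ℕ) (F : ℕ → ℕ → ℕ) : ℕ → ℕ → ℕ :=
  fun i col => if 1 ≤ col then rk (Finset.Icc 1 (k * m) \ Vof k c F) (F i (c + col)) else 0

section Split

variable {k m c : ℕ} {F : ℕ → ℕ → ℕ}
variable (hF : IsFilling m k F) (hc : c ≤ m)

include hF hc

lemma Vof_subset : Vof k c F ⊆ Finset.Icc 1 (k * m) := by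
  intro v hv
  rcases Finset.mem_image.1 hv with ⟨p, hp, rfl⟩
  rw [Finset.mem_product, Finset.mem_Icc, Finset.mem_Icc] at hp
  have := filling_mem m k hF hp.1.1 hp.1.2 hp.2.1 (le_trans hp.2.2 hc)
  exact Finset.mem_Icc.2 this

lemma Vof_card : (Vof k c F).card = k * c := by
  rw [Vof, Finset.card_image_of_injOn, Finset.card_product, Nat.card_Icc, Nat.card_Icc]
  · simp
  · apply Set.InjOn.mono _ hF.2.1.injOn
    intro p hp
    simp only [Finset.coe_product, Finset.coe_Icc, Set.mem_prod, Set.mem_Icc] at hp ⊢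
    exact ⟨hp.1, ⟨hp.2.1, le_trans hp.2.2 hc⟩⟩

lemma mem_Vof_of_cell {i j : ℕ} (hi : 1 ≤ i) (hik : i ≤ k) (hj : 1 ≤ j) (hjc : j ≤ c) :
    F i j ∈ Vof k c F :=
  Finset.mem_image.2 ⟨(i, j), by
    rw [Finset.mem_product, Finset.mem_Icc, Finset.mem_Icc]
    exact ⟨⟨hi, hik⟩, hj, hjc⟩, rfl⟩

lemma right_not_mem_Vof {i j : ℕ} (hi : 1 ≤ i) (hik : i ≤ k) (hj : c + 1 ≤ j) (hjm : j ≤ m) :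
    F i j ∉ Vof k c F := by
  intro hmem
  rcases Finset.mem_image.1 hmem with ⟨p, hp, hpv⟩
  rw [Finset.mem_product, Finset.mem_Icc, Finset.mem_Icc] at hp
  have hpg : p ∈ (Set.Icc 1 k ×ˢ Set.Icc 1 m : Set (ℕ × ℕ)) :=
    ⟨⟨hp.1.1, hp.1.2⟩, ⟨hp.2.1, le_trans hp.2.2 hc⟩⟩
  have hijg : ((i, j) : ℕ × ℕ) ∈ (Set.Icc 1 k ×ˢ Set.Icc 1 m : Set (ℕ × ℕ)) :=
    ⟨⟨hi, hik⟩, ⟨by omega, hjm⟩⟩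
  have := hF.2.1.injOn hpg hijg hpv
  rw [this] at hp
  omega

lemma F_bijOn_left : Set.BijOn (fun p : ℕ × ℕ => F p.1 p.2) (sgrid k c) ↑(Vof k c F) := by
  refine ⟨?_, ?_, ?_⟩
  · rintro ⟨i, j⟩ ⟨hi, hj⟩
    simp only [Set.mem_Icc] at hi hj
    exact mem_Vof_of_cell hF hc hi.1 hi.2 hj.1 hj.2
  · apply Set.InjOn.mono _ hF.2.1.injOn
    rintro ⟨i, j⟩ ⟨hi, hj⟩
    simp only [Set.mem_Icc] at hi hj
    exact ⟨⟨hi.1, hi.2⟩, ⟨hj.1, le_trans hj.2 hc⟩⟩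
  · intro v hv
    rcases Finset.mem_image.1 hv with ⟨p, hp, hpv⟩
    rw [Finset.mem_product, Finset.mem_Icc, Finset.mem_Icc] at hp
    exact ⟨p, ⟨⟨hp.1.1, hp.1.2⟩, ⟨hp.2.1, hp.2.2⟩⟩, hpv⟩

lemma splitL_filling : IsFilling c k (splitL k c F) := by
  have hVpos := V_pos (Vof_subset hF hc)
  refine ⟨?_, ?_, ?_⟩
  · intro i j h
    rw [splitL] at h
    by_cases hj : j ≤ c
    · rw [if_pos hj] at h
      have hF0 : F i j ≠ 0 := by
        intro h0; rw [h0, rk_zero _ hVpos] at h; exact h rfl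
      have := hF.1 i j hF0
      omega
    · rw [if_neg hj] at h; exact absurd rfl h
  · have h1 : Set.BijOn (rk (Vof k c F) ∘ fun p : ℕ × ℕ => F p.1 p.2)
        (sgrid k c) (Set.Icc 1 (k * c)) := by
      have := Set.BijOn.comp (rk_bijOn (Vof k c F)) (F_bijOn_left hF hc)
      rwa [Vof_card hF hc] at this
    apply h1.congr
    rintro ⟨i, j⟩ ⟨hi, hj⟩
    simp only [Set.mem_Icc] at hj
    simp only [Function.comp, splitL]
    rw [if_pos hj.2]
  · intro i j h1 h2 h3 h4
    simp only [splitL, if_pos h4]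
    apply rk_lt_rk
    · exact mem_Vof_of_cell hF hc (by omega) h2 h3 h4
    · exact hF.2.2 i j h1 h2 h3 (le_trans h4 hc)

lemma splitR_filling : IsFilling (m - c) k (splitR k m c F) := by
  set W := Finset.Icc 1 (k * m) \ Vof k c F with hW
  have hWpos : ∀ x ∈ W, 1 ≤ x := W_pos
  have hcW : W.card = k * (m - c) := card_W (Vof_subset hF hc) (Vof_card hF hc) hc
  have hmemW : ∀ {i j : ℕ}, 1 ≤ i → i ≤ k → 1 ≤ j → j ≤ m - c → F i (c + j) ∈ W := by
    intro i j hi hik hj hjm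
    rw [hW, Finset.mem_sdiff]
    constructor
    · exact Finset.mem_Icc.2 (filling_mem m k hF hi hik (by omega) (by omega))
    · exact right_not_mem_Vof hF hc hi hik (by omega) (by omega)
  refine ⟨?_, ?_, ?_⟩
  · intro i j h
    rw [splitR] at h
    by_cases hj : 1 ≤ j
    · rw [if_pos hj] at h
      have hF0 : F i (c + j) ≠ 0 := by
        intro h0; rw [h0, rk_zero _ hWpos] at h; exact h rfl
      have := hF.1 i (c + j) hF0
      omega
    · rw [if_neg hj] at h; exact absurd rfl h
  · have hFr : Set.BijOn (fun p : ℕ × ℕ => F p.1 (c + p.2)) (sgrid k (m - c)) ↑W := by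
      refine ⟨?_, ?_, ?_⟩
      · rintro ⟨i, j⟩ ⟨hi, hj⟩
        simp only [Set.mem_Icc] at hi hj
        exact hmemW hi.1 hi.2 hj.1 hj.2
      · rintro ⟨i, j⟩ ⟨hi, hj⟩ ⟨i', j'⟩ ⟨hi', hj'⟩ h
        simp only [Set.mem_Icc] at hi hj hi' hj'
        have hg : ((i, c + j) : ℕ × ℕ) ∈ (Set.Icc 1 k ×ˢ Set.Icc 1 m : Set (ℕ × ℕ)) :=
          ⟨⟨hi.1, hi.2⟩, ⟨by omega, by omega⟩⟩
        have hg' : ((i', c + j') : ℕ × ℕ) ∈ (Set.Icc 1 k ×ˢ Set.Icc 1 m : Set (ℕ × ℕ)) :=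
          ⟨⟨hi'.1, hi'.2⟩, ⟨by omega, by omega⟩⟩
        have := hF.2.1.injOn hg hg' h
        simp only [Prod.mk.injEq] at this
        have : i = i' ∧ j = j' := ⟨this.1, by omega⟩
        simp [this.1, this.2]
      · intro w hw
        rw [Finset.coe_sdiff, Set.mem_diff, Finset.coe_Icc] at hw
        rcases hF.2.1.surjOn (by exact hw.1) with ⟨p, hp, hpv⟩
        have hp1 := hp.1
        have hp2 := hp.2
        rw [Set.mem_Icc] at hp1 hp2
        have hpc : c + 1 ≤ p.2 := by
          by_contra hle
          push_neg at hle
          apply hw.2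
          rw [← hpv]
          exact Finset.mem_coe.2 (mem_Vof_of_cell hF hc hp1.1 hp1.2 hp2.1 (by omega))
        refine ⟨(p.1, p.2 - c), ⟨Set.mem_Icc.2 ⟨hp1.1, hp1.2⟩,
          Set.mem_Icc.2 ⟨by omega, by omega⟩⟩, ?_⟩
        show F p.1 (c + (p.2 - c)) = w
        rw [show c + (p.2 - c) = p.2 by omega]
        exact hpv
    have h1 : Set.BijOn (rk W ∘ fun p : ℕ × ℕ => F p.1 (c + p.2))
        (sgrid k (m - c)) (Set.Icc 1 (k * (m - c))) := by
      have := Set.BijOn.comp (rk_bijOn W) hFr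
      rwa [hcW] at this
    apply h1.congr
    rintro ⟨i, j⟩ ⟨hi, hj⟩
    simp only [Set.mem_Icc] at hj
    simp only [Function.comp, splitR]
    rw [if_pos hj.1]
  · intro i j h1 h2 h3 h4
    simp only [splitR, if_pos h3]
    apply rk_lt_rk
    · exact hmemW (by omega) h2 h3 h4
    · exact hF.2.2 i (c + j) h1 h2 (by omega) (by omega)

lemma combine_split :
    combine c (Vof k c F) (Finset.Icc 1 (k * m) \ Vof k c F) (splitL k c F) (splitR k m c F)
      = F := by
  have hVpos := V_pos (Vof_subset hF hc)
  have hWpos : ∀ x ∈ Finset.Icc 1 (k * m) \ Vof k c F, 1 ≤ x := W_pos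
  funext i col
  rw [combine]
  by_cases hcol : col ≤ c
  · rw [if_pos hcol, splitL, if_pos hcol]
    by_cases hcell : 1 ≤ i ∧ i ≤ k ∧ 1 ≤ col
    · exact unrk_rk _ (mem_Vof_of_cell hF hc hcell.1 hcell.2.1 hcell.2.2 hcol)
    · rw [filling_zero m k hF (by omega), rk_zero _ hVpos, unrk_zero]
  · rw [if_neg hcol, splitR, if_pos (by omega : 1 ≤ col - c),
      show c + (col - c) = col by omega]
    by_cases hcell : 1 ≤ i ∧ i ≤ k ∧ col ≤ m
    · apply unrk_rk
      rw [Finset.mem_sdiff]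
      refine ⟨Finset.mem_Icc.2 (filling_mem m k hF hcell.1 hcell.2.1 (by omega) hcell.2.2), ?_⟩
      exact right_not_mem_Vof hF hc hcell.1 hcell.2.1 (by omega) hcell.2.2
    · rw [filling_zero m k hF (by omega), rk_zero _ hWpos, unrk_zero]

end Split

end Stmt8Aux

namespace Stmt8Aux

section RoundTrip

variable {k m c : ℕ} {V : Finset ℕ} {G H : ℕ → ℕ → ℕ}
variable (hc : c ≤ m) (hV : V ⊆ Finset.Icc 1 (k * m)) (hVc : V.card = k * c)
variable (hG : IsFilling c k G) (hH : IsFilling (m - c) k H)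

include hc hV hVc hG hH

lemma split_combine_L :
    splitL k c (combine c V (Finset.Icc 1 (k * m) \ V) G H) = G := by
  have hVof := Vof_combine hc hV hVc hG hH
  funext i col
  simp only [splitL, hVof]
  by_cases hcol : col ≤ c
  · rw [if_pos hcol]
    simp only [combine, if_pos hcol]
    by_cases hcell : 1 ≤ i ∧ i ≤ k ∧ 1 ≤ col
    · have hm := filling_mem c k hG hcell.1 hcell.2.1 hcell.2.2 hcol
      exact rk_unrk V (by omega) (by omega)
    · rw [filling_zero c k hG (by omega), unrk_zero, rk_zero _ (V_pos hV)]
  · rw [if_neg hcol]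
    exact (filling_zero c k hG (by omega)).symm

lemma split_combine_R :
    splitR k m c (combine c V (Finset.Icc 1 (k * m) \ V) G H) = H := by
  have hVof := Vof_combine hc hV hVc hG hH
  have hcW : (Finset.Icc 1 (k * m) \ V).card = k * (m - c) := card_W hV hVc hc
  funext i col
  simp only [splitR, hVof]
  by_cases hcol : 1 ≤ col
  · rw [if_pos hcol]
    simp only [combine, if_neg (show ¬ c + col ≤ c by omega),
      show c + col - c = col by omega]
    by_cases hcell : 1 ≤ i ∧ i ≤ k ∧ col ≤ m - c
    · have hm := filling_mem (m - c) k hH hcell.1 hcell.2.1 hcol hcell.2.2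
      exact rk_unrk _ (by omega) (by omega)
    · rw [filling_zero (m - c) k hH (by omega), unrk_zero, rk_zero _ W_pos]
  · rw [if_neg hcol]
    exact (filling_zero (m - c) k hH (by omega)).symm

end RoundTrip

end Stmt8Aux

namespace Stmt8Aux

open scoped Classical

/-! ### Counting infrastructure -/

lemma finite_oddFull (m k : ℕ) (U : Set (ℕ → ℕ → ℕ)) : {F | OddFull m k U F}.Finite :=
  (finite_fillings m k).subset (fun _ hF => hF.1)

lemma finite_full (m k : ℕ) (U : Set (ℕ → ℕ → ℕ)) :
    {F | IsFilling m k F ∧ ∀ i, 1 ≤ i → i ≤ m - 1 → HasMatch k U F i}.Finite :=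
  (finite_fillings m k).subset (fun _ hF => hF.1)

/-- Odd-full fillings as a finset. -/
noncomputable def OFF (m k : ℕ) (U : Set (ℕ → ℕ → ℕ)) : Finset (ℕ → ℕ → ℕ) :=
  (finite_oddFull m k U).toFinset

lemma mem_OFF {m k : ℕ} {U : Set (ℕ → ℕ → ℕ)} {F : ℕ → ℕ → ℕ} :
    F ∈ OFF m k U ↔ OddFull m k U F := Set.Finite.mem_toFinset _

/-- Full fillings as a finset. -/
noncomputable def FullF (m k : ℕ) (U : Set (ℕ → ℕ → ℕ)) : Finset (ℕ → ℕ → ℕ) :=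
  (finite_full m k U).toFinset

lemma mem_FullF {m k : ℕ} {U : Set (ℕ → ℕ → ℕ)} {F : ℕ → ℕ → ℕ} :
    F ∈ FullF m k U ↔ IsFilling m k F ∧ ∀ i, 1 ≤ i → i ≤ m - 1 → HasMatch k U F i :=
  Set.Finite.mem_toFinset _

lemma fullCount_eq (m k : ℕ) (U : Set (ℕ → ℕ → ℕ)) :
    fullCount m k U = (FullF m k U).card := by
  rw [fullCount]
  rw [show {F : ℕ → ℕ → ℕ // IsFilling m k F ∧
      ∀ i, 1 ≤ i → i ≤ m - 1 → ∃ P ∈ U, MatchAt 2 k P F i} =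
      {F : ℕ → ℕ → ℕ // F ∈ {F | IsFilling m k F ∧
        ∀ i, 1 ≤ i → i ≤ m - 1 → HasMatch k U F i}} from rfl]
  rw [Nat.card_coe_set_eq, Set.ncard_eq_toFinset_card _ (finite_full m k U)]
  rfl

/-- Even match positions of `F`. -/
noncomputable def EM (m k : ℕ) (U : Set (ℕ → ℕ → ℕ)) (F : ℕ → ℕ → ℕ) : Finset ℕ :=
  (Finset.Icc 1 (m - 1)).filter (fun i => Even i ∧ HasMatch k U F i)

lemma mem_EM {m k : ℕ} {U : Set (ℕ → ℕ → ℕ)} {F : ℕ → ℕ → ℕ} {i : ℕ} :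
    i ∈ EM m k U F ↔ (1 ≤ i ∧ i ≤ m - 1) ∧ Even i ∧ HasMatch k U F i := by
  rw [EM, Finset.mem_filter, Finset.mem_Icc]

lemma mch2Count_eq (m k : ℕ) (U : Set (ℕ → ℕ → ℕ)) (F : ℕ → ℕ → ℕ) :
    mch2Count m k U F = (EM m k U F).card := by
  rw [mch2Count]
  rw [show {i | Even i ∧ 1 ≤ i ∧ i ≤ m - 1 ∧ ∃ P ∈ U, MatchAt 2 k P F i} =
      ↑(EM m k U F) from ?_]
  · rw [Set.ncard_coe_finset]
  · ext i
    simp only [Set.mem_setOf_eq, Finset.coe_sort_coe, Finset.mem_coe, mem_EM, HasMatch]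
    tauto

/-- Pairs `(F, S)` of an odd-full filling plus marked subset of even match positions. -/
noncomputable def PairsF (n k : ℕ) (U : Set (ℕ → ℕ → ℕ)) :
    Finset ((ℕ → ℕ → ℕ) × Finset ℕ) :=
  ((OFF (2 * n) k U) ×ˢ (Finset.Icc 1 (2 * n - 1)).powerset).filter
    (fun p => p.2 ⊆ EM (2 * n) k U p.1)

lemma mem_PairsF {n k : ℕ} {U : Set (ℕ → ℕ → ℕ)} {p : (ℕ → ℕ → ℕ) × Finset ℕ} :
    p ∈ PairsF n k U ↔ OddFull (2 * n) k U p.1 ∧ p.2 ⊆ EM (2 * n) k U p.1 := by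
  rw [PairsF, Finset.mem_filter, Finset.mem_product, Finset.mem_powerset, mem_OFF]
  constructor
  · rintro ⟨⟨h1, _⟩, h3⟩; exact ⟨h1, h3⟩
  · rintro ⟨h1, h3⟩
    refine ⟨⟨h1, fun x hx => ?_⟩, h3⟩
    have := mem_EM.1 (h3 hx)
    exact Finset.mem_Icc.2 this.1

lemma sum_powerset_pow {R : Type*} [CommRing R] (y : R) (A : Finset ℕ) :
    ∑ S ∈ A.powerset, y ^ S.card = (y + 1) ^ A.card := by
  classical
  have := Finset.prod_add (fun _ : ℕ => y) (fun _ : ℕ => (1 : R)) A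
  rw [Finset.prod_const] at this
  rw [this]
  apply Finset.sum_congr rfl
  intro S hS
  rw [Finset.prod_const, Finset.prod_const, one_pow, mul_one]

lemma sum_pairs (n k : ℕ) (U : Set (ℕ → ℕ → ℕ)) :
    ∑ p ∈ PairsF n k U, ((Polynomial.X : Polynomial ℚ) - 1) ^ p.2.card
      = ∑ F ∈ OFF (2 * n) k U, (Polynomial.X : Polynomial ℚ) ^ (EM (2 * n) k U F).card := by
  rw [PairsF, Finset.sum_filter, Finset.sum_product]
  apply Finset.sum_congr rfl
  intro F hF
  rw [← Finset.sum_filter]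
  have hfil : ((Finset.Icc 1 (2 * n - 1)).powerset).filter (fun S => S ⊆ EM (2 * n) k U F)
      = (EM (2 * n) k U F).powerset := by
    ext S
    simp only [Finset.mem_filter, Finset.mem_powerset]
    constructor
    · rintro ⟨_, h2⟩; exact h2
    · intro h
      refine ⟨fun x hx => ?_, h⟩
      exact Finset.mem_Icc.2 (mem_EM.1 (h hx)).1
  rw [hfil, sum_powerset_pow, sub_add_cancel]

lemma OFF_zero (k : ℕ) (U : Set (ℕ → ℕ → ℕ)) : OFF 0 k U = {fun _ _ => 0} := by
  ext F
  rw [mem_OFF, Finset.mem_singleton, OddFull]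
  constructor
  · rintro ⟨h1, _⟩
    exact (isFilling_zero_iff k F).1 h1
  · rintro rfl
    refine ⟨(isFilling_zero_iff k _).2 rfl, fun i hodd hle => ?_⟩
    exfalso
    rcases hodd with ⟨t, ht⟩
    omega

lemma EM_zero (k : ℕ) (U : Set (ℕ → ℕ → ℕ)) (F : ℕ → ℕ → ℕ) : EM 0 k U F = ∅ := by
  rw [EM]
  have : Finset.Icc 1 (0 - 1) = (∅ : Finset ℕ) := by
    rw [Finset.Icc_eq_empty]; omega
  rw [this, Finset.filter_empty]

lemma sum_OFF_zero (k : ℕ) (U : Set (ℕ → ℕ → ℕ)) :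
    ∑ F ∈ OFF 0 k U, (Polynomial.X : Polynomial ℚ) ^ (EM 0 k U F).card = 1 := by
  rw [OFF_zero, Finset.sum_singleton, EM_zero, Finset.card_empty, pow_zero]

/-- The low even positions `2, 4, …, 2j-2`. -/
noncomputable def lowEvens (j : ℕ) : Finset ℕ := (Finset.Icc 1 (2 * j - 1)).filter Even

lemma mem_lowEvens {j i : ℕ} : i ∈ lowEvens j ↔ (1 ≤ i ∧ i ≤ 2 * j - 1) ∧ Even i := by
  rw [lowEvens, Finset.mem_filter, Finset.mem_Icc]

lemma card_lowEvens (j : ℕ) : (lowEvens j).card = j - 1 := by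
  have himg : lowEvens j = (Finset.Icc 1 (j - 1)).image (fun a => 2 * a) := by
    ext i
    rw [mem_lowEvens, Finset.mem_image]
    constructor
    · rintro ⟨⟨h1, h2⟩, t, ht⟩
      exact ⟨t, Finset.mem_Icc.2 (by omega), by omega⟩
    · rintro ⟨a, ha, rfl⟩
      rw [Finset.mem_Icc] at ha
      exact ⟨⟨by omega, by omega⟩, ⟨a, by omega⟩⟩
  rw [himg, Finset.card_image_of_injective _ (fun a b h => by omega), Nat.card_Icc]
  omega

/-- Existence of an even number not belonging to `S`. -/
lemma gap_ex (S : Finset ℕ) : ∃ i, Even i ∧ 1 ≤ i ∧ i ∉ S := by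
  refine ⟨2 * (S.sup id) + 2, ⟨S.sup id + 1, by omega⟩, by omega, ?_⟩
  intro hmem
  have := Finset.le_sup (f := id) hmem
  simp only [id] at this
  omega

/-- The first even position not in `S`. -/
noncomputable def gap (S : Finset ℕ) : ℕ := Nat.find (gap_ex S)

lemma gap_spec (S : Finset ℕ) : Even (gap S) ∧ 1 ≤ gap S ∧ gap S ∉ S :=
  Nat.find_spec (gap_ex S)

lemma gap_min {S : Finset ℕ} {i : ℕ} (h : i < gap S) : ¬(Even i ∧ 1 ≤ i ∧ i ∉ S) :=
  Nat.find_min (gap_ex S) h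

lemma gap_le {S : Finset ℕ} {i : ℕ} (h : Even i ∧ 1 ≤ i ∧ i ∉ S) : gap S ≤ i :=
  Nat.find_le h

lemma gap_eq_iff {S : Finset ℕ} {g : ℕ} :
    gap S = g ↔ (Even g ∧ 1 ≤ g ∧ g ∉ S) ∧ ∀ i < g, ¬(Even i ∧ 1 ≤ i ∧ i ∉ S) :=
  Nat.find_eq_iff (gap_ex S)

end Stmt8Aux

namespace Stmt8Aux

open scoped Classical

section Fiber

variable (k : ℕ) (U : Set (ℕ → ℕ → ℕ))

lemma sum_gap_fiber (n j : ℕ) (hj1 : 1 ≤ j) (hjn : j ≤ n) :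
    ∑ p ∈ (PairsF n k U).filter (fun p => gap p.2 = 2 * j),
        ((Polynomial.X : Polynomial ℚ) - 1) ^ p.2.card
    = (((k * (2 * n)).choose (k * (2 * j)) : ℕ) : Polynomial ℚ)
        * ((fullCount (2 * j) k U : ℕ) : Polynomial ℚ)
        * ((Polynomial.X : Polynomial ℚ) - 1) ^ (j - 1)
        * ∑ p ∈ PairsF (n - j) k U, ((Polynomial.X : Polynomial ℚ) - 1) ^ p.2.card := by
  classical
  set X1 : Polynomial ℚ := Polynomial.X - 1 with hX1
  -- the target finset
  set T : Finset (Finset ℕ × ((ℕ → ℕ → ℕ) × ((ℕ → ℕ → ℕ) × Finset ℕ))) :=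
    (Finset.powersetCard (k * (2 * j)) (Finset.Icc 1 (k * (2 * n)))) ×ˢ
      (FullF (2 * j) k U ×ˢ PairsF (n - j) k U) with hT
  have hstep : ∑ p ∈ (PairsF n k U).filter (fun p => gap p.2 = 2 * j), X1 ^ p.2.card
      = ∑ t ∈ T, X1 ^ (j - 1) * X1 ^ t.2.2.2.card := by
    apply Finset.sum_nbij'
      (i := fun p => (Vof k (2 * j) p.1, (splitL k (2 * j) p.1, (splitR k (2 * n) (2 * j) p.1,
        (p.2.filter (fun x => 2 * j < x)).image (fun x => x - 2 * j)))))
      (j := fun t => (combine (2 * j) t.1 (Finset.Icc 1 (k * (2 * n)) \ t.1) t.2.1 t.2.2.1,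
        lowEvens j ∪ t.2.2.2.image (fun x => x + 2 * j)))
    -- forward map lands in T
    · rintro ⟨F, S⟩ hp
      rw [Finset.mem_filter, mem_PairsF] at hp
      obtain ⟨⟨hp1, hp2⟩, hp3⟩ := hp
      have hF : IsFilling (2 * n) k F := hp1.1
      have hc : 2 * j ≤ 2 * n := by omega
      have hV := Vof_subset hF hc
      have hVc := Vof_card hF hc
      have hGfil := splitL_filling hF hc
      have hHfil := splitR_filling hF hc
      have hHfil' : IsFilling (2 * (n - j)) k (splitR k (2 * n) (2 * j) F) := by
        rw [show 2 * (n - j) = 2 * n - 2 * j by omega]; exact hHfil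
      have hFe : combine (2 * j) (Vof k (2 * j) F)
          (Finset.Icc 1 (k * (2 * n)) \ Vof k (2 * j) F)
          (splitL k (2 * j) F) (splitR k (2 * n) (2 * j) F) = F := combine_split hF hc
      have hmL : ∀ i, 1 ≤ i → i + 1 ≤ 2 * j →
          (HasMatch k U F i ↔ HasMatch k U (splitL k (2 * j) F) i) := by
        intro i h1 h2
        conv_lhs => rw [← hFe]
        exact combine_match_left hc hV hVc hGfil i h1 h2
      have hmR : ∀ i, 2 * j + 1 ≤ i → i + 1 ≤ 2 * n →
          (HasMatch k U F i ↔ HasMatch k U (splitR k (2 * n) (2 * j) F) (i - 2 * j)) := by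
        intro i h1 h2
        conv_lhs => rw [← hFe]
        exact combine_match_right hc hV hVc hGfil hHfil i h1 h2
      -- membership facts for S
      have hSfact : ∀ x ∈ S, Even x ∧ 1 ≤ x ∧ x ≤ 2 * n - 1 ∧ HasMatch k U F x := by
        intro x hx
        have := mem_EM.1 (hp2 hx)
        exact ⟨this.2.1, this.1.1, this.1.2, this.2.2⟩
      have hSlow : ∀ x, Even x → 1 ≤ x → x < 2 * j → x ∈ S := by
        intro x hev h1 h2
        by_contra hns
        exact (gap_eq_iff.1 hp3).2 x h2 ⟨hev, h1, hns⟩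
      rw [hT, Finset.mem_product, Finset.mem_product]
      refine ⟨Finset.mem_powersetCard.2 ⟨hV, hVc⟩, ?_, ?_⟩
      · rw [mem_FullF]
        refine ⟨hGfil, fun i h1 h2 => ?_⟩
        have h2' : i ≤ 2 * j - 1 := h2
        apply (hmL i h1 (by omega)).1
        rcases Nat.even_or_odd i with hev | hod
        · exact (hSfact i (hSlow i hev h1 (by omega))).2.2.2
        · exact hp1.2 i hod (by omega)
      · rw [mem_PairsF]
        constructor
        · refine ⟨hHfil', fun i hod hle => ?_⟩
          have hle' : i ≤ 2 * (n - j) - 1 := hle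
          have h1 : 1 ≤ i := hod.pos
          have := (hmR (i + 2 * j) (by omega) (by omega)).1 ?_
          · rwa [show i + 2 * j - 2 * j = i by omega] at this
          · apply hp1.2
            · rcases hod with ⟨t, ht⟩
              exact ⟨t + j, by omega⟩
            · omega
        · intro x' hx'
          rcases Finset.mem_image.1 hx' with ⟨x, hxf, rfl⟩
          rcases Finset.mem_filter.1 hxf with ⟨hxS, hxgt⟩
          obtain ⟨hev, h1, h2, hmatch⟩ := hSfact x hxS
          rcases hev with ⟨r, hr⟩
          have hx2 : 2 * j + 2 ≤ x := by omega
          rw [mem_EM]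
          refine ⟨⟨by omega, by omega⟩, ⟨r - j, by omega⟩, ?_⟩
          exact (hmR x (by omega) (by omega)).1 hmatch
    -- backward map lands in the fiber
    · rintro ⟨V, G, H, S'⟩ ht
      rw [hT, Finset.mem_product, Finset.mem_product] at ht
      obtain ⟨htV, htG, htH⟩ := ht
      rw [Finset.mem_powersetCard] at htV
      rw [mem_FullF] at htG
      rw [mem_PairsF] at htH
      have hc : 2 * j ≤ 2 * n := by omega
      have hV := htV.1
      have hVc := htV.2
      have hGfil := htG.1
      have hHodd := htH.1
      have hHfil : IsFilling (2 * n - 2 * j) k H := by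
        rw [show 2 * n - 2 * j = 2 * (n - j) by omega]; exact hHodd.1
      have hS'fact : ∀ x ∈ S', Even x ∧ 1 ≤ x ∧ x ≤ 2 * (n - j) - 1 ∧ HasMatch k U H x := by
        intro x hx
        have := mem_EM.1 (htH.2 hx)
        exact ⟨this.2.1, this.1.1, this.1.2, this.2.2⟩
      have hFfil := combine_filling hc hV hVc hGfil hHfil
      set F := combine (2 * j) V (Finset.Icc 1 (k * (2 * n)) \ V) G H with hFdef
      have hmL := fun (i : ℕ) (h1 : 1 ≤ i) (h2 : i + 1 ≤ 2 * j) =>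
        combine_match_left (U := U) (H := H) hc hV hVc hGfil i h1 h2
      have hmR := fun (i : ℕ) (h1 : 2 * j + 1 ≤ i) (h2 : i + 1 ≤ 2 * n) =>
        combine_match_right (U := U) hc hV hVc hGfil hHfil i h1 h2
      rw [Finset.mem_filter, mem_PairsF]
      have hSsub : (lowEvens j ∪ S'.image (fun x => x + 2 * j)) ⊆ EM (2 * n) k U F := by
        intro x hx
        rcases Finset.mem_union.1 hx with hx | hx
        · obtain ⟨⟨h1, h2⟩, hev⟩ := mem_lowEvens.1 hx
          rw [mem_EM]
          refine ⟨⟨h1, by omega⟩, hev, ?_⟩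
          exact (hmL x h1 (by omega)).2 (htG.2 x h1 (by omega))
        · rcases Finset.mem_image.1 hx with ⟨x', hx', rfl⟩
          obtain ⟨hev, h1, h2, hmatch⟩ := hS'fact x' hx'
          rcases hev with ⟨r, hr⟩
          rw [mem_EM]
          refine ⟨⟨by omega, by omega⟩, ⟨r + j, by omega⟩, ?_⟩
          apply (hmR (x' + 2 * j) (by omega) (by omega)).2
          rwa [show x' + 2 * j - 2 * j = x' by omega]
      refine ⟨⟨⟨hFfil, ?_⟩, hSsub⟩, ?_⟩
      · -- odd matches of F
        intro i hod hle
        have hle' : i ≤ 2 * n - 1 := hle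
        have h1 : 1 ≤ i := hod.pos
        have hne : i ≠ 2 * j := by
          rcases hod with ⟨t, ht⟩; omega
        rcases Nat.lt_or_ge i (2 * j) with hlt | hge
        · exact (hmL i h1 (by omega)).2 (htG.2 i h1 (by omega))
        · have hgt : 2 * j + 1 ≤ i := by omega
          apply (hmR i hgt (by omega)).2
          apply hHodd.2
          · rcases hod with ⟨t, ht⟩
            exact ⟨t - j, by omega⟩
          · omega
      · -- gap of the new marked set is 2j
        apply gap_eq_iff.2
        constructor
        · refine ⟨⟨j, by omega⟩, by omega, ?_⟩
          intro hmem
          rcases Finset.mem_union.1 hmem with hmem | hmem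
          · have := (mem_lowEvens.1 hmem).1; omega
          · rcases Finset.mem_image.1 hmem with ⟨x', hx', heq⟩
            have := (hS'fact x' hx').2.1
            omega
        · rintro i hi ⟨hev, h1, hnot⟩
          apply hnot
          apply Finset.mem_union_left
          exact mem_lowEvens.2 ⟨⟨h1, by omega⟩, hev⟩
    -- left inverse
    · rintro ⟨F, S⟩ hp
      rw [Finset.mem_filter, mem_PairsF] at hp
      obtain ⟨⟨hp1, hp2⟩, hp3⟩ := hp
      have hF : IsFilling (2 * n) k F := hp1.1
      have hc : 2 * j ≤ 2 * n := by omega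
      have hSfact : ∀ x ∈ S, Even x ∧ 1 ≤ x ∧ x ≤ 2 * n - 1 := by
        intro x hx
        have := mem_EM.1 (hp2 hx)
        exact ⟨this.2.1, this.1.1, this.1.2⟩
      have hSlow : ∀ x, Even x → 1 ≤ x → x < 2 * j → x ∈ S := by
        intro x hev h1 h2
        by_contra hns
        exact (gap_eq_iff.1 hp3).2 x h2 ⟨hev, h1, hns⟩
      have hSne : (2 * j) ∉ S := (hp3 ▸ (gap_spec S).2.2)
      simp only [Prod.mk.injEq]
      constructor
      · exact combine_split hF hc
      · ext x
        simp only [Finset.mem_union, mem_lowEvens, Finset.mem_image, Finset.mem_filter]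
        constructor
        · rintro (⟨⟨h1, h2⟩, hev⟩ | ⟨y, ⟨z, ⟨hzS, hzgt⟩, rfl⟩, rfl⟩)
          · exact hSlow x hev h1 (by omega)
          · rwa [show z - 2 * j + 2 * j = z by omega]
        · intro hxS
          obtain ⟨hev, h1, h2⟩ := hSfact x hxS
          rcases Nat.lt_or_ge x (2 * j) with hlt | hge
          · exact Or.inl ⟨⟨h1, by omega⟩, hev⟩
          · have hgt : 2 * j < x := by
              rcases Nat.eq_or_lt_of_le hge with heq | h
              · exact absurd (heq ▸ hxS) hSne
              · exact h
            exact Or.inr ⟨x - 2 * j, ⟨x, ⟨hxS, hgt⟩, rfl⟩, by omega⟩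
    -- right inverse
    · rintro ⟨V, G, H, S'⟩ ht
      rw [hT, Finset.mem_product, Finset.mem_product] at ht
      obtain ⟨htV, htG, htH⟩ := ht
      rw [Finset.mem_powersetCard] at htV
      rw [mem_FullF] at htG
      rw [mem_PairsF] at htH
      have hc : 2 * j ≤ 2 * n := by omega
      have hV := htV.1
      have hVc := htV.2
      have hGfil := htG.1
      have hHfil : IsFilling (2 * n - 2 * j) k H := by
        rw [show 2 * n - 2 * j = 2 * (n - j) by omega]; exact htH.1.1
      have hS'b : ∀ x ∈ S', 1 ≤ x := by
        intro x hx
        exact (mem_EM.1 (htH.2 hx)).1.1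
      simp only [Prod.mk.injEq]
      refine ⟨Vof_combine hc hV hVc hGfil hHfil, split_combine_L hc hV hVc hGfil hHfil,
        split_combine_R hc hV hVc hGfil hHfil, ?_⟩
      ext x'
      simp only [Finset.mem_image, Finset.mem_filter, Finset.mem_union, mem_lowEvens]
      constructor
      · rintro ⟨y, ⟨(⟨⟨hy1, hy2⟩, _⟩ | ⟨z, hz, rfl⟩), hygt⟩, rfl⟩
        · omega
        · rwa [show z + 2 * j - 2 * j = z by omega]
      · intro hx'
        exact ⟨x' + 2 * j, ⟨Or.inr ⟨x', hx', rfl⟩, by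
          have := hS'b x' hx'; omega⟩, by omega⟩
    -- weights agree
    · rintro ⟨F, S⟩ hp
      rw [Finset.mem_filter, mem_PairsF] at hp
      obtain ⟨⟨hp1, hp2⟩, hp3⟩ := hp
      have hSfact : ∀ x ∈ S, Even x ∧ 1 ≤ x ∧ x ≤ 2 * n - 1 := by
        intro x hx
        have := mem_EM.1 (hp2 hx)
        exact ⟨this.2.1, this.1.1, this.1.2⟩
      have hSlow : ∀ x, Even x → 1 ≤ x → x < 2 * j → x ∈ S := by
        intro x hev h1 h2
        by_contra hns
        exact (gap_eq_iff.1 hp3).2 x h2 ⟨hev, h1, hns⟩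
      have hSne : (2 * j) ∉ S := (hp3 ▸ (gap_spec S).2.2)
      have hsplit : S = lowEvens j ∪ S.filter (fun x => 2 * j < x) := by
        ext x
        simp only [Finset.mem_union, mem_lowEvens, Finset.mem_filter]
        constructor
        · intro hxS
          obtain ⟨hev, h1, h2⟩ := hSfact x hxS
          rcases Nat.lt_or_ge x (2 * j) with hlt | hge
          · exact Or.inl ⟨⟨h1, by omega⟩, hev⟩
          · have hgt : 2 * j < x := by
              rcases Nat.eq_or_lt_of_le hge with heq | h
              · exact absurd (heq ▸ hxS) hSne
              · exact h
            exact Or.inr ⟨hxS, hgt⟩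
        · rintro (⟨⟨h1, h2⟩, hev⟩ | ⟨hxS, _⟩)
          · exact hSlow x hev h1 (by omega)
          · exact hxS
      have hdisj : Disjoint (lowEvens j) (S.filter (fun x => 2 * j < x)) := by
        rw [Finset.disjoint_left]
        intro x hx hx'
        have := (mem_lowEvens.1 hx).1
        have := (Finset.mem_filter.1 hx').2
        omega
      have hcard : S.card = (j - 1) + (S.filter (fun x => 2 * j < x)).card := by
        conv_lhs => rw [hsplit]
        rw [Finset.card_union_of_disjoint hdisj, card_lowEvens]
      have hcard2 : ((S.filter (fun x => 2 * j < x)).image (fun x => x - 2 * j)).card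
          = (S.filter (fun x => 2 * j < x)).card := by
        apply Finset.card_image_of_injOn
        intro x hx y hy hxy
        have hx' := (Finset.mem_filter.1 hx).2
        have hy' := (Finset.mem_filter.1 hy).2
        have hxy' : x - 2 * j = y - 2 * j := hxy
        omega
      show X1 ^ S.card = X1 ^ (j - 1) * X1 ^ _
      rw [hcard2, hcard, pow_add]
  rw [hstep, hT]
  have h1 : ∑ t ∈ (Finset.powersetCard (k * (2 * j)) (Finset.Icc 1 (k * (2 * n)))) ×ˢ
        (FullF (2 * j) k U ×ˢ PairsF (n - j) k U), X1 ^ (j - 1) * X1 ^ t.2.2.2.card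
      = ∑ _V ∈ Finset.powersetCard (k * (2 * j)) (Finset.Icc 1 (k * (2 * n))),
        ∑ _G ∈ FullF (2 * j) k U,
        ∑ p ∈ PairsF (n - j) k U, X1 ^ (j - 1) * X1 ^ p.2.card := by
    rw [Finset.sum_product]
    refine Finset.sum_congr rfl (fun V _ => ?_)
    rw [Finset.sum_product]
  rw [h1]
  simp only [Finset.sum_const, nsmul_eq_mul, ← Finset.mul_sum]
  rw [Finset.card_powersetCard, Nat.card_Icc, fullCount_eq]
  rw [show k * (2 * n) + 1 - 1 = k * (2 * n) by omega]
  ring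

end Fiber

end Stmt8Aux

namespace Stmt8Aux

open scoped Classical

lemma rec_sum (k : ℕ) (U : Set (ℕ → ℕ → ℕ)) (n : ℕ) (hn : 1 ≤ n) :
    ∑ F ∈ OFF (2 * n) k U, (Polynomial.X : Polynomial ℚ) ^ (EM (2 * n) k U F).card
    = ∑ j ∈ Finset.Icc 1 n,
        (((k * (2 * n)).choose (k * (2 * j)) : ℕ) : Polynomial ℚ)
        * ((fullCount (2 * j) k U : ℕ) : Polynomial ℚ)
        * ((Polynomial.X : Polynomial ℚ) - 1) ^ (j - 1)
        * ∑ F ∈ OFF (2 * (n - j)) k U,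
            (Polynomial.X : Polynomial ℚ) ^ (EM (2 * (n - j)) k U F).card := by
  rw [← sum_pairs]
  have hmaps : ∀ p ∈ PairsF n k U, gap p.2 ∈ (Finset.Icc 1 n).image (fun j => 2 * j) := by
    intro p hp
    obtain ⟨hp1, hp2⟩ := mem_PairsF.1 hp
    have hspec := gap_spec p.2
    have h2n : gap p.2 ≤ 2 * n := by
      apply gap_le
      refine ⟨⟨n, by omega⟩, by omega, fun hc => ?_⟩
      have := (mem_EM.1 (hp2 hc)).1
      omega
    rcases hspec.1 with ⟨r, hr⟩
    refine Finset.mem_image.2 ⟨r, Finset.mem_Icc.2 ⟨by omega, by omega⟩, by omega⟩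
  rw [← Finset.sum_fiberwise_of_maps_to hmaps]
  rw [Finset.sum_image (fun a _ b _ h => by omega : ∀ a ∈ Finset.Icc 1 n, ∀ b ∈ Finset.Icc 1 n,
    2 * a = 2 * b → a = b)]
  apply Finset.sum_congr rfl
  intro j hj
  rw [Finset.mem_Icc] at hj
  rw [sum_gap_fiber k U n j hj.1 hj.2, sum_pairs]

end Stmt8Aux


open Stmt8Aux

/-- Theorem: `(1 + Σ_{n≥1} (t^{2n}/(2kn)!) Σ_{F ∈ F^{(2),Υ}_{2n,k}} x^{Υ-mch^{(2)}(F)}) ·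
(1 - Σ_{n≥1} (x-1)^{n-1} t^{2n} full_{2n}^Υ/(2kn)!) = 1` as formal power series in `t`
over `ℚ[x]` (the coefficient of `t^m` is indexed by `m = 2n`). -/
theorem stmt8 (k : ℕ) (hk : 1 ≤ k) (U : Set (ℕ → ℕ → ℕ))
    (hU : ∀ P ∈ U, IsFilling 2 k P) :
    (PowerSeries.mk fun m => if m = 0 then (1 : Polynomial ℚ) else
        if m % 2 = 0 then
          Polynomial.C (((k * m).factorial : ℚ))⁻¹ *
            ∑ᶠ F ∈ {F : ℕ → ℕ → ℕ | OddFull m k U F},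
              (Polynomial.X : Polynomial ℚ) ^ mch2Count m k U F
        else 0) *
    (PowerSeries.mk fun m => if m = 0 then (1 : Polynomial ℚ) else
        if m % 2 = 0 then
          -((Polynomial.X - 1) ^ (m / 2 - 1) *
            Polynomial.C ((fullCount m k U : ℚ) / ((k * m).factorial : ℚ)))
        else 0) = 1 := by
  classical
  have hfin : ∀ m : ℕ,
      (∑ᶠ F ∈ {F : ℕ → ℕ → ℕ | OddFull m k U F},
        (Polynomial.X : Polynomial ℚ) ^ mch2Count m k U F)
      = ∑ F ∈ OFF m k U, (Polynomial.X : Polynomial ℚ) ^ (EM m k U F).card := by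
    intro m
    rw [finsum_mem_eq_finite_toFinset_sum _ (finite_oddFull m k U)]
    apply Finset.sum_congr rfl
    intro F _
    rw [mch2Count_eq]
  -- the two coefficient functions
  set f : ℕ → Polynomial ℚ := fun m => if m = 0 then (1 : Polynomial ℚ) else
      if m % 2 = 0 then
        Polynomial.C (((k * m).factorial : ℚ))⁻¹ *
          ∑ᶠ F ∈ {F : ℕ → ℕ → ℕ | OddFull m k U F},
            (Polynomial.X : Polynomial ℚ) ^ mch2Count m k U F
      else 0 with hf
  set g : ℕ → Polynomial ℚ := fun m => if m = 0 then (1 : Polynomial ℚ) else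
      if m % 2 = 0 then
        -((Polynomial.X - 1) ^ (m / 2 - 1) *
          Polynomial.C ((fullCount m k U : ℚ) / ((k * m).factorial : ℚ)))
      else 0 with hg
  have hfval : ∀ r : ℕ, f (2 * r)
      = Polynomial.C (((k * (2 * r)).factorial : ℚ))⁻¹ *
        ∑ F ∈ OFF (2 * r) k U, (Polynomial.X : Polynomial ℚ) ^ (EM (2 * r) k U F).card := by
    intro r
    by_cases hr : r = 0
    · subst hr
      rw [show 2 * 0 = 0 from rfl, show k * 0 = 0 from rfl]
      rw [sum_OFF_zero k U, Nat.factorial_zero, hf]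
      norm_num
    · rw [hf]
      simp only []
      rw [if_neg (by omega), if_pos (by omega), hfin]
  have hgval : ∀ r : ℕ, 1 ≤ r → g (2 * r)
      = -((Polynomial.X - 1) ^ (r - 1) *
          Polynomial.C ((fullCount (2 * r) k U : ℚ) / ((k * (2 * r)).factorial : ℚ))) := by
    intro r hr
    rw [hg]
    simp only []
    rw [if_neg (by omega), if_pos (by omega)]
    rw [show 2 * r / 2 = r by omega]
  -- normalized recursion
  have hrec : ∀ n : ℕ, 1 ≤ n → f (2 * n)
      = ∑ j ∈ Finset.Icc 1 n,
          ((Polynomial.X - 1) ^ (j - 1) *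
            Polynomial.C ((fullCount (2 * j) k U : ℚ) / ((k * (2 * j)).factorial : ℚ)))
          * f (2 * (n - j)) := by
    intro n hn
    rw [hfval n, rec_sum k U n hn, Finset.mul_sum]
    apply Finset.sum_congr rfl
    intro j hj
    rw [Finset.mem_Icc] at hj
    rw [hfval (n - j)]
    have hle : k * (2 * j) ≤ k * (2 * n) := Nat.mul_le_mul_left _ (by omega)
    have hnat : (k * (2 * n)).choose (k * (2 * j)) * (k * (2 * j)).factorial *
        (k * (2 * (n - j))).factorial = (k * (2 * n)).factorial := by
      have h2 : k * (2 * n) - k * (2 * j) = k * (2 * (n - j)) := by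
        rw [← Nat.mul_sub]
        congr 1
        omega
      rw [← h2]
      exact Nat.choose_mul_factorial_mul_factorial hle
    have ha : ((k * (2 * n)).factorial : ℚ) ≠ 0 := Nat.cast_ne_zero.2 (Nat.factorial_ne_zero _)
    have hb : ((k * (2 * j)).factorial : ℚ) ≠ 0 := Nat.cast_ne_zero.2 (Nat.factorial_ne_zero _)
    have hcc : ((k * (2 * (n - j))).factorial : ℚ) ≠ 0 :=
      Nat.cast_ne_zero.2 (Nat.factorial_ne_zero _)
    have hQ : ((k * (2 * n)).factorial : ℚ)⁻¹ * (((k * (2 * n)).choose (k * (2 * j)) : ℕ) : ℚ)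
          * ((fullCount (2 * j) k U : ℕ) : ℚ)
        = (fullCount (2 * j) k U : ℚ) / ((k * (2 * j)).factorial : ℚ)
          * (((k * (2 * (n - j))).factorial : ℚ))⁻¹ := by
      field_simp
      push_cast [← hnat]
      ring
    calc Polynomial.C (((k * (2 * n)).factorial : ℚ))⁻¹ *
          ((((k * (2 * n)).choose (k * (2 * j)) : ℕ) : Polynomial ℚ)
            * ((fullCount (2 * j) k U : ℕ) : Polynomial ℚ)
            * ((Polynomial.X : Polynomial ℚ) - 1) ^ (j - 1)
            * ∑ F ∈ OFF (2 * (n - j)) k U,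
                (Polynomial.X : Polynomial ℚ) ^ (EM (2 * (n - j)) k U F).card)
        = (Polynomial.C (((k * (2 * n)).factorial : ℚ))⁻¹
            * Polynomial.C ((((k * (2 * n)).choose (k * (2 * j)) : ℕ) : ℚ))
            * Polynomial.C (((fullCount (2 * j) k U : ℕ) : ℚ)))
          * (((Polynomial.X : Polynomial ℚ) - 1) ^ (j - 1)
            * ∑ F ∈ OFF (2 * (n - j)) k U,
                (Polynomial.X : Polynomial ℚ) ^ (EM (2 * (n - j)) k U F).card) := by
          rw [Polynomial.C_eq_natCast, Polynomial.C_eq_natCast]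
          ring
      _ = (Polynomial.C ((fullCount (2 * j) k U : ℚ) / ((k * (2 * j)).factorial : ℚ))
            * Polynomial.C (((k * (2 * (n - j))).factorial : ℚ))⁻¹)
          * (((Polynomial.X : Polynomial ℚ) - 1) ^ (j - 1)
            * ∑ F ∈ OFF (2 * (n - j)) k U,
                (Polynomial.X : Polynomial ℚ) ^ (EM (2 * (n - j)) k U F).card) := by
          rw [← Polynomial.C_mul, ← Polynomial.C_mul, ← Polynomial.C_mul, hQ]
      _ = _ := by ring
  -- coefficientwise check
  apply PowerSeries.ext
  intro N
  rw [PowerSeries.coeff_mul, PowerSeries.coeff_one]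
  simp only [PowerSeries.coeff_mk]
  by_cases hN0 : N = 0
  · subst hN0
    rw [Finset.Nat.antidiagonal_zero, Finset.sum_singleton, if_pos rfl]
    show f 0 * g 0 = 1
    rw [hf, hg]
    norm_num
  · rw [if_neg hN0]
    show ∑ p ∈ Finset.HasAntidiagonal.antidiagonal N, f p.1 * g p.2 = 0
    by_cases hNpar : N % 2 = 0
    · obtain ⟨n, rfl⟩ : ∃ n, N = 2 * n := ⟨N / 2, by omega⟩
      have hn : 1 ≤ n := by omega
      rw [Finset.Nat.sum_antidiagonal_eq_sum_range_succ_mk]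
      rw [← Finset.sum_filter_of_ne (p := fun p => p % 2 = 0) (fun x hx hfx => by
        by_contra hodd
        apply hfx
        have hx0 : x ≠ 0 := by omega
        rw [hf]
        simp only []
        rw [if_neg hx0, if_neg hodd, zero_mul])]
      rw [show (Finset.range (2 * n + 1)).filter (fun p => p % 2 = 0)
          = (Finset.range (n + 1)).image (fun i => 2 * i) from by
        ext x
        simp only [Finset.mem_filter, Finset.mem_image, Finset.mem_range]
        constructor
        · rintro ⟨h1, h2⟩
          exact ⟨x / 2, by omega, by omega⟩
        · rintro ⟨i, hi, rfl⟩
          omega]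
      rw [Finset.sum_image (fun a _ b _ h => by omega : ∀ a ∈ Finset.range (n + 1),
        ∀ b ∈ Finset.range (n + 1), 2 * a = 2 * b → a = b)]
      rw [Finset.sum_range_succ]
      rw [show 2 * n - 2 * n = 0 by omega]
      have hg0 : g 0 = 1 := by rw [hg]; norm_num
      rw [hg0, mul_one]
      -- rewrite the remaining sum as indexed by j = n - i ∈ [1, n]
      have hre : ∑ i ∈ Finset.range n, f (2 * i) * g (2 * n - 2 * i)
          = ∑ j ∈ Finset.Icc 1 n, f (2 * (n - j)) * g (2 * j) := by
        apply Finset.sum_nbij' (i := fun i => n - i) (j := fun j => n - j)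
        · intro a ha
          rw [Finset.mem_range] at ha
          rw [Finset.mem_Icc]
          omega
        · intro a ha
          rw [Finset.mem_Icc] at ha
          rw [Finset.mem_range]
          omega
        · intro a ha
          rw [Finset.mem_range] at ha
          omega
        · intro a ha
          rw [Finset.mem_Icc] at ha
          omega
        · intro a ha
          rw [Finset.mem_range] at ha
          rw [show n - (n - a) = a by omega, show 2 * n - 2 * a = 2 * (n - a) by omega]
      rw [hre]
      rw [hrec n hn]
      rw [← Finset.sum_add_distrib]
      apply Finset.sum_eq_zero
      intro j hj
      rw [Finset.mem_Icc] at hj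
      rw [hgval j hj.1]
      ring
    · apply Finset.sum_eq_zero
      rintro ⟨p, q⟩ hmem
      rw [Finset.HasAntidiagonal.mem_antidiagonal] at hmem
      by_cases hp : p % 2 = 0
      · have hq : q % 2 ≠ 0 := by omega
        have hq0 : q ≠ 0 := by omega
        show f p * g q = 0
        rw [hg]
        simp only []
        rw [if_neg hq0, if_neg hq, mul_zero]
      · have hp0 : p ≠ 0 := by omega
        show f p * g q = 0
        rw [hf]
        simp only []
        rw [if_neg hp0, if_neg hp, zero_mul]
end

section
/- Let k ≥ 1 and let Υ ⊆ F_{2,k}. Then the following identity of formal power series in t with coefficients in ℚ[x] holds: (Σ_{n≥1} (t^{2n−1}/(k(2n−1))!) Σ_{F ∈ F^{(2),Υ}_{2n−1,k}} x^{Υ-mch^{(2)}(F)}) · (1 − Σ_{n≥1} (x−1)^{n−1} t^{2n} full_{2n}^Υ/(2kn)!) = Σ_{n≥1} (x−1)^{n−1} t^{2n−1} full_{2n−1}^Υ/(k(2n−1))!. -/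
-- ====== auxiliary development ======
open Finset Polynomial

attribute [local instance] Classical.propDecidable

namespace Stmt9

variable (k : ℕ) (U : Set (ℕ → ℕ → ℕ))

/-- the grid of cells of a `k × n` rectangle -/
def grid (n : ℕ) : Finset (ℕ × ℕ) := Finset.Icc 1 k ×ˢ Finset.Icc 1 n

lemma mem_grid {n : ℕ} {p : ℕ × ℕ} :
    p ∈ grid k n ↔ 1 ≤ p.1 ∧ p.1 ≤ k ∧ 1 ≤ p.2 ∧ p.2 ≤ n := by
  simp [grid, Finset.mem_Icc, and_assoc]

lemma coe_grid (n : ℕ) : (grid k n : Set (ℕ × ℕ)) = Set.Icc 1 k ×ˢ Set.Icc 1 n := by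
  ext p; simp [mem_grid, Set.mem_prod, and_assoc, Prod.le_def]; tauto

lemma isFilling_zero_outside {n : ℕ} {F : ℕ → ℕ → ℕ} (hF : IsFilling n k F)
    {i j : ℕ} (h : (i, j) ∉ grid k n) : F i j = 0 := by
  by_contra h0
  exact h ((mem_grid k).2 (hF.1 i j h0))

lemma finite_fillings (n : ℕ) : {F : ℕ → ℕ → ℕ | IsFilling n k F}.Finite := by
  have : Set.InjOn (fun (F : ℕ → ℕ → ℕ) => fun p : (grid k n : Finset (ℕ × ℕ)) => F p.1.1 p.1.2)
      {F | IsFilling n k F} := by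
    intro F hF G hG h
    funext i j
    by_cases hij : (i, j) ∈ grid k n
    · exact congrFun h ⟨(i, j), hij⟩
    · rw [isFilling_zero_outside k hF hij, isFilling_zero_outside k hG hij]
  have hsub : (fun (F : ℕ → ℕ → ℕ) => fun p : (grid k n : Finset (ℕ × ℕ)) => F p.1.1 p.1.2) ''
      {F | IsFilling n k F} ⊆ Set.pi Set.univ (fun _ => Set.Iic (k * n)) := by
    rintro g ⟨F, hF, rfl⟩ p _
    have hp : ((p : ℕ × ℕ).1, (p : ℕ × ℕ).2) ∈ Set.Icc 1 k ×ˢ Set.Icc (1:ℕ) n := by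
      rw [← coe_grid]; exact p.2
    exact (hF.2.1.mapsTo hp).2
  exact Set.Finite.of_finite_image
    ((Set.Finite.pi fun _ => Set.finite_Iic (k * n)).subset hsub) this

lemma finite_oddfull (n : ℕ) : {F : ℕ → ℕ → ℕ | OddFull n k U F}.Finite :=
  (finite_fillings k n).subset (fun _ h => h.1)

lemma finite_full (n : ℕ) :
    {F : ℕ → ℕ → ℕ | IsFilling n k F ∧
      ∀ i, 1 ≤ i → i ≤ n - 1 → ∃ P ∈ U, MatchAt 2 k P F i}.Finite :=
  (finite_fillings k n).subset (fun _ h => h.1)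

/-- fillings with matches at every odd position, as a finset -/
noncomputable def OddSet (n : ℕ) : Finset (ℕ → ℕ → ℕ) := (finite_oddfull k U n).toFinset

/-- fillings with matches at every position, as a finset -/
noncomputable def FullSet (n : ℕ) : Finset (ℕ → ℕ → ℕ) := (finite_full k U n).toFinset

lemma mem_OddSet {n : ℕ} {F : ℕ → ℕ → ℕ} : F ∈ OddSet k U n ↔ OddFull n k U F := by
  simp [OddSet, Set.Finite.mem_toFinset]

lemma mem_FullSet {n : ℕ} {F : ℕ → ℕ → ℕ} : F ∈ FullSet k U n ↔
    IsFilling n k F ∧ ∀ i, 1 ≤ i → i ≤ n - 1 → ∃ P ∈ U, MatchAt 2 k P F i := by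
  simp [FullSet, Set.Finite.mem_toFinset]

lemma fullCount_eq (n : ℕ) : fullCount n k U = (FullSet k U n).card := by
  rw [FullSet, ← Set.ncard_eq_toFinset_card _ (finite_full k U n), fullCount,
    ← Nat.card_coe_set_eq]
  rfl

/-- even match positions of `F`, as a finset -/
noncomputable def EM (n : ℕ) (F : ℕ → ℕ → ℕ) : Finset ℕ :=
  (Finset.Icc 1 (n - 1)).filter (fun i => Even i ∧ ∃ P ∈ U, MatchAt 2 k P F i)

lemma mch2Count_eq (n : ℕ) (F : ℕ → ℕ → ℕ) : mch2Count n k U F = (EM k U n F).card := by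
  rw [← Set.ncard_coe_finset, mch2Count]
  congr 1
  ext i
  simp [EM, Finset.mem_Icc]
  tauto

-- stage 2


/-- rank of `x` in `T` (1-indexed); `0` if `x ∉ T` -/
noncomputable def rk (T : Finset ℕ) (x : ℕ) : ℕ :=
  if h : x ∈ T then ((T.orderIsoOfFin rfl).symm ⟨x, h⟩ : Fin T.card) + 1 else 0

/-- the `x`-th smallest element of `T` (1-indexed); `0` if out of range -/
noncomputable def uk (T : Finset ℕ) (x : ℕ) : ℕ :=
  if h : x - 1 < T.card ∧ 1 ≤ x then (T.orderIsoOfFin rfl ⟨x - 1, h.1⟩ : ℕ) else 0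

lemma rk_mem {T : Finset ℕ} {x : ℕ} (h : x ∈ T) : rk T x ∈ Finset.Icc 1 T.card := by
  rw [rk, dif_pos h, Finset.mem_Icc]
  exact ⟨Nat.le_add_left 1 _, ((T.orderIsoOfFin rfl).symm ⟨x, h⟩).2⟩

lemma uk_mem {T : Finset ℕ} {x : ℕ} (h : x ∈ Finset.Icc 1 T.card) : uk T x ∈ T := by
  rw [Finset.mem_Icc] at h
  rw [uk, dif_pos ⟨by omega, h.1⟩]
  exact (T.orderIsoOfFin rfl ⟨x - 1, by omega⟩).2

lemma uk_rk {T : Finset ℕ} {x : ℕ} (h : x ∈ T) : uk T (rk T x) = x := by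
  rw [rk, dif_pos h, uk,
    dif_pos ⟨by simpa using ((T.orderIsoOfFin rfl).symm ⟨x, h⟩).isLt, by omega⟩]
  simp

lemma rk_uk {T : Finset ℕ} {x : ℕ} (h : x ∈ Finset.Icc 1 T.card) : rk T (uk T x) = x := by
  rw [Finset.mem_Icc] at h
  rw [uk, dif_pos ⟨by omega, h.1⟩, rk, dif_pos (T.orderIsoOfFin rfl ⟨x - 1, by omega⟩).2]
  rw [show (⟨(T.orderIsoOfFin rfl ⟨x - 1, by omega⟩ : ℕ),
      (T.orderIsoOfFin rfl ⟨x - 1, by omega⟩).2⟩ : {y // y ∈ T}) = T.orderIsoOfFin rfl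
      ⟨x - 1, by omega⟩ from rfl]
  simp
  omega

lemma rk_lt_rk {T : Finset ℕ} {x y : ℕ} (hx : x ∈ T) (hy : y ∈ T) :
    rk T x < rk T y ↔ x < y := by
  rw [rk, dif_pos hx, rk, dif_pos hy, Nat.add_lt_add_iff_right]
  rw [← Fin.lt_iff_val_lt_val, OrderIso.lt_iff_lt]
  exact Iff.rfl

lemma rk_pos {T : Finset ℕ} {x : ℕ} (h : x ∈ T) : 1 ≤ rk T x :=
  (Finset.mem_Icc.1 (rk_mem h)).1

lemma uk_lt_uk {T : Finset ℕ} {x y : ℕ} (hx : x ∈ Finset.Icc 1 T.card)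
    (hy : y ∈ Finset.Icc 1 T.card) : uk T x < uk T y ↔ x < y := by
  rw [← rk_uk hx, ← rk_uk hy] ; rw [rk_uk hx, rk_uk hy]
  rw [← rk_lt_rk (uk_mem hx) (uk_mem hy), rk_uk hx, rk_uk hy]

/-- `rk T` is a bijection from `T` to `Icc 1 T.card` -/
lemma rk_bijOn (T : Finset ℕ) :
    Set.BijOn (rk T) T (Finset.Icc 1 T.card) := by
  refine ⟨fun x hx => rk_mem hx, fun x hx y hy h => ?_, fun y hy => ?_⟩
  · rw [← uk_rk hx, ← uk_rk hy, h]
  · exact ⟨uk T y, uk_mem hy, rk_uk hy⟩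

/-- transporting a match along an order-preserving relabelling of values with a column shift -/
lemma matchAt_transport (k : ℕ) {c d : ℕ} {F G : ℕ → ℕ → ℕ} {φ : ℕ → ℕ} (V : Set ℕ)
    (hφ : ∀ x ∈ V, ∀ y ∈ V, (φ x < φ y ↔ x < y))
    (hFG : ∀ a j, 1 ≤ a → a ≤ k → 1 ≤ j → j ≤ d → G a j = φ (F a (j + c)))
    (hV : ∀ a j, 1 ≤ a → a ≤ k → 1 ≤ j → j ≤ d → F a (j + c) ∈ V)
    {i : ℕ} (hi1 : 1 ≤ i) (hi : i + 1 ≤ d) (P : ℕ → ℕ → ℕ) :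
    MatchAt 2 k P G i ↔ MatchAt 2 k P F (i + c) := by
  have key : ∀ a b, 1 ≤ a → a ≤ k → 1 ≤ b → b ≤ 2 →
      G a (i - 1 + b) = φ (F a (i + c - 1 + b)) ∧ F a (i + c - 1 + b) ∈ V := by
    intro a b ha1 hak hb1 hb2
    have hcol1 : 1 ≤ i - 1 + b := by omega
    have hcol2 : i - 1 + b ≤ d := by omega
    have harith : i - 1 + b + c = i + c - 1 + b := by omega
    constructor
    · rw [hFG a (i - 1 + b) ha1 hak hcol1 hcol2, harith]
    · have := hV a (i - 1 + b) ha1 hak hcol1 hcol2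
      rwa [harith] at this
  constructor
  · intro hm a b c' d' ha1 hak hb1 hb2 hc1 hck hd1 hd2
    have h1 := key a b ha1 hak hb1 hb2
    have h2 := key c' d' hc1 hck hd1 hd2
    rw [← hφ _ h1.2 _ h2.2, ← h1.1, ← h2.1]
    exact hm a b c' d' ha1 hak hb1 hb2 hc1 hck hd1 hd2
  · intro hm a b c' d' ha1 hak hb1 hb2 hc1 hck hd1 hd2
    have h1 := key a b ha1 hak hb1 hb2
    have h2 := key c' d' hc1 hck hd1 hd2
    rw [h1.1, h2.1, hφ _ h1.2 _ h2.2]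
    exact hm a b c' d' ha1 hak hb1 hb2 hc1 hck hd1 hd2


-- stage 3


lemma uk_bijOn (T : Finset ℕ) : Set.BijOn (uk T) (Finset.Icc 1 T.card) T := by
  refine ⟨fun x hx => uk_mem hx, fun x hx y hy h => ?_, fun y hy => ⟨rk T y, rk_mem hy, uk_rk hy⟩⟩
  rw [← rk_uk hx, ← rk_uk hy, h]

lemma card_grid (n : ℕ) : (grid k n).card = k * n := by
  simp [grid, Nat.card_Icc]

variable {k} {n b : ℕ} {F G H : ℕ → ℕ → ℕ}

/-- values in the first `b` columns -/
def val1 (k b : ℕ) (F : ℕ → ℕ → ℕ) : Finset ℕ := (grid k b).image (fun p => F p.1 p.2)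

/-- standardization of the first `b` columns -/
noncomputable def leftF (k b : ℕ) (F : ℕ → ℕ → ℕ) : ℕ → ℕ → ℕ :=
  fun i j => if (i, j) ∈ grid k b then rk (val1 k b F) (F i j) else 0

/-- standardization of the remaining columns -/
noncomputable def rightF (k b n : ℕ) (F : ℕ → ℕ → ℕ) : ℕ → ℕ → ℕ :=
  fun i j => if (i, j) ∈ grid k (n - b) then
    rk (Finset.Icc 1 (k * n) \ val1 k b F) (F i (j + b)) else 0

/-- inverse of splitting -/
noncomputable def joinF (k b n : ℕ) (T : Finset ℕ) (G H : ℕ → ℕ → ℕ) : ℕ → ℕ → ℕ :=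
  fun i j => if j ≤ b then uk T (G i j) else uk (Finset.Icc 1 (k * n) \ T) (H i (j - b))

section Split
variable (hF : IsFilling n k F) (hbn : b ≤ n)
include hF

lemma filling_injOn : Set.InjOn (fun p : ℕ × ℕ => F p.1 p.2) (grid k n) := by
  rw [coe_grid]; exact hF.2.1.injOn

lemma filling_mapsTo {i j : ℕ} (h : (i, j) ∈ grid k n) : F i j ∈ Finset.Icc 1 (k * n) := by
  have h' : ((i, j) : ℕ × ℕ) ∈ (Set.Icc 1 k ×ˢ Set.Icc 1 n : Set (ℕ × ℕ)) := by
    rw [← coe_grid]; exact_mod_cast h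
  have := hF.2.1.mapsTo h'
  simpa [Finset.mem_Icc, Set.mem_Icc] using this

omit hF in
lemma grid_subset (hbn' : b ≤ n) : grid k b ⊆ grid k n := by
  intro p hp; rw [mem_grid] at *; omega

omit hF in
lemma val1_mem {i j : ℕ} (h : (i, j) ∈ grid k b) : F i j ∈ val1 k b F := by
  rw [val1, Finset.mem_image]; exact ⟨(i, j), h, rfl⟩

include hbn

lemma val1_bijOn : Set.BijOn (fun p : ℕ × ℕ => F p.1 p.2) (grid k b) (val1 k b F) := by
  have h1 : Set.InjOn (fun p : ℕ × ℕ => F p.1 p.2) (grid k b) :=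
    (filling_injOn hF).mono (by exact_mod_cast grid_subset (k := k) hbn)
  have := h1.bijOn_image
  rwa [show (fun p : ℕ × ℕ => F p.1 p.2) '' (grid k b) = ↑(val1 k b F) by
    rw [val1, Finset.coe_image]] at this

lemma val1_subset : val1 k b F ⊆ Finset.Icc 1 (k * n) := by
  intro y hy
  rw [val1, Finset.mem_image] at hy
  obtain ⟨p, hp, rfl⟩ := hy
  exact filling_mapsTo hF (grid_subset hbn hp)

lemma val1_card : (val1 k b F).card = k * b := by
  classical
  rw [val1, Finset.card_image_of_injOn
    ((filling_injOn hF).mono (by exact_mod_cast grid_subset (k := k) hbn)), card_grid]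

lemma compl_card : (Finset.Icc 1 (k * n) \ val1 k b F).card = k * (n - b) := by
  rw [Finset.card_sdiff_of_subset (val1_subset hF hbn), Nat.card_Icc, val1_card hF hbn]
  have : k * n = k * (n - b) + k * b := by
    rw [← Nat.mul_add]; congr 1; omega
  omega

lemma compl_mem {i j : ℕ} (h : (i, j) ∈ grid k (n - b)) :
    F i (j + b) ∈ Finset.Icc 1 (k * n) \ val1 k b F := by
  rw [mem_grid] at h
  have hg : (i, j + b) ∈ grid k n := by rw [mem_grid]; constructor <;> omega
  rw [Finset.mem_sdiff]
  refine ⟨filling_mapsTo hF hg, fun hmem => ?_⟩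
  rw [val1, Finset.mem_image] at hmem
  obtain ⟨p, hp, hpe⟩ := hmem
  have := filling_injOn hF (grid_subset hbn hp) hg hpe
  have hp' := (mem_grid k).1 hp
  have : p.2 = j + b := by rw [this]
  omega

/-- `leftF` is a filling -/
lemma leftF_isFilling : IsFilling b k (leftF k b F) := by
  refine ⟨fun i j h => ?_, ?_, fun i j h1 h2 h3 h4 => ?_⟩
  · rw [leftF] at h
    by_cases hg : (i, j) ∈ grid k b
    · exact (mem_grid k).1 hg
    · simp [hg] at h
  · have hcomp := (rk_bijOn (val1 k b F)).comp (val1_bijOn hF hbn)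
    rw [val1_card hF hbn] at hcomp
    have : Set.EqOn (rk (val1 k b F) ∘ fun p : ℕ × ℕ => F p.1 p.2)
        (fun p : ℕ × ℕ => leftF k b F p.1 p.2) (grid k b) := by
      intro p hp
      simp only [Function.comp, leftF]
      rw [if_pos (by exact_mod_cast hp)]
    have := hcomp.congr this
    rwa [coe_grid, Finset.coe_Icc] at this
  · simp only [leftF]
    rw [if_pos (by rw [mem_grid]; omega), if_pos (by rw [mem_grid]; omega)]
    rw [rk_lt_rk (val1_mem (by rw [mem_grid]; omega)) (val1_mem (by rw [mem_grid]; omega))]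
    exact hF.2.2 i j h1 (by omega) h3 (by omega)

/-- matches of `leftF` correspond to matches of `F` -/
lemma leftF_matchAt {i : ℕ} (hi1 : 1 ≤ i) (hi : i + 1 ≤ b) (P : ℕ → ℕ → ℕ) :
    MatchAt 2 k P (leftF k b F) i ↔ MatchAt 2 k P F i := by
  have := matchAt_transport (k := k) (c := 0) (d := b) (F := F) (G := leftF k b F)
    (φ := rk (val1 k b F)) (↑(val1 k b F))
    (fun x hx y hy => rk_lt_rk (by exact_mod_cast hx) (by exact_mod_cast hy))
    (fun a j ha1 hak hj1 hjb => by
      simp only [leftF]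
      rw [if_pos (by rw [mem_grid]; omega)]; norm_num)
    (fun a j ha1 hak hj1 hjb => by
      have : F a (j + 0) ∈ val1 k b F := by
        rw [Nat.add_zero]; exact val1_mem (by rw [mem_grid]; omega)
      exact_mod_cast this)
    hi1 hi P
  simpa using this

lemma rightF_bijOn_aux : Set.BijOn (fun p : ℕ × ℕ => F p.1 (p.2 + b))
    (grid k (n - b)) (((Finset.Icc 1 (k * n) \ val1 k b F : Finset ℕ)) : Set ℕ) := by
  refine ⟨fun p hp => ?_, fun p hp q hq h => ?_, fun y hy => ?_⟩
  · exact_mod_cast compl_mem hF hbn (by exact_mod_cast hp)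
  · have hp' := (mem_grid k).1 (by exact_mod_cast hp)
    have hq' := (mem_grid k).1 (by exact_mod_cast hq)
    have h1 : (p.1, p.2 + b) ∈ grid k n := by rw [mem_grid]; constructor <;> omega
    have h2 : (q.1, q.2 + b) ∈ grid k n := by rw [mem_grid]; constructor <;> omega
    have := filling_injOn hF h1 h2 h
    obtain ⟨e1, e2⟩ := Prod.mk.inj this
    exact Prod.ext e1 (by omega)
  · have hy' : (y : ℕ) ∈ Finset.Icc 1 (k * n) \ val1 k b F := by exact_mod_cast hy
    rw [Finset.mem_sdiff] at hy'
    obtain ⟨p, hp, hpe⟩ := hF.2.1.surjOn (by simpa [Finset.mem_Icc, Set.mem_Icc] using hy'.1)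
    have hpg : p ∈ grid k n := by rw [← coe_grid] at hp; exact_mod_cast hp
    have hp' := (mem_grid k).1 hpg
    have hpb : ¬ p.2 ≤ b := by
      intro hle
      have : F p.1 p.2 ∈ val1 k b F := val1_mem (by rw [mem_grid]; omega)
      rw [show F p.1 p.2 = y from hpe] at this
      exact hy'.2 this
    refine ⟨(p.1, p.2 - b), ?_, ?_⟩
    · show _ ∈ (grid k (n-b) : Set (ℕ × ℕ)); exact_mod_cast (mem_grid k).2 (by constructor <;> omega)
    · show F p.1 (p.2 - b + b) = y
      rw [show p.2 - b + b = p.2 by omega]; exact hpe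

/-- `rightF` is a filling -/
lemma rightF_isFilling : IsFilling (n - b) k (rightF k b n F) := by
  refine ⟨fun i j h => ?_, ?_, fun i j h1 h2 h3 h4 => ?_⟩
  · rw [rightF] at h
    by_cases hg : (i, j) ∈ grid k (n - b)
    · exact (mem_grid k).1 hg
    · simp [hg] at h
  · have hcomp := (rk_bijOn (Finset.Icc 1 (k * n) \ val1 k b F)).comp (rightF_bijOn_aux hF hbn)
    rw [compl_card hF hbn] at hcomp
    have : Set.EqOn (rk (Finset.Icc 1 (k * n) \ val1 k b F) ∘ fun p : ℕ × ℕ => F p.1 (p.2 + b))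
        (fun p : ℕ × ℕ => rightF k b n F p.1 p.2) (grid k (n - b)) := by
      intro p hp
      simp only [Function.comp, rightF]
      rw [if_pos (by exact_mod_cast hp)]
    have := hcomp.congr this
    rwa [coe_grid, Finset.coe_Icc] at this
  · simp only [rightF]
    rw [if_pos (by rw [mem_grid]; omega), if_pos (by rw [mem_grid]; omega)]
    rw [rk_lt_rk (compl_mem hF hbn (by rw [mem_grid]; omega))
      (compl_mem hF hbn (by rw [mem_grid]; omega))]
    exact hF.2.2 i (j + b) h1 (by omega) (by omega) (by omega)

/-- matches of `rightF` correspond to (shifted) matches of `F` -/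
lemma rightF_matchAt {i : ℕ} (hi1 : 1 ≤ i) (hi : i + 1 ≤ n - b) (P : ℕ → ℕ → ℕ) :
    MatchAt 2 k P (rightF k b n F) i ↔ MatchAt 2 k P F (i + b) :=
  matchAt_transport (k := k) (c := b) (d := n - b) (F := F) (G := rightF k b n F)
    (φ := rk (Finset.Icc 1 (k * n) \ val1 k b F)) (↑(Finset.Icc 1 (k * n) \ val1 k b F))
    (fun x hx y hy => rk_lt_rk (by exact_mod_cast hx) (by exact_mod_cast hy))
    (fun a j ha1 hak hj1 hjb => by
      simp only [rightF]
      rw [if_pos (by rw [mem_grid]; omega)])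
    (fun a j ha1 hak hj1 hjb => by
      exact_mod_cast compl_mem hF hbn (by rw [mem_grid]; omega))
    hi1 hi P

end Split

section Join
variable {T : Finset ℕ}
variable (hbn : b ≤ n) (hT : T ⊆ Finset.Icc 1 (k * n)) (hTc : T.card = k * b)
variable (hG : IsFilling b k G) (hH : IsFilling (n - b) k H)

include hbn hT hTc

lemma Tc_card : (Finset.Icc 1 (k * n) \ T).card = k * (n - b) := by
  rw [Finset.card_sdiff_of_subset hT, Nat.card_Icc, hTc]
  have : k * n = k * (n - b) + k * b := by
    rw [← Nat.mul_add]; congr 1; omega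
  omega

omit hbn hT hTc

include hG hTc in
lemma joinF_left_eq {i j : ℕ} (hj : j ≤ b) :
    joinF k b n T G H i j = uk T (G i j) := by
  rw [joinF, if_pos hj]

include hH in
lemma joinF_right_eq {i j : ℕ} (hj : b < j) :
    joinF k b n T G H i j = uk (Finset.Icc 1 (k * n) \ T) (H i (j - b)) := by
  rw [joinF, if_neg (by omega)]

include hG hTc in
lemma G_mem_Icc {i j : ℕ} (h : (i, j) ∈ grid k b) : G i j ∈ Finset.Icc 1 T.card := by
  rw [hTc]
  have h' : ((i, j) : ℕ × ℕ) ∈ (Set.Icc 1 k ×ˢ Set.Icc 1 b : Set (ℕ × ℕ)) := by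
    rw [← coe_grid]; exact_mod_cast h
  have := hG.2.1.mapsTo h'
  simpa [Finset.mem_Icc, Set.mem_Icc] using this

include hH hbn hT hTc in
lemma H_mem_Icc {i j : ℕ} (h : (i, j) ∈ grid k (n - b)) :
    H i j ∈ Finset.Icc 1 (Finset.Icc 1 (k * n) \ T).card := by
  rw [Tc_card hbn hT hTc]
  have h' : ((i, j) : ℕ × ℕ) ∈ (Set.Icc 1 k ×ˢ Set.Icc 1 (n - b) : Set (ℕ × ℕ)) := by
    rw [← coe_grid]; exact_mod_cast h
  have := hH.2.1.mapsTo h'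
  simpa [Finset.mem_Icc, Set.mem_Icc] using this

include hbn hT hTc hG hH in
/-- joining two fillings gives a filling -/
lemma joinF_isFilling : IsFilling n k (joinF k b n T G H) := by
  set Tc := Finset.Icc 1 (k * n) \ T with hTcdef
  refine ⟨fun i j h => ?_, ?_, fun i j h1 h2 h3 h4 => ?_⟩
  · by_cases hj : j ≤ b
    · rw [joinF_left_eq (hTc := hTc) (hG := hG) hj, uk] at h
      split at h
      · rename_i hcond
        have hG0 : G i j ≠ 0 := by omega
        have := hG.1 i j hG0
        exact ⟨this.1, this.2.1, this.2.2.1, by omega⟩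
      · exact absurd rfl h
    · rw [joinF_right_eq (hH := hH) (by omega), uk] at h
      split at h
      · rename_i hcond
        have hH0 : H i (j - b) ≠ 0 := by omega
        have := hH.1 i (j - b) hH0
        exact ⟨this.1, this.2.1, by omega, by omega⟩
      · exact absurd rfl h
  · have bij1 : Set.BijOn (fun p : ℕ × ℕ => joinF k b n T G H p.1 p.2)
        (Set.Icc 1 k ×ˢ Set.Icc 1 b) ↑T := by
      have huk := uk_bijOn T
      rw [hTc, Finset.coe_Icc] at huk
      have hcomp := huk.comp hG.2.1
      refine hcomp.congr fun p hp => ?_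
      have : p.2 ≤ b := by
        simp only [Set.mem_prod, Set.mem_Icc] at hp
        exact hp.2.2
      simp only [Function.comp]
      rw [joinF_left_eq (hTc := hTc) (hG := hG) this]
    have bij2 : Set.BijOn (fun p : ℕ × ℕ => joinF k b n T G H p.1 p.2)
        (Set.Icc 1 k ×ˢ Set.Icc (b + 1) n) ↑Tc := by
      have hShift : Set.BijOn (fun p : ℕ × ℕ => H p.1 (p.2 - b))
          (Set.Icc 1 k ×ˢ Set.Icc (b + 1) n) (Set.Icc 1 (k * (n - b))) := by
        refine ⟨fun p hp => ?_, fun p hp q hq h => ?_, fun y hy => ?_⟩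
        · simp only [Set.mem_prod, Set.mem_Icc] at hp
          have hm : ((p.1, p.2 - b) : ℕ × ℕ) ∈
              (Set.Icc 1 k ×ˢ Set.Icc 1 (n - b) : Set (ℕ × ℕ)) := by
            simp only [Set.mem_prod, Set.mem_Icc]; omega
          exact hH.2.1.mapsTo hm
        · simp only [Set.mem_prod, Set.mem_Icc] at hp hq
          have h1 : ((p.1, p.2 - b) : ℕ × ℕ) ∈
              (Set.Icc 1 k ×ˢ Set.Icc 1 (n - b) : Set (ℕ × ℕ)) := by
            simp only [Set.mem_prod, Set.mem_Icc]; omega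
          have h2 : ((q.1, q.2 - b) : ℕ × ℕ) ∈
              (Set.Icc 1 k ×ˢ Set.Icc 1 (n - b) : Set (ℕ × ℕ)) := by
            simp only [Set.mem_prod, Set.mem_Icc]; omega
          have := hH.2.1.injOn h1 h2 h
          obtain ⟨e1, e2⟩ := Prod.mk.inj this
          exact Prod.ext e1 (by omega)
        · obtain ⟨p, hp, hpe⟩ := hH.2.1.surjOn hy
          simp only [Set.mem_prod, Set.mem_Icc] at hp
          refine ⟨(p.1, p.2 + b), ?_, ?_⟩
          · simp only [Set.mem_prod, Set.mem_Icc]; omega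
          · show H p.1 (p.2 + b - b) = y
            rw [Nat.add_sub_cancel]; exact hpe
      have huk := uk_bijOn Tc
      rw [Tc_card hbn hT hTc, Finset.coe_Icc] at huk
      have hcomp := huk.comp hShift
      refine hcomp.congr fun p hp => ?_
      have : b < p.2 := by
        simp only [Set.mem_prod, Set.mem_Icc] at hp
        omega
      simp only [Function.comp]
      rw [joinF_right_eq (hH := hH) this]
    have hdom : Set.Icc 1 k ×ˢ Set.Icc 1 n =
        (Set.Icc 1 k ×ˢ Set.Icc 1 b) ∪ (Set.Icc 1 k ×ˢ Set.Icc (b + 1) n) := by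
      ext p
      simp only [Set.mem_prod, Set.mem_Icc, Set.mem_union]
      omega
    have htar : (Set.Icc 1 (k * n) : Set ℕ) = ↑T ∪ ↑Tc := by
      ext y
      simp only [Set.mem_union, Finset.coe_sdiff, Set.mem_diff, Finset.mem_coe,
        Finset.mem_Icc, Set.mem_Icc, hTcdef]
      constructor
      · intro h
        by_cases hyT : y ∈ T
        · exact Or.inl hyT
        · exact Or.inr ⟨by simpa [Finset.mem_Icc] using h, hyT⟩
      · rintro (h | h)
        · have := hT h; simpa [Finset.mem_Icc] using this
        · simpa [Finset.mem_Icc] using h.1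
    rw [hdom, htar]
    refine bij1.union bij2 ?_
    intro p hp q hq h
    rcases hp with hp | hp <;> rcases hq with hq | hq
    · exact bij1.injOn hp hq h
    · exfalso
      have h' : joinF k b n T G H p.1 p.2 = joinF k b n T G H q.1 q.2 := h
      have h1 := bij1.mapsTo hp
      have h2 := bij2.mapsTo hq
      rw [h'] at h1
      simp only [hTcdef, Finset.coe_sdiff, Set.mem_diff, Finset.mem_coe] at h2
      exact h2.2 h1
    · exfalso
      have h' : joinF k b n T G H p.1 p.2 = joinF k b n T G H q.1 q.2 := h
      have h1 := bij1.mapsTo hq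
      have h2 := bij2.mapsTo hp
      rw [h'] at h2
      simp only [hTcdef, Finset.coe_sdiff, Set.mem_diff, Finset.mem_coe] at h2
      exact h2.2 h1
    · exact bij2.injOn hp hq h
  · by_cases hj : j ≤ b
    · rw [joinF_left_eq (hTc := hTc) (hG := hG) hj, joinF_left_eq (hTc := hTc) (hG := hG) hj]
      rw [uk_lt_uk (G_mem_Icc hTc hG (by rw [mem_grid]; omega))
        (G_mem_Icc hTc hG (by rw [mem_grid]; omega))]
      exact hG.2.2 i j h1 h2 h3 hj
    · rw [joinF_right_eq (hH := hH) (by omega), joinF_right_eq (hH := hH) (by omega)]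
      rw [uk_lt_uk (H_mem_Icc hbn hT hTc hH (by rw [mem_grid]; omega))
        (H_mem_Icc hbn hT hTc hH (by rw [mem_grid]; omega))]
      exact hH.2.2 i (j - b) h1 h2 (by omega) (by omega)

include hG hTc in
/-- matches of the join in the left part -/
lemma joinF_matchAt_left {i : ℕ} (hi1 : 1 ≤ i) (hi : i + 1 ≤ b) (P : ℕ → ℕ → ℕ) :
    MatchAt 2 k P (joinF k b n T G H) i ↔ MatchAt 2 k P G i := by
  have := matchAt_transport (k := k) (c := 0) (d := b) (F := G)
    (G := joinF k b n T G H) (φ := uk T) (↑(Finset.Icc 1 T.card))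
    (fun x hx y hy => uk_lt_uk (by exact_mod_cast hx) (by exact_mod_cast hy))
    (fun a j ha1 hak hj1 hjb => by
      rw [joinF_left_eq (hTc := hTc) (hG := hG) hjb]; norm_num)
    (fun a j ha1 hak hj1 hjb => by
      have : G a (j + 0) ∈ Finset.Icc 1 T.card := by
        rw [Nat.add_zero]; exact G_mem_Icc hTc hG (by rw [mem_grid]; omega)
      exact_mod_cast this)
    hi1 hi P
  simpa using this

include hbn hT hTc hG hH in
/-- matches of the join in the right part -/
lemma joinF_matchAt_right {i : ℕ} (hi1 : 1 ≤ i) (hi : i + 1 ≤ n - b) (P : ℕ → ℕ → ℕ) :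
    MatchAt 2 k P (joinF k b n T G H) (i + b) ↔ MatchAt 2 k P H i := by
  have := matchAt_transport (k := k) (c := b) (d := n - b) (F := joinF k b n T G H)
    (G := H) (φ := rk (Finset.Icc 1 (k * n) \ T)) (↑(Finset.Icc 1 (k * n) \ T))
    (fun x hx y hy => rk_lt_rk (by exact_mod_cast hx) (by exact_mod_cast hy))
    (fun a j ha1 hak hj1 hjb => by
      rw [joinF_right_eq (hH := hH) (show b < j + b by omega), Nat.add_sub_cancel,
        rk_uk (H_mem_Icc hbn hT hTc hH (by rw [mem_grid]; omega))])
    (fun a j ha1 hak hj1 hjb => by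
      rw [joinF_right_eq (hH := hH) (show b < j + b by omega), Nat.add_sub_cancel]
      exact_mod_cast uk_mem (H_mem_Icc hbn hT hTc hH (by rw [mem_grid]; omega)))
    hi1 hi P
  exact this.symm

end Join

lemma uk_zero (T : Finset ℕ) : uk T 0 = 0 := by
  rw [uk, dif_neg]; omega

section Inverse
variable {T : Finset ℕ}

/-- splitting then joining recovers the filling -/
lemma join_split (hF : IsFilling n k F) (hbn : b ≤ n) :
    joinF k b n (val1 k b F) (leftF k b F) (rightF k b n F) = F := by
  funext i j
  by_cases hj : j ≤ b
  · rw [joinF, if_pos hj, leftF]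
    by_cases hg : (i, j) ∈ grid k b
    · rw [if_pos hg, uk_rk (val1_mem hg)]
    · rw [if_neg hg, uk_zero]
      refine (isFilling_zero_outside k hF fun hgn => hg ?_).symm
      rw [mem_grid] at *
      omega
  · rw [joinF, if_neg hj, rightF]
    by_cases hg : (i, j - b) ∈ grid k (n - b)
    · have hmem := compl_mem hF hbn hg
      rw [show j - b + b = j by omega] at hmem
      rw [if_pos hg, show j - b + b = j by omega, uk_rk hmem]
    · rw [if_neg hg, uk_zero]
      refine (isFilling_zero_outside k hF fun hgn => hg ?_).symm
      rw [mem_grid] at *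
      omega

variable (hbn : b ≤ n) (hT : T ⊆ Finset.Icc 1 (k * n)) (hTc : T.card = k * b)
variable (hG : IsFilling b k G) (hH : IsFilling (n - b) k H)

include hTc hG in
/-- the first-columns value set of a join is `T` -/
lemma val1_join : val1 k b (joinF k b n T G H) = T := by
  ext y
  rw [val1, Finset.mem_image]
  constructor
  · rintro ⟨p, hp, rfl⟩
    have hp' := (mem_grid k).1 hp
    rw [joinF_left_eq (hTc := hTc) (hG := hG) hp'.2.2.2]
    exact uk_mem (G_mem_Icc hTc hG (by rw [mem_grid]; omega))
  · intro hy
    have hrk := rk_mem hy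
    rw [hTc] at hrk
    have hrk' : rk T y ∈ (Set.Icc 1 (k * b) : Set ℕ) := by
      rw [← Finset.coe_Icc]; exact_mod_cast hrk
    obtain ⟨p, hp, hpe⟩ := hG.2.1.surjOn hrk'
    have hpg : p ∈ grid k b := by rw [← coe_grid] at hp; exact_mod_cast hp
    have hp' := (mem_grid k).1 hpg
    refine ⟨p, hpg, ?_⟩
    rw [joinF_left_eq (hTc := hTc) (hG := hG) hp'.2.2.2]
    have : G p.1 p.2 = rk T y := hpe
    rw [this, uk_rk hy]

include hTc hG in
lemma left_join : leftF k b (joinF k b n T G H) = G := by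
  funext i j
  rw [leftF]
  by_cases hg : (i, j) ∈ grid k b
  · have hp' := (mem_grid k).1 hg
    rw [if_pos hg, val1_join (hTc := hTc) (hG := hG),
      joinF_left_eq (hTc := hTc) (hG := hG) hp'.2.2.2, rk_uk (G_mem_Icc hTc hG hg)]
  · rw [if_neg hg]
    exact (isFilling_zero_outside k hG hg).symm

include hbn hT hTc hG hH in
lemma right_join : rightF k b n (joinF k b n T G H) = H := by
  funext i j
  rw [rightF]
  by_cases hg : (i, j) ∈ grid k (n - b)
  · have hp' := (mem_grid k).1 hg
    rw [if_pos hg, val1_join (hTc := hTc) (hG := hG),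
      joinF_right_eq (hH := hH) (show b < j + b by omega), Nat.add_sub_cancel,
      rk_uk (H_mem_Icc hbn hT hTc hH hg)]
  · rw [if_neg hg]
    exact (isFilling_zero_outside k hH hg).symm

end Inverse

-- ===== stage 4 =====

lemma sum_powerset_pow {R : Type*} [CommRing R] (M : Finset ℕ) (y : R) :
    ∑ S ∈ M.powerset, y ^ S.card = (y + 1) ^ M.card := by
  rw [Finset.sum_powerset, Commute.add_pow (Commute.one_right y)]
  refine Finset.sum_congr rfl fun j hj => ?_
  rw [Finset.sum_powersetCard j M (fun t => y ^ t)]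
  simp [nsmul_eq_mul, mul_comm]

/-- the even integers in `[1, N]` -/
def Evens (N : ℕ) : Finset ℕ := (Finset.Icc 1 N).filter Even

lemma mem_Evens {N i : ℕ} : i ∈ Evens N ↔ Even i ∧ 1 ≤ i ∧ i ≤ N := by
  simp [Evens, Finset.mem_Icc]; tauto

lemma card_Evens (N : ℕ) : (Evens N).card = N / 2 := by
  have h : Evens N = (Finset.Icc 1 (N / 2)).image (fun j => 2 * j) := by
    ext i
    simp only [mem_Evens, Finset.mem_image, Finset.mem_Icc, Nat.even_iff]
    constructor
    · intro h; exact ⟨i / 2, by omega, by omega⟩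
    · rintro ⟨j, hj, rfl⟩; omega
  rw [h, Finset.card_image_of_injOn (fun x _ y _ h => by omega), Nat.card_Icc]
  omega

/-- the least positive even `i ≤ n - 1` not in `S` (`0` if none) -/
noncomputable def gp (n : ℕ) (S : Finset ℕ) : ℕ :=
  sInf {i : ℕ | Even i ∧ 1 ≤ i ∧ i ≤ n - 1 ∧ i ∉ S}

lemma gp_eq_zero_iff {m : ℕ} {S : Finset ℕ} :
    gp m S = 0 ↔ ∀ i, Even i → 1 ≤ i → i ≤ m - 1 → i ∈ S := by
  constructor
  · intro h i hi h1 h2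
    by_contra hmem
    have hne : {i : ℕ | Even i ∧ 1 ≤ i ∧ i ≤ m - 1 ∧ i ∉ S}.Nonempty := ⟨i, hi, h1, h2, hmem⟩
    have := Nat.sInf_mem hne
    rw [show sInf {i : ℕ | Even i ∧ 1 ≤ i ∧ i ≤ m - 1 ∧ i ∉ S} = gp m S from rfl, h] at this
    exact absurd this.2.1 (by omega)
  · intro h
    rw [gp, Nat.sInf_eq_zero]
    right
    ext i
    simp only [Set.mem_setOf_eq, Set.mem_empty_iff_false, iff_false, not_and, not_not]
    intro h1 h2 h3
    exact h i h1 h2 h3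

lemma gp_eq_iff {m b : ℕ} {S : Finset ℕ} (hb : b ≠ 0) :
    gp m S = b ↔ (Even b ∧ 1 ≤ b ∧ b ≤ m - 1 ∧ b ∉ S) ∧
      (∀ i, Even i → 1 ≤ i → i < b → i ∈ S) := by
  constructor
  · intro h
    have hne : {i : ℕ | Even i ∧ 1 ≤ i ∧ i ≤ m - 1 ∧ i ∉ S}.Nonempty := by
      by_contra hcon
      rw [Set.not_nonempty_iff_eq_empty] at hcon
      rw [gp, hcon, Nat.sInf_empty] at h
      exact hb h.symm
    have hmem := Nat.sInf_mem hne
    rw [show sInf {i : ℕ | Even i ∧ 1 ≤ i ∧ i ≤ m - 1 ∧ i ∉ S} = gp m S from rfl, h] at hmem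
    obtain ⟨hbe, hb1, hbm, hbS⟩ := hmem
    refine ⟨⟨hbe, hb1, hbm, hbS⟩, fun i hi h1 hlt => ?_⟩
    by_contra hmem2
    have : gp m S ≤ i := Nat.sInf_le ⟨hi, h1, by omega, hmem2⟩
    omega
  · rintro ⟨hbmem, hmin⟩
    have h1 : gp m S ≤ b := Nat.sInf_le hbmem
    have hne : {i : ℕ | Even i ∧ 1 ≤ i ∧ i ≤ m - 1 ∧ i ∉ S}.Nonempty := ⟨b, hbmem⟩
    have hmem := Nat.sInf_mem hne
    have h2 : ¬ gp m S < b := by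
      intro hlt
      exact hmem.2.2.2 (hmin _ hmem.1 hmem.2.1 hlt)
    omega

section Heart
variable (k : ℕ) (U : Set (ℕ → ℕ → ℕ))

/-- `∑_F x^{mch2}` over odd-full fillings -/
noncomputable def Apoly (n : ℕ) : Polynomial ℚ :=
  ∑ F ∈ OddSet k U n, (Polynomial.X : Polynomial ℚ) ^ (EM k U n F).card

/-- pairs of an odd-full filling together with a chosen set of even match positions -/
noncomputable def PS (n : ℕ) : Finset ((_ : ℕ → ℕ → ℕ) × Finset ℕ) :=
  (OddSet k U n).sigma (fun F => (EM k U n F).powerset)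

lemma mem_PS {n : ℕ} {p : (_ : ℕ → ℕ → ℕ) × Finset ℕ} :
    p ∈ PS k U n ↔ p.1 ∈ OddSet k U n ∧ p.2 ⊆ EM k U n p.1 := by
  rw [PS, Finset.mem_sigma, Finset.mem_powerset]

lemma mem_EM {n i : ℕ} {F : ℕ → ℕ → ℕ} :
    i ∈ EM k U n F ↔ Even i ∧ 1 ≤ i ∧ i ≤ n - 1 ∧ ∃ P ∈ U, MatchAt 2 k P F i := by
  simp [EM, Finset.mem_Icc]; tauto

lemma expansionA (n : ℕ) :
    ∑ p ∈ PS k U n, ((Polynomial.X : Polynomial ℚ) - 1) ^ p.2.card = Apoly k U n := by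
  rw [PS, Finset.sum_sigma, Apoly]
  refine Finset.sum_congr rfl fun F hF => ?_
  rw [sum_powerset_pow, sub_add_cancel]

lemma fiber_zero (m : ℕ) :
    ∑ p ∈ (PS k U m).filter (fun p => gp m p.2 = 0),
        ((Polynomial.X : Polynomial ℚ) - 1) ^ p.2.card
      = ((Polynomial.X : Polynomial ℚ) - 1) ^ ((m - 1) / 2) * (fullCount m k U : Polynomial ℚ) := by
  have key : ∑ p ∈ (PS k U m).filter (fun p => gp m p.2 = 0),
      ((Polynomial.X : Polynomial ℚ) - 1) ^ p.2.card
      = ∑ F ∈ FullSet k U m, ((Polynomial.X : Polynomial ℚ) - 1) ^ ((m - 1) / 2) := by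
    refine Finset.sum_nbij' (fun p => p.1) (fun F => ⟨F, Evens (m - 1)⟩) ?_ ?_ ?_ ?_ ?_
    · rintro ⟨F, S⟩ hp
      rw [Finset.mem_filter, mem_PS] at hp
      obtain ⟨⟨hF, hS⟩, hgap⟩ := hp
      rw [mem_OddSet] at hF
      rw [mem_FullSet]
      refine ⟨hF.1, fun i h1 h2 => ?_⟩
      rcases Nat.even_or_odd i with he | ho
      · have : i ∈ S := gp_eq_zero_iff.1 hgap i he h1 h2
        have := hS this
        rw [mem_EM] at this
        exact this.2.2.2
      · exact hF.2 i ho h2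
    · intro F hF
      rw [mem_FullSet] at hF
      rw [Finset.mem_filter, mem_PS]
      have hEM : ∀ i, i ∈ Evens (m - 1) → i ∈ EM k U m F := by
        intro i hi
        rw [mem_Evens] at hi
        rw [mem_EM]
        exact ⟨hi.1, hi.2.1, hi.2.2, hF.2 i hi.2.1 hi.2.2⟩
      refine ⟨⟨?_, fun i hi => hEM i hi⟩, ?_⟩
      · rw [mem_OddSet]
        exact ⟨hF.1, fun i ho hi => hF.2 i ho.pos hi⟩
      · show gp m (Evens (m - 1)) = 0
        rw [gp_eq_zero_iff]
        intro i h1 h2 h3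
        rw [mem_Evens]
        exact ⟨h1, h2, h3⟩
    · rintro ⟨F, S⟩ hp
      rw [Finset.mem_filter, mem_PS] at hp
      obtain ⟨⟨hF, hS⟩, hgap⟩ := hp
      have : S = Evens (m - 1) := by
        apply Finset.Subset.antisymm
        · intro i hi
          have := hS hi
          rw [mem_EM] at this
          rw [mem_Evens]
          exact ⟨this.1, this.2.1, this.2.2.1⟩
        · intro i hi
          rw [mem_Evens] at hi
          exact gp_eq_zero_iff.1 hgap i hi.1 hi.2.1 hi.2.2
      simp [this]
    · intro F hF; rfl
    · rintro ⟨F, S⟩ hp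
      rw [Finset.mem_filter, mem_PS] at hp
      obtain ⟨⟨hF, hS⟩, hgap⟩ := hp
      have : S = Evens (m - 1) := by
        apply Finset.Subset.antisymm
        · intro i hi
          have := hS hi
          rw [mem_EM] at this
          rw [mem_Evens]
          exact ⟨this.1, this.2.1, this.2.2.1⟩
        · intro i hi
          rw [mem_Evens] at hi
          exact gp_eq_zero_iff.1 hgap i hi.1 hi.2.1 hi.2.2
      show ((Polynomial.X : Polynomial ℚ) - 1) ^ S.card = _
      rw [this, card_Evens]
  rw [key, Finset.sum_const, fullCount_eq, nsmul_eq_mul, mul_comm]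

lemma fiber_even (m b : ℕ) (hb2 : 2 ≤ b) (hbe : Even b) (hbm : b ≤ m - 1) :
    ∑ p ∈ (PS k U m).filter (fun p => gp m p.2 = b),
        ((Polynomial.X : Polynomial ℚ) - 1) ^ p.2.card
      = (((k * m).choose (k * b) : Polynomial ℚ)) * (fullCount b k U : Polynomial ℚ) *
        ((Polynomial.X : Polynomial ℚ) - 1) ^ (b / 2 - 1) * Apoly k U (m - b) := by
  have hbm' : b + 1 ≤ m := by omega
  have hbe' : b % 2 = 0 := Nat.even_iff.1 hbe
  have key : ∑ p ∈ (PS k U m).filter (fun p => gp m p.2 = b),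
        ((Polynomial.X : Polynomial ℚ) - 1) ^ p.2.card
      = ∑ q ∈ ((Finset.Icc 1 (k * m)).powersetCard (k * b) ×ˢ FullSet k U b) ×ˢ PS k U (m - b),
          ((Polynomial.X : Polynomial ℚ) - 1) ^ (b / 2 - 1 + q.2.2.card) := by
    refine Finset.sum_nbij'
      (fun p => ((val1 k b p.1, leftF k b p.1),
        ⟨rightF k b m p.1, (p.2.filter (fun x => b < x)).image (fun x => x - b)⟩))
      (fun q => ⟨joinF k b m q.1.1 q.1.2 q.2.1,
        Evens (b - 1) ∪ q.2.2.image (fun x => x + b)⟩)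
      ?_ ?_ ?_ ?_ ?_
    · -- forward membership
      rintro ⟨F, S⟩ hp
      rw [Finset.mem_filter, mem_PS] at hp
      obtain ⟨⟨hFO, hS⟩, hgap⟩ := hp
      rw [mem_OddSet] at hFO
      have hF := hFO.1
      rw [gp_eq_iff (by omega)] at hgap
      obtain ⟨⟨_, _, _, hbS⟩, hmin⟩ := hgap
      rw [Finset.mem_product]
      refine ⟨?_, ?_⟩
      · rw [Finset.mem_product]
        refine ⟨?_, ?_⟩
        · rw [Finset.mem_powersetCard]
          exact ⟨val1_subset hF (by omega), val1_card hF (by omega)⟩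
        · rw [mem_FullSet]
          refine ⟨leftF_isFilling hF (by omega), fun i h1 h2 => ?_⟩
          obtain ⟨P, hPU, hPm⟩ : ∃ P ∈ U, MatchAt 2 k P F i := by
            rcases Nat.even_or_odd i with he | ho
            · have hiS : i ∈ S := hmin i he h1 (by omega)
              have := hS hiS
              rw [mem_EM] at this
              exact this.2.2.2
            · exact hFO.2 i ho (by omega)
          exact ⟨P, hPU, (leftF_matchAt hF (by omega) h1 (by omega) P).2 hPm⟩
      · rw [mem_PS]
        refine ⟨?_, ?_⟩
        · rw [mem_OddSet]
          refine ⟨rightF_isFilling hF (by omega), fun i ho hi => ?_⟩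
          have hodd : Odd (i + b) := by
            rw [Nat.odd_iff] at ho ⊢
            omega
          obtain ⟨P, hPU, hPm⟩ := hFO.2 (i + b) hodd (by omega)
          exact ⟨P, hPU, (rightF_matchAt hF (by omega) ho.pos (by omega) P).2 hPm⟩
        · intro x hx
          obtain ⟨i, hy, rfl⟩ := Finset.mem_image.1 hx
          obtain ⟨hiS, hbi⟩ := Finset.mem_filter.1 hy
          have hiEM := hS hiS
          rw [mem_EM] at hiEM
          obtain ⟨hie, hi1, him, P, hPU, hPm⟩ := hiEM
          have hie' := Nat.even_iff.1 hie
          rw [mem_EM]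
          refine ⟨by rw [Nat.even_iff]; omega, by omega, by omega, P, hPU, ?_⟩
          have := rightF_matchAt hF (by omega) (show 1 ≤ i - b by omega)
            (show (i - b) + 1 ≤ m - b by omega) P
          rw [show i - b + b = i by omega] at this
          exact this.2 hPm
    · -- backward membership
      rintro ⟨⟨T, G⟩, H, S'⟩ hq
      rw [Finset.mem_product] at hq
      obtain ⟨hq1, hq2⟩ := hq
      rw [Finset.mem_product] at hq1
      obtain ⟨hT, hG⟩ := hq1
      rw [Finset.mem_powersetCard] at hT
      rw [mem_FullSet] at hG
      rw [mem_PS] at hq2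
      obtain ⟨hH, hS'⟩ := hq2
      rw [mem_OddSet] at hH
      rw [Finset.mem_filter, mem_PS]
      refine ⟨⟨?_, ?_⟩, ?_⟩
      · rw [mem_OddSet]
        refine ⟨joinF_isFilling (by omega) hT.1 hT.2 hG.1 hH.1, fun i ho hi => ?_⟩
        have ho' := Nat.odd_iff.1 ho
        by_cases hib : i < b
        · obtain ⟨P, hPU, hPm⟩ := hG.2 i ho.pos (by omega)
          exact ⟨P, hPU,
            (joinF_matchAt_left (hTc := hT.2) (hG := hG.1) ho.pos (by omega) P).2 hPm⟩
        · have hbi : b < i := by omega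
          obtain ⟨P, hPU, hPm⟩ := hH.2 (i - b) (by rw [Nat.odd_iff]; omega) (by omega)
          refine ⟨P, hPU, ?_⟩
          have := joinF_matchAt_right (hbn := by omega) (hT := hT.1) (hTc := hT.2)
            (hG := hG.1) (hH := hH.1) (show 1 ≤ i - b by omega)
            (show (i - b) + 1 ≤ m - b by omega) P
          rw [show i - b + b = i by omega] at this
          exact this.2 hPm
      · intro x hx
        rcases Finset.mem_union.1 hx with h | h
        · rw [mem_Evens] at h
          obtain ⟨hxe, hx1, hxb⟩ := h
          obtain ⟨P, hPU, hPm⟩ := hG.2 x hx1 (by omega)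
          rw [mem_EM]
          exact ⟨hxe, hx1, by omega, P, hPU,
            (joinF_matchAt_left (hTc := hT.2) (hG := hG.1) hx1 (by omega) P).2 hPm⟩
        · obtain ⟨i, hiS', rfl⟩ := Finset.mem_image.1 h
          have := hS' hiS'
          rw [mem_EM] at this
          obtain ⟨hie, hi1, him, P, hPU, hPm⟩ := this
          have hie' := Nat.even_iff.1 hie
          rw [mem_EM]
          refine ⟨by rw [Nat.even_iff]; omega, by omega, by omega, P, hPU, ?_⟩
          exact (joinF_matchAt_right (hbn := by omega) (hT := hT.1) (hTc := hT.2)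
            (hG := hG.1) (hH := hH.1) hi1 (by omega) P).2 hPm
      · show gp m (Evens (b - 1) ∪ S'.image (fun x => x + b)) = b
        rw [gp_eq_iff (by omega)]
        refine ⟨⟨hbe, by omega, by omega, ?_⟩, fun i hie h1 hlt => ?_⟩
        · intro hmem
          rcases Finset.mem_union.1 hmem with h | h
          · rw [mem_Evens] at h; omega
          · obtain ⟨i, hiS', he⟩ := Finset.mem_image.1 h
            have := hS' hiS'
            rw [mem_EM] at this
            omega
        · exact Finset.mem_union.2 (Or.inl (mem_Evens.2 ⟨hie, h1, by omega⟩))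
    · -- left inverse
      rintro ⟨F, S⟩ hp
      rw [Finset.mem_filter, mem_PS] at hp
      obtain ⟨⟨hFO, hS⟩, hgap⟩ := hp
      rw [mem_OddSet] at hFO
      rw [gp_eq_iff (by omega)] at hgap
      obtain ⟨⟨_, _, _, hbS⟩, hmin⟩ := hgap
      have h1 : joinF k b m (val1 k b F) (leftF k b F) (rightF k b m F) = F :=
        join_split hFO.1 (by omega)
      have h2 : Evens (b - 1) ∪
          ((S.filter (fun x => b < x)).image (fun x => x - b)).image (fun x => x + b) = S := by
        ext x
        constructor
        · intro hx
          rcases Finset.mem_union.1 hx with h | h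
          · rw [mem_Evens] at h
            exact hmin x h.1 h.2.1 (by omega)
          · obtain ⟨a, ha, rfl⟩ := Finset.mem_image.1 h
            obtain ⟨y, hy, rfl⟩ := Finset.mem_image.1 ha
            obtain ⟨hyS, hby⟩ := Finset.mem_filter.1 hy
            rw [show y - b + b = y by omega]
            exact hyS
        · intro hxS
          have hxEM := hS hxS
          rw [mem_EM] at hxEM
          have hxb : x ≠ b := fun h => hbS (h ▸ hxS)
          by_cases hlt : x < b
          · exact Finset.mem_union.2 (Or.inl (mem_Evens.2 ⟨hxEM.1, hxEM.2.1, by omega⟩))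
          · refine Finset.mem_union.2 (Or.inr (Finset.mem_image.2 ⟨x - b,
              Finset.mem_image.2 ⟨x, Finset.mem_filter.2 ⟨hxS, by omega⟩, rfl⟩, by omega⟩))
      show (⟨joinF k b m (val1 k b F) (leftF k b F) (rightF k b m F), Evens (b - 1) ∪
          ((S.filter (fun x => b < x)).image (fun x => x - b)).image (fun x => x + b)⟩ :
          (_ : ℕ → ℕ → ℕ) × Finset ℕ) = ⟨F, S⟩
      rw [h1, h2]
    · -- right inverse
      rintro ⟨⟨T, G⟩, H, S'⟩ hq
      rw [Finset.mem_product] at hq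
      obtain ⟨hq1, hq2⟩ := hq
      rw [Finset.mem_product] at hq1
      obtain ⟨hT, hG⟩ := hq1
      rw [Finset.mem_powersetCard] at hT
      rw [mem_FullSet] at hG
      rw [mem_PS] at hq2
      obtain ⟨hH, hS'⟩ := hq2
      rw [mem_OddSet] at hH
      have e1 : val1 k b (joinF k b m T G H) = T := val1_join (hTc := hT.2) (hG := hG.1)
      have e2 : leftF k b (joinF k b m T G H) = G := left_join (hTc := hT.2) (hG := hG.1)
      have e3 : rightF k b m (joinF k b m T G H) = H :=
        right_join (by omega) hT.1 hT.2 hG.1 hH.1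
      have e4 : (((Evens (b - 1) ∪ S'.image (fun x => x + b)).filter
          (fun x => b < x)).image (fun x => x - b)) = S' := by
        ext x
        constructor
        · intro hx
          obtain ⟨y, hy, rfl⟩ := Finset.mem_image.1 hx
          obtain ⟨hyU, hby⟩ := Finset.mem_filter.1 hy
          rcases Finset.mem_union.1 hyU with h | h
          · rw [mem_Evens] at h; omega
          · obtain ⟨z, hz, rfl⟩ := Finset.mem_image.1 h
            rw [Nat.add_sub_cancel]
            exact hz
        · intro hx
          have hx1 : 1 ≤ x := by
            have := hS' hx
            rw [mem_EM] at this
            omega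
          exact Finset.mem_image.2 ⟨x + b, Finset.mem_filter.2
            ⟨Finset.mem_union.2 (Or.inr (Finset.mem_image.2 ⟨x, hx, rfl⟩)), by omega⟩,
            by omega⟩
      show (((val1 k b (joinF k b m T G H), leftF k b (joinF k b m T G H)),
          ⟨rightF k b m (joinF k b m T G H),
            ((Evens (b - 1) ∪ S'.image (fun x => x + b)).filter
              (fun x => b < x)).image (fun x => x - b)⟩) :
          (Finset ℕ × (ℕ → ℕ → ℕ)) × ((_ : ℕ → ℕ → ℕ) × Finset ℕ)) = ((T, G), ⟨H, S'⟩)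
      rw [e1, e2, e3, e4]
    · -- weights
      rintro ⟨F, S⟩ hp
      rw [Finset.mem_filter, mem_PS] at hp
      obtain ⟨⟨hFO, hS⟩, hgap⟩ := hp
      rw [gp_eq_iff (by omega)] at hgap
      obtain ⟨⟨_, _, _, hbS⟩, hmin⟩ := hgap
      have hinj : Set.InjOn (fun x => x - b) (S.filter (fun x => b < x)) := by
        intro x hx y hy hxy
        rw [Finset.coe_filter] at hx hy
        simp only [Set.mem_setOf_eq] at hx hy
        have hxy' : x - b = y - b := hxy
        omega
      have hcard : S.card = b / 2 - 1 + ((S.filter (fun x => b < x)).image (fun x => x - b)).card := by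
        rw [Finset.card_image_of_injOn hinj]
        have hsplit := Finset.card_filter_add_card_filter_not
          (s := S) (p := fun x => b < x)
        have hneg : S.filter (fun x => ¬ b < x) = Evens (b - 1) := by
          ext x
          rw [Finset.mem_filter, mem_Evens]
          constructor
          · rintro ⟨hxS, hxb⟩
            have := hS hxS
            rw [mem_EM] at this
            have hxneb : x ≠ b := fun h => hbS (h ▸ hxS)
            exact ⟨this.1, this.2.1, by omega⟩
          · rintro ⟨hxe, hx1, hxb⟩
            exact ⟨hmin x hxe hx1 (by omega), by omega⟩
        rw [hneg, card_Evens] at hsplit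
        omega
      show ((Polynomial.X : Polynomial ℚ) - 1) ^ S.card = _
      rw [hcard]
  rw [key, Finset.sum_product]
  have hconst : ∀ x ∈ (Finset.Icc 1 (k * m)).powersetCard (k * b) ×ˢ FullSet k U b,
      ∑ y ∈ PS k U (m - b), ((Polynomial.X : Polynomial ℚ) - 1) ^ (b / 2 - 1 + y.2.card)
      = ((Polynomial.X : Polynomial ℚ) - 1) ^ (b / 2 - 1) * Apoly k U (m - b) := by
    intro x _
    rw [← expansionA, Finset.mul_sum]
    exact Finset.sum_congr rfl fun y hy => by rw [pow_add]
  rw [Finset.sum_congr rfl hconst, Finset.sum_const, Finset.card_product,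
    Finset.card_powersetCard, Nat.card_Icc, fullCount_eq, nsmul_eq_mul]
  push_cast
  ring
lemma keyA (m : ℕ) :
    Apoly k U m = ((Polynomial.X : Polynomial ℚ) - 1) ^ ((m - 1) / 2) *
        (fullCount m k U : Polynomial ℚ)
      + ∑ b ∈ Evens (m - 1),
          (((k * m).choose (k * b) : Polynomial ℚ) * (fullCount b k U : Polynomial ℚ) *
            ((Polynomial.X : Polynomial ℚ) - 1) ^ (b / 2 - 1) * Apoly k U (m - b)) := by
  rw [← expansionA]
  have hmaps : ∀ p ∈ PS k U m, gp m p.2 ∈ insert 0 (Evens (m - 1)) := by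
    intro p hp
    rcases eq_or_ne (gp m p.2) 0 with h | h
    · simp [h]
    · have hx := (gp_eq_iff h).1 rfl
      rw [Finset.mem_insert, mem_Evens]
      exact Or.inr ⟨hx.1.1, hx.1.2.1, hx.1.2.2.1⟩
  rw [← Finset.sum_fiberwise_of_maps_to hmaps
    (fun p => ((Polynomial.X : Polynomial ℚ) - 1) ^ p.2.card)]
  rw [Finset.sum_insert (by simp [mem_Evens])]
  rw [fiber_zero]
  congr 1
  refine Finset.sum_congr rfl fun b hb => ?_
  rw [mem_Evens] at hb
  have hb' := Nat.even_iff.1 hb.1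
  exact fiber_even k U m b (by omega) hb.1 hb.2.2

lemma finsum_eq (n : ℕ) :
    (∑ᶠ F ∈ {F : ℕ → ℕ → ℕ | OddFull n k U F},
      (Polynomial.X : Polynomial ℚ) ^ mch2Count n k U F) = Apoly k U n := by
  have h : {F : ℕ → ℕ → ℕ | OddFull n k U F} = ↑(OddSet k U n) := by
    ext F; simp [mem_OddSet]
  rw [h, finsum_mem_coe_finset, Apoly]
  exact Finset.sum_congr rfl fun F _ => by rw [mch2Count_eq]

lemma coeff_identity (m : ℕ) (hm : m % 2 = 1) :
    Polynomial.C (((k * m).factorial : ℚ))⁻¹ * Apoly k U m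
      + ∑ c ∈ Evens (m - 1),
        (Polynomial.C (((k * (m - c)).factorial : ℚ))⁻¹ * Apoly k U (m - c) *
          (-((Polynomial.X - 1) ^ (c / 2 - 1) *
            Polynomial.C ((fullCount c k U : ℚ) / ((k * c).factorial : ℚ)))))
      = (Polynomial.X - 1) ^ ((m - 1) / 2) *
          Polynomial.C ((fullCount m k U : ℚ) / ((k * m).factorial : ℚ)) := by
  rw [keyA k U m, mul_add, Finset.mul_sum, add_assoc, ← Finset.sum_add_distrib]
  have hzero : ∀ c ∈ Evens (m - 1),
      (Polynomial.C (((k * m).factorial : ℚ))⁻¹ *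
        (((k * m).choose (k * c) : Polynomial ℚ) * (fullCount c k U : Polynomial ℚ) *
          ((Polynomial.X : Polynomial ℚ) - 1) ^ (c / 2 - 1) * Apoly k U (m - c))
      + Polynomial.C (((k * (m - c)).factorial : ℚ))⁻¹ * Apoly k U (m - c) *
          (-((Polynomial.X - 1) ^ (c / 2 - 1) *
            Polynomial.C ((fullCount c k U : ℚ) / ((k * c).factorial : ℚ))))) = 0 := by
    intro c hc
    rw [mem_Evens] at hc
    have hc' := Nat.even_iff.1 hc.1
    have hcm : c ≤ m := by omega
    have hkc : k * c ≤ k * m := Nat.mul_le_mul_left k hcm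
    have hsub : k * m - k * c = k * (m - c) := by
      have : k * (m - c) + k * c = k * m := by
        rw [← Nat.mul_add]; congr 1; omega
      omega
    have hchoose : (((k * m).choose (k * c) : ℚ)) =
        ((k * m).factorial : ℚ) / (((k * c).factorial : ℚ) * ((k * (m - c)).factorial : ℚ)) := by
      rw [Nat.cast_choose ℚ hkc, hsub]
    have hne1 : ((k * m).factorial : ℚ) ≠ 0 := Nat.cast_ne_zero.2 (Nat.factorial_ne_zero _)
    have hne2 : ((k * c).factorial : ℚ) ≠ 0 := Nat.cast_ne_zero.2 (Nat.factorial_ne_zero _)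
    have hne3 : ((k * (m - c)).factorial : ℚ) ≠ 0 := Nat.cast_ne_zero.2 (Nat.factorial_ne_zero _)
    have hx : (((k * m).factorial : ℚ))⁻¹ * (((k * m).choose (k * c) : ℚ)) * (fullCount c k U : ℚ)
        = (((k * (m - c)).factorial : ℚ))⁻¹ *
          ((fullCount c k U : ℚ) / ((k * c).factorial : ℚ)) := by
      rw [hchoose]
      field_simp
    have hxC : Polynomial.C ((((k * m).factorial : ℚ))⁻¹) *
          Polynomial.C (((k * m).choose (k * c) : ℚ)) * Polynomial.C ((fullCount c k U : ℚ))
        = Polynomial.C ((((k * (m - c)).factorial : ℚ))⁻¹) *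
          Polynomial.C ((fullCount c k U : ℚ) / ((k * c).factorial : ℚ)) := by
      rw [← map_mul, ← map_mul, ← map_mul, hx]
    have e1 : (((k * m).choose (k * c) : Polynomial ℚ)) =
        Polynomial.C (((k * m).choose (k * c) : ℚ)) := by rw [map_natCast]
    have e2 : ((fullCount c k U : Polynomial ℚ)) =
        Polynomial.C ((fullCount c k U : ℚ)) := by rw [map_natCast]
    rw [e1, e2]
    linear_combination (((Polynomial.X : Polynomial ℚ) - 1) ^ (c / 2 - 1) *
      Apoly k U (m - c)) * hxC
  rw [Finset.sum_congr rfl hzero, Finset.sum_const_zero, add_zero]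
  rw [div_eq_mul_inv, map_mul, map_natCast]
  ring

end Heart
end Stmt9

open Stmt9 in
/-- Theorem: `(Σ_{n≥1} (t^{2n-1}/(k(2n-1))!) Σ_{F ∈ F^{(2),Υ}_{2n-1,k}} x^{Υ-mch^{(2)}(F)}) ·
(1 - Σ_{n≥1} (x-1)^{n-1} t^{2n} full_{2n}^Υ/(2kn)!)
  = Σ_{n≥1} (x-1)^{n-1} t^{2n-1} full_{2n-1}^Υ/(k(2n-1))!` as formal power series in `t`
over `ℚ[x]` (odd coefficients are indexed by `m = 2n - 1`, even ones by `m = 2n`). -/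
theorem stmt9 (k : ℕ) (hk : 1 ≤ k) (U : Set (ℕ → ℕ → ℕ))
    (hU : ∀ P ∈ U, IsFilling 2 k P) :
    (PowerSeries.mk fun m => if m % 2 = 1 then
        Polynomial.C (((k * m).factorial : ℚ))⁻¹ *
          ∑ᶠ F ∈ {F : ℕ → ℕ → ℕ | OddFull m k U F},
            (Polynomial.X : Polynomial ℚ) ^ mch2Count m k U F
      else 0) *
    (PowerSeries.mk fun m => if m = 0 then (1 : Polynomial ℚ) else
        if m % 2 = 0 then
          -((Polynomial.X - 1) ^ (m / 2 - 1) *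
            Polynomial.C ((fullCount m k U : ℚ) / ((k * m).factorial : ℚ)))
        else 0) =
    PowerSeries.mk fun m => if m % 2 = 1 then
        (Polynomial.X - 1) ^ ((m - 1) / 2) *
          Polynomial.C ((fullCount m k U : ℚ) / ((k * m).factorial : ℚ))
      else 0 := by
  apply PowerSeries.ext
  intro m
  rw [PowerSeries.coeff_mul]
  simp only [PowerSeries.coeff_mk]
  by_cases hm : m % 2 = 1
  · rw [if_pos hm]
    rw [← Finset.HasAntidiagonal.map_swap_antidiagonal, Finset.sum_map,
      Finset.Nat.sum_antidiagonal_eq_sum_range_succ_mk]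
    simp only [Function.Embedding.coeFn_mk, Prod.swap_prod_mk]
    have h0 : (0 : ℕ) ∉ Evens (m - 1) := by simp [mem_Evens]
    have hsub : insert 0 (Evens (m - 1)) ⊆ Finset.range (m + 1) := by
      intro x hx
      rcases Finset.mem_insert.1 hx with rfl | hx
      · simp
      · rw [mem_Evens] at hx
        rw [Finset.mem_range]
        omega
    rw [← Finset.sum_subset hsub (fun c hc hnc => ?_)]
    swap
    · rw [Finset.mem_range] at hc
      rw [Finset.mem_insert, mem_Evens] at hnc
      push_neg at hnc
      have hc0 : c ≠ 0 := hnc.1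
      have hodd : ¬ c % 2 = 0 := by
        intro heven
        have h2 := hnc.2 (Nat.even_iff.2 heven) (by omega)
        omega
      rw [if_neg hc0, if_neg hodd, mul_zero]
    rw [Finset.sum_insert h0]
    have hterm0 : ((if (m - 0) % 2 = 1 then
        Polynomial.C (((k * (m - 0)).factorial : ℚ))⁻¹ *
          ∑ᶠ F ∈ {F : ℕ → ℕ → ℕ | OddFull (m - 0) k U F},
            (Polynomial.X : Polynomial ℚ) ^ mch2Count (m - 0) k U F
      else 0) * (if (0 : ℕ) = 0 then (1 : Polynomial ℚ) else
        if (0 : ℕ) % 2 = 0 then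
          -((Polynomial.X - 1) ^ (0 / 2 - 1) *
            Polynomial.C ((fullCount 0 k U : ℚ) / ((k * 0).factorial : ℚ)))
        else 0))
        = Polynomial.C (((k * m).factorial : ℚ))⁻¹ * Apoly k U m := by
      rw [Nat.sub_zero, if_pos hm, if_pos rfl, mul_one, finsum_eq]
    rw [hterm0]
    have hterms : ∀ c ∈ Evens (m - 1), ((if (m - c) % 2 = 1 then
        Polynomial.C (((k * (m - c)).factorial : ℚ))⁻¹ *
          ∑ᶠ F ∈ {F : ℕ → ℕ → ℕ | OddFull (m - c) k U F},
            (Polynomial.X : Polynomial ℚ) ^ mch2Count (m - c) k U F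
      else 0) * (if c = 0 then (1 : Polynomial ℚ) else
        if c % 2 = 0 then
          -((Polynomial.X - 1) ^ (c / 2 - 1) *
            Polynomial.C ((fullCount c k U : ℚ) / ((k * c).factorial : ℚ)))
        else 0))
        = Polynomial.C (((k * (m - c)).factorial : ℚ))⁻¹ * Apoly k U (m - c) *
          (-((Polynomial.X - 1) ^ (c / 2 - 1) *
            Polynomial.C ((fullCount c k U : ℚ) / ((k * c).factorial : ℚ)))) := by
      intro c hc
      rw [mem_Evens] at hc
      have hc' := Nat.even_iff.1 hc.1
      rw [if_pos (by omega), if_neg (by omega), if_pos hc', finsum_eq]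
    rw [Finset.sum_congr rfl hterms]
    exact coeff_identity k U m hm
  · rw [if_neg hm]
    refine Finset.sum_eq_zero fun p hp => ?_
    rw [Finset.HasAntidiagonal.mem_antidiagonal] at hp
    by_cases h1 : p.1 % 2 = 1
    · have h2 : p.2 ≠ 0 := by omega
      have h3 : ¬ p.2 % 2 = 0 := by omega
      rw [if_pos h1, if_neg h2, if_neg h3, mul_zero]
    · rw [if_neg h1, zero_mul]
end

section
/- Let k ≥ 1 and let Υ ⊆ F_{2,k}. Then the following identity of formal power series in t over ℚ holds: (1 + Σ_{n≥1} Alt_{2n}^Υ t^{2n}/(2kn)!) · (1 + Σ_{n≥1} (−1)^n t^{2n} full_{2n}^Υ/(2kn)!) = 1. -/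
/-- `Alt_n^Υ`: the number of `Υ`-alternating fillings `F ∈ F_{n,k}`, i.e. those with
`Υ`-matches starting at every odd position `i ≤ n-1` and at no even position
`1 ≤ i ≤ n-1`. -/
noncomputable def altCount (n k : ℕ) (U : Set (ℕ → ℕ → ℕ)) : ℕ :=
  Nat.card {F : ℕ → ℕ → ℕ // IsFilling n k F ∧
    (∀ i, Odd i → i ≤ n - 1 → ∃ P ∈ U, MatchAt 2 k P F i) ∧
    (∀ i, Even i → 1 ≤ i → i ≤ n - 1 → ¬ ∃ P ∈ U, MatchAt 2 k P F i)}

noncomputable def nth (S : Finset ℕ) (v : ℕ) : ℕ :=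
  if h : v - 1 < S.card then ((S.orderIsoOfFin rfl) ⟨v-1, h⟩ : ℕ) else 0

noncomputable def rk (S : Finset ℕ) (x : ℕ) : ℕ :=
  if h : x ∈ S then ((S.orderIsoOfFin rfl).symm ⟨x, h⟩ : Fin _).val + 1 else 0

lemma rk_ge {S : Finset ℕ} {x : ℕ} (h : x ∈ S) : 1 ≤ rk S x := by
  simp [rk, h]

lemma rk_le {S : Finset ℕ} {x : ℕ} (h : x ∈ S) : rk S x ≤ S.card := by
  simp only [rk, dif_pos h]
  exact ((S.orderIsoOfFin rfl).symm ⟨x, h⟩).isLt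

lemma nth_rk {S : Finset ℕ} {x : ℕ} (h : x ∈ S) : nth S (rk S x) = x := by
  simp only [rk, dif_pos h, nth, Nat.add_sub_cancel]
  have hlt : (((S.orderIsoOfFin rfl).symm ⟨x, h⟩ : Fin _)).val < S.card :=
    ((S.orderIsoOfFin rfl).symm ⟨x, h⟩).isLt
  rw [dif_pos hlt]
  have : ((S.orderIsoOfFin rfl) ⟨((S.orderIsoOfFin rfl).symm ⟨x, h⟩ : Fin _).val, hlt⟩) = ⟨x, h⟩ := by
    rw [show (⟨((S.orderIsoOfFin rfl).symm ⟨x, h⟩ : Fin _).val, hlt⟩ : Fin S.card)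
        = (S.orderIsoOfFin rfl).symm ⟨x, h⟩ from rfl]
    exact (S.orderIsoOfFin rfl).apply_symm_apply _
  rw [this]

lemma nth_mem {S : Finset ℕ} {v : ℕ} (h1 : 1 ≤ v) (h2 : v ≤ S.card) : nth S v ∈ S := by
  have h : v - 1 < S.card := by omega
  simp only [nth, dif_pos h]
  exact ((S.orderIsoOfFin rfl) ⟨v-1, h⟩).2

lemma rk_nth {S : Finset ℕ} {v : ℕ} (h1 : 1 ≤ v) (h2 : v ≤ S.card) : rk S (nth S v) = v := by
  have h : v - 1 < S.card := by omega
  have hmem := nth_mem h1 h2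
  simp only [rk, dif_pos hmem]
  have : (⟨nth S v, hmem⟩ : {x // x ∈ S}) = (S.orderIsoOfFin rfl) ⟨v-1, h⟩ := by
    simp only [nth, dif_pos h]
  rw [this, (S.orderIsoOfFin rfl).symm_apply_apply]
  simp only [Fin.val_mk]
  omega

lemma rk_lt_rk {S : Finset ℕ} {x y : ℕ} (hx : x ∈ S) (hy : y ∈ S) :
    rk S x < rk S y ↔ x < y := by
  simp only [rk, dif_pos hx, dif_pos hy, Nat.add_lt_add_iff_right]
  rw [← Fin.lt_def, (S.orderIsoOfFin rfl).symm.lt_iff_lt]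
  exact Iff.rfl

lemma nth_lt_nth {S : Finset ℕ} {v w : ℕ} (h1 : 1 ≤ v) (h2 : v ≤ S.card)
    (h3 : 1 ≤ w) (h4 : w ≤ S.card) : nth S v < nth S w ↔ v < w := by
  rw [← rk_lt_rk (nth_mem h1 h2) (nth_mem h3 h4), rk_nth h1 h2, rk_nth h3 h4]


lemma isFilling_zero {n k : ℕ} {F : ℕ → ℕ → ℕ} (h : IsFilling n k F) {i j : ℕ}
    (hij : ¬(1 ≤ i ∧ i ≤ k ∧ 1 ≤ j ∧ j ≤ n)) : F i j = 0 := by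
  by_contra hz
  exact hij (h.1 i j hz)

lemma isFilling_mem {n k : ℕ} {F : ℕ → ℕ → ℕ} (h : IsFilling n k F) {i j : ℕ}
    (h1 : 1 ≤ i) (h2 : i ≤ k) (h3 : 1 ≤ j) (h4 : j ≤ n) : F i j ∈ Set.Icc 1 (k*n) := by
  have hm : ((i, j) : ℕ × ℕ) ∈ Set.Icc 1 k ×ˢ Set.Icc 1 n :=
    Set.mem_prod.mpr ⟨Set.mem_Icc.mpr ⟨h1, h2⟩, Set.mem_Icc.mpr ⟨h3, h4⟩⟩
  exact h.2.1.mapsTo hm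

lemma isFilling_le {n k : ℕ} {F : ℕ → ℕ → ℕ} (h : IsFilling n k F) (i j : ℕ) :
    F i j ≤ k * n := by
  by_cases hz : F i j = 0
  · omega
  · obtain ⟨h1, h2, h3, h4⟩ := h.1 i j hz
    exact (isFilling_mem h h1 h2 h3 h4).2

lemma filling_finite (n k : ℕ) (Q : (ℕ → ℕ → ℕ) → Prop) :
    Finite {F : ℕ → ℕ → ℕ // IsFilling n k F ∧ Q F} := by
  apply Finite.of_injective (f := fun (F : {F : ℕ → ℕ → ℕ // IsFilling n k F ∧ Q F})
    (x : Fin (k+1) × Fin (n+1)) => (⟨F.1 x.1 x.2, by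
      have := isFilling_le F.2.1 x.1 x.2; omega⟩ : Fin (k*n+1)))
  intro F G hFG
  ext i j
  by_cases hij : 1 ≤ i ∧ i ≤ k ∧ 1 ≤ j ∧ j ≤ n
  · have hi : i < k + 1 := by omega
    have hj : j < n + 1 := by omega
    have := congrFun hFG (⟨i, hi⟩, ⟨j, hj⟩)
    simpa using congrArg Fin.val this
  · rw [isFilling_zero F.2.1 hij, isFilling_zero G.2.1 hij]

set_option linter.unusedSectionVars false
section Cut

variable (k : ℕ) (U : Set (ℕ → ℕ → ℕ))

/-- `Υ`-match at position `i`. -/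
def My (F : ℕ → ℕ → ℕ) (i : ℕ) : Prop := ∃ P ∈ U, MatchAt 2 k P F i

variable (p q : ℕ)

/-- values in the left `p` columns -/
def splitS (F : ℕ → ℕ → ℕ) : Finset ℕ :=
  (Finset.Icc 1 k ×ˢ Finset.Icc 1 p).image fun x : ℕ × ℕ => F x.1 x.2

def splitT (F : ℕ → ℕ → ℕ) : Finset ℕ := Finset.Icc 1 (k*(p+q)) \ splitS k p F

noncomputable def splitL (F : ℕ → ℕ → ℕ) : ℕ → ℕ → ℕ := fun i j =>
  if 1 ≤ i ∧ i ≤ k ∧ 1 ≤ j ∧ j ≤ p then rk (splitS k p F) (F i j) else 0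

noncomputable def splitR (F : ℕ → ℕ → ℕ) : ℕ → ℕ → ℕ := fun i j =>
  if 1 ≤ i ∧ i ≤ k ∧ 1 ≤ j ∧ j ≤ q then rk (splitT k p q F) (F i (p + j)) else 0

noncomputable def joinF (S : Finset ℕ) (L R : ℕ → ℕ → ℕ) : ℕ → ℕ → ℕ := fun i j =>
  if 1 ≤ i ∧ i ≤ k ∧ 1 ≤ j ∧ j ≤ p then nth S (L i j)
  else if 1 ≤ i ∧ i ≤ k ∧ p + 1 ≤ j ∧ j ≤ p + q then
    nth (Finset.Icc 1 (k*(p+q)) \ S) (R i (j - p)) else 0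

variable {k p q}
variable {F : ℕ → ℕ → ℕ} (hF : IsFilling (p+q) k F)

section SplitFacts
include hF

lemma splitS_subset : splitS k p F ⊆ Finset.Icc 1 (k*(p+q)) := by
  intro y hy
  obtain ⟨x, hx, rfl⟩ := Finset.mem_image.mp hy
  rw [Finset.mem_product, Finset.mem_Icc, Finset.mem_Icc] at hx
  have := isFilling_mem hF hx.1.1 hx.1.2 hx.2.1 (le_trans hx.2.2 (by omega))
  rw [Finset.mem_Icc]
  exact this

lemma splitS_card : (splitS k p F).card = k * p := by
  rw [splitS, Finset.card_image_of_injOn, Finset.card_product]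
  · simp [Nat.card_Icc]
  · have : (↑(Finset.Icc 1 k ×ˢ Finset.Icc 1 p) : Set (ℕ × ℕ)) ⊆
        Set.Icc 1 k ×ˢ Set.Icc 1 (p+q) := by
      intro x hx
      simp only [Finset.coe_product, Set.mem_prod, Finset.mem_coe, Finset.mem_Icc,
        Set.mem_Icc, Finset.coe_Icc] at hx ⊢
      exact ⟨hx.1, hx.2.1, by omega⟩
    exact hF.2.1.injOn.mono this

omit hF in
lemma mem_splitS_left {i j : ℕ} (h1 : 1 ≤ i) (h2 : i ≤ k) (h3 : 1 ≤ j) (h4 : j ≤ p) :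
    F i j ∈ splitS k p F := by
  apply Finset.mem_image.mpr
  exact ⟨(i, j), by simp [Finset.mem_product, Finset.mem_Icc, h1, h2, h3, h4], rfl⟩

lemma mem_splitT_right {i j : ℕ} (h1 : 1 ≤ i) (h2 : i ≤ k) (h3 : p + 1 ≤ j)
    (h4 : j ≤ p + q) : F i j ∈ splitT k p q F := by
  rw [splitT, Finset.mem_sdiff]
  constructor
  · rw [Finset.mem_Icc]
    exact isFilling_mem hF h1 h2 (by omega) h4
  · intro hmem
    obtain ⟨x, hx, hxy⟩ := Finset.mem_image.mp hmem
    rw [Finset.mem_product, Finset.mem_Icc, Finset.mem_Icc] at hx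
    have hxrect : (x : ℕ × ℕ) ∈ Set.Icc 1 k ×ˢ Set.Icc 1 (p+q) :=
      Set.mem_prod.mpr ⟨Set.mem_Icc.mpr ⟨hx.1.1, hx.1.2⟩,
        Set.mem_Icc.mpr ⟨hx.2.1, by omega⟩⟩
    have hijrect : ((i, j) : ℕ × ℕ) ∈ Set.Icc 1 k ×ˢ Set.Icc 1 (p+q) :=
      Set.mem_prod.mpr ⟨Set.mem_Icc.mpr ⟨h1, h2⟩, Set.mem_Icc.mpr ⟨by omega, h4⟩⟩
    have := hF.2.1.injOn hxrect hijrect hxy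
    have : x.2 = j := by rw [this]
    omega

lemma splitT_card : (splitT k p q F).card = k * q := by
  rw [splitT, Finset.card_sdiff_of_subset (splitS_subset hF), splitS_card hF, Nat.card_Icc]
  have : k * (p + q) = k * p + k * q := by ring
  omega

lemma splitT_surj {y : ℕ} (hy : y ∈ splitT k p q F) :
    ∃ i j, 1 ≤ i ∧ i ≤ k ∧ 1 ≤ j ∧ j ≤ q ∧ F i (p + j) = y := by
  rw [splitT, Finset.mem_sdiff, Finset.mem_Icc] at hy
  obtain ⟨x, hx, hxy⟩ := hF.2.1.surjOn (Set.mem_Icc.mpr hy.1)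
  rw [Set.mem_prod, Set.mem_Icc, Set.mem_Icc] at hx
  by_cases hp : x.2 ≤ p
  · exfalso
    apply hy.2
    rw [← hxy]
    exact mem_splitS_left hx.1.1 hx.1.2 hx.2.1 hp
  · refine ⟨x.1, x.2 - p, hx.1.1, hx.1.2, by omega, by omega, ?_⟩
    have : p + (x.2 - p) = x.2 := by omega
    rw [this]
    exact hxy

lemma splitL_filling : IsFilling p k (splitL k p F) := by
  refine ⟨?_, ⟨?_, ?_, ?_⟩, ?_⟩
  · intro i j hz
    by_contra hij
    exact hz (by simp only [splitL, if_neg hij])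
  · -- MapsTo
    rintro ⟨i, j⟩ hx
    rw [Set.mem_prod, Set.mem_Icc, Set.mem_Icc] at hx
    obtain ⟨⟨h1, h2⟩, h3, h4⟩ := hx
    have hmem := mem_splitS_left (F := F) h1 h2 h3 h4
    simp only [splitL, if_pos (⟨h1, h2, h3, h4⟩ : 1 ≤ i ∧ i ≤ k ∧ 1 ≤ j ∧ j ≤ p)]
    rw [Set.mem_Icc]
    exact ⟨rk_ge hmem, (rk_le hmem).trans (le_of_eq (splitS_card hF))⟩
  · -- InjOn
    rintro ⟨i, j⟩ hx ⟨a, b⟩ hy hxy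
    rw [Set.mem_prod, Set.mem_Icc, Set.mem_Icc] at hx hy
    obtain ⟨⟨h1, h2⟩, h3, h4⟩ := hx
    obtain ⟨⟨g1, g2⟩, g3, g4⟩ := hy
    simp only [splitL, if_pos (⟨h1, h2, h3, h4⟩ : 1 ≤ i ∧ i ≤ k ∧ 1 ≤ j ∧ j ≤ p),
      if_pos (⟨g1, g2, g3, g4⟩ : 1 ≤ a ∧ a ≤ k ∧ 1 ≤ b ∧ b ≤ p)] at hxy
    have hFeq : F i j = F a b := by
      have := congrArg (nth (splitS k p F)) hxy
      rwa [nth_rk (mem_splitS_left h1 h2 h3 h4), nth_rk (mem_splitS_left g1 g2 g3 g4)] at this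
    refine hF.2.1.injOn ?_ ?_ hFeq
    · exact Set.mem_prod.mpr ⟨Set.mem_Icc.mpr ⟨h1, h2⟩, Set.mem_Icc.mpr ⟨h3, by omega⟩⟩
    · exact Set.mem_prod.mpr ⟨Set.mem_Icc.mpr ⟨g1, g2⟩, Set.mem_Icc.mpr ⟨g3, by omega⟩⟩
  · -- SurjOn
    intro v hv
    rw [Set.mem_Icc] at hv
    have hv2 : v ≤ (splitS k p F).card := by rw [splitS_card hF]; exact hv.2
    have hmem : nth (splitS k p F) v ∈ splitS k p F := nth_mem hv.1 hv2
    obtain ⟨x, hx, hxy⟩ := Finset.mem_image.mp hmem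
    rw [Finset.mem_product, Finset.mem_Icc, Finset.mem_Icc] at hx
    refine ⟨x, Set.mem_prod.mpr ⟨Set.mem_Icc.mpr ⟨hx.1.1, hx.1.2⟩,
      Set.mem_Icc.mpr ⟨hx.2.1, hx.2.2⟩⟩, ?_⟩
    show splitL k p F x.1 x.2 = v
    simp only [splitL, if_pos (⟨hx.1.1, hx.1.2, hx.2.1, hx.2.2⟩ :
      1 ≤ x.1 ∧ x.1 ≤ k ∧ 1 ≤ x.2 ∧ x.2 ≤ p)]
    rw [hxy, rk_nth hv.1 hv2]
  · -- columns increase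
    intro i j h1 h2 h3 h4
    simp only [splitL, if_pos (⟨h1, by omega, h3, h4⟩ : 1 ≤ i ∧ i ≤ k ∧ 1 ≤ j ∧ j ≤ p),
      if_pos (⟨by omega, by omega, h3, h4⟩ : 1 ≤ i+1 ∧ i+1 ≤ k ∧ 1 ≤ j ∧ j ≤ p)]
    rw [rk_lt_rk (mem_splitS_left h1 (by omega) h3 h4)
      (mem_splitS_left (by omega) (by omega) h3 h4)]
    exact hF.2.2 i j h1 (by omega) h3 (by omega)

lemma splitR_filling : IsFilling q k (splitR k p q F) := by
  refine ⟨?_, ⟨?_, ?_, ?_⟩, ?_⟩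
  · intro i j hz
    by_contra hij
    exact hz (by simp only [splitR, if_neg hij])
  · rintro ⟨i, j⟩ hx
    rw [Set.mem_prod, Set.mem_Icc, Set.mem_Icc] at hx
    obtain ⟨⟨h1, h2⟩, h3, h4⟩ := hx
    have hmem := mem_splitT_right hF h1 h2 (by omega : p + 1 ≤ p + j) (by omega)
    simp only [splitR, if_pos (⟨h1, h2, h3, h4⟩ : 1 ≤ i ∧ i ≤ k ∧ 1 ≤ j ∧ j ≤ q)]
    rw [Set.mem_Icc]
    exact ⟨rk_ge hmem, (rk_le hmem).trans (le_of_eq (splitT_card hF))⟩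
  · rintro ⟨i, j⟩ hx ⟨a, b⟩ hy hxy
    rw [Set.mem_prod, Set.mem_Icc, Set.mem_Icc] at hx hy
    obtain ⟨⟨h1, h2⟩, h3, h4⟩ := hx
    obtain ⟨⟨g1, g2⟩, g3, g4⟩ := hy
    simp only [splitR, if_pos (⟨h1, h2, h3, h4⟩ : 1 ≤ i ∧ i ≤ k ∧ 1 ≤ j ∧ j ≤ q),
      if_pos (⟨g1, g2, g3, g4⟩ : 1 ≤ a ∧ a ≤ k ∧ 1 ≤ b ∧ b ≤ q)] at hxy
    have hFeq : F i (p + j) = F a (p + b) := by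
      have := congrArg (nth (splitT k p q F)) hxy
      rwa [nth_rk (mem_splitT_right hF h1 h2 (by omega) (by omega)),
        nth_rk (mem_splitT_right hF g1 g2 (by omega) (by omega))] at this
    have := hF.2.1.injOn
      (Set.mem_prod.mpr ⟨Set.mem_Icc.mpr ⟨h1, h2⟩, Set.mem_Icc.mpr ⟨by omega, by omega⟩⟩ :
        ((i, p+j) : ℕ × ℕ) ∈ _)
      (Set.mem_prod.mpr ⟨Set.mem_Icc.mpr ⟨g1, g2⟩, Set.mem_Icc.mpr ⟨by omega, by omega⟩⟩ :
        ((a, p+b) : ℕ × ℕ) ∈ _) hFeq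
    have h5 : i = a := congrArg Prod.fst this
    have h6 : p + j = p + b := congrArg Prod.snd this
    exact Prod.ext h5 (by omega)
  · intro v hv
    rw [Set.mem_Icc] at hv
    have hv2 : v ≤ (splitT k p q F).card := by rw [splitT_card hF]; exact hv.2
    have hmem : nth (splitT k p q F) v ∈ splitT k p q F := nth_mem hv.1 hv2
    obtain ⟨i, j, h1, h2, h3, h4, hxy⟩ := splitT_surj hF hmem
    refine ⟨(i, j), Set.mem_prod.mpr ⟨Set.mem_Icc.mpr ⟨h1, h2⟩,
      Set.mem_Icc.mpr ⟨h3, h4⟩⟩, ?_⟩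
    show splitR k p q F i j = v
    simp only [splitR, if_pos (⟨h1, h2, h3, h4⟩ : 1 ≤ i ∧ i ≤ k ∧ 1 ≤ j ∧ j ≤ q)]
    rw [hxy, rk_nth hv.1 hv2]
  · intro i j h1 h2 h3 h4
    simp only [splitR, if_pos (⟨h1, by omega, h3, h4⟩ : 1 ≤ i ∧ i ≤ k ∧ 1 ≤ j ∧ j ≤ q),
      if_pos (⟨by omega, by omega, h3, h4⟩ : 1 ≤ i+1 ∧ i+1 ≤ k ∧ 1 ≤ j ∧ j ≤ q)]
    rw [rk_lt_rk (mem_splitT_right hF h1 (by omega) (by omega) (by omega))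
      (mem_splitT_right hF (by omega) (by omega) (by omega) (by omega))]
    exact hF.2.2 i (p+j) h1 (by omega) (by omega) (by omega)

end SplitFacts

section JoinFacts

variable {S : Finset ℕ} {L R : ℕ → ℕ → ℕ}
  (hS : S ⊆ Finset.Icc 1 (k*(p+q))) (hScard : S.card = k * p)
  (hL : IsFilling p k L) (hR : IsFilling q k R)

include hS hScard

lemma Tcard : (Finset.Icc 1 (k*(p+q)) \ S).card = k * q := by
  rw [Finset.card_sdiff_of_subset hS, hScard, Nat.card_Icc]
  have : k * (p + q) = k * p + k * q := by ring
  omega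

include hL hR

lemma join_left {i j : ℕ} (h1 : 1 ≤ i) (h2 : i ≤ k) (h3 : 1 ≤ j) (h4 : j ≤ p) :
    joinF k p q S L R i j = nth S (L i j) ∧ nth S (L i j) ∈ S := by
  have hmem := isFilling_mem hL h1 h2 h3 h4
  rw [Set.mem_Icc] at hmem
  constructor
  · simp only [joinF, if_pos (⟨h1, h2, h3, h4⟩ : 1 ≤ i ∧ i ≤ k ∧ 1 ≤ j ∧ j ≤ p)]
  · exact nth_mem hmem.1 (by omega)

lemma join_right {i j : ℕ} (h1 : 1 ≤ i) (h2 : i ≤ k) (h3 : p + 1 ≤ j) (h4 : j ≤ p + q) :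
    joinF k p q S L R i j = nth (Finset.Icc 1 (k*(p+q)) \ S) (R i (j - p)) ∧
      nth (Finset.Icc 1 (k*(p+q)) \ S) (R i (j - p)) ∈ Finset.Icc 1 (k*(p+q)) \ S := by
  have hmem := isFilling_mem hR h1 h2 (by omega : 1 ≤ j - p) (by omega : j - p ≤ q)
  rw [Set.mem_Icc] at hmem
  constructor
  · have hnot : ¬(1 ≤ i ∧ i ≤ k ∧ 1 ≤ j ∧ j ≤ p) := by omega
    simp only [joinF, if_neg hnot,
      if_pos (⟨h1, h2, h3, h4⟩ : 1 ≤ i ∧ i ≤ k ∧ p + 1 ≤ j ∧ j ≤ p + q)]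
  · exact nth_mem hmem.1 (by rw [Tcard hS hScard]; exact hmem.2)

lemma join_filling : IsFilling (p+q) k (joinF k p q S L R) := by
  have hT := Tcard hS hScard
  refine ⟨?_, ⟨?_, ?_, ?_⟩, ?_⟩
  · intro i j hz
    by_contra hij
    apply hz
    have hn1 : ¬(1 ≤ i ∧ i ≤ k ∧ 1 ≤ j ∧ j ≤ p) := by omega
    have hn2 : ¬(1 ≤ i ∧ i ≤ k ∧ p + 1 ≤ j ∧ j ≤ p + q) := by omega
    simp only [joinF, if_neg hn1, if_neg hn2]
  · -- MapsTo
    rintro ⟨i, j⟩ hx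
    rw [Set.mem_prod, Set.mem_Icc, Set.mem_Icc] at hx
    obtain ⟨⟨h1, h2⟩, h3, h4⟩ := hx
    by_cases hp : j ≤ p
    · obtain ⟨he, hm⟩ := join_left hS hScard hL hR h1 h2 h3 hp
      show joinF k p q S L R i j ∈ Set.Icc 1 (k*(p+q))
      rw [he, Set.mem_Icc, ← Finset.mem_Icc]
      exact hS hm
    · obtain ⟨he, hm⟩ := join_right hS hScard hL hR h1 h2 (by omega) h4
      show joinF k p q S L R i j ∈ Set.Icc 1 (k*(p+q))
      rw [he, ← Finset.coe_Icc]
      exact Finset.mem_coe.mpr (Finset.mem_sdiff.mp hm).1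
  · -- InjOn
    rintro ⟨i, j⟩ hx ⟨a, b⟩ hy hxy
    rw [Set.mem_prod, Set.mem_Icc, Set.mem_Icc] at hx hy
    obtain ⟨⟨h1, h2⟩, h3, h4⟩ := hx
    obtain ⟨⟨g1, g2⟩, g3, g4⟩ := hy
    simp only at hxy
    by_cases hp : j ≤ p <;> by_cases hp' : b ≤ p
    · obtain ⟨he, _⟩ := join_left hS hScard hL hR h1 h2 h3 hp
      obtain ⟨he', _⟩ := join_left hS hScard hL hR g1 g2 g3 hp'
      rw [he, he'] at hxy
      have hb1 := isFilling_mem hL h1 h2 h3 hp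
      have hb2 := isFilling_mem hL g1 g2 g3 hp'
      rw [Set.mem_Icc] at hb1 hb2
      have : L i j = L a b := by
        have e1 := rk_nth (S := S) hb1.1 (by omega)
        have e2 := rk_nth (S := S) hb2.1 (by omega)
        rw [← e1, ← e2, hxy]
      exact hL.2.1.injOn
        (Set.mem_prod.mpr ⟨Set.mem_Icc.mpr ⟨h1, h2⟩, Set.mem_Icc.mpr ⟨h3, hp⟩⟩)
        (Set.mem_prod.mpr ⟨Set.mem_Icc.mpr ⟨g1, g2⟩, Set.mem_Icc.mpr ⟨g3, hp'⟩⟩) this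
    · obtain ⟨he, hm⟩ := join_left hS hScard hL hR h1 h2 h3 hp
      obtain ⟨he', hm'⟩ := join_right hS hScard hL hR g1 g2 (by omega) g4
      rw [he, he'] at hxy
      rw [hxy] at hm
      exact absurd hm (Finset.mem_sdiff.mp hm').2
    · obtain ⟨he, hm⟩ := join_right hS hScard hL hR h1 h2 (by omega) h4
      obtain ⟨he', hm'⟩ := join_left hS hScard hL hR g1 g2 g3 hp'
      rw [he, he'] at hxy
      rw [← hxy] at hm'
      exact absurd hm' (Finset.mem_sdiff.mp hm).2
    · obtain ⟨he, hm⟩ := join_right hS hScard hL hR h1 h2 (by omega) h4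
      obtain ⟨he', hm'⟩ := join_right hS hScard hL hR g1 g2 (by omega) g4
      rw [he, he'] at hxy
      have hb1 := isFilling_mem hR h1 h2 (by omega : 1 ≤ j - p) (by omega : j - p ≤ q)
      have hb2 := isFilling_mem hR g1 g2 (by omega : 1 ≤ b - p) (by omega : b - p ≤ q)
      rw [Set.mem_Icc] at hb1 hb2
      have : R i (j - p) = R a (b - p) := by
        have e1 := rk_nth (S := Finset.Icc 1 (k*(p+q)) \ S) hb1.1 (by omega)
        have e2 := rk_nth (S := Finset.Icc 1 (k*(p+q)) \ S) hb2.1 (by omega)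
        rw [← e1, ← e2, hxy]
      have := hR.2.1.injOn
        (Set.mem_prod.mpr ⟨Set.mem_Icc.mpr ⟨h1, h2⟩,
          Set.mem_Icc.mpr ⟨by omega, by omega⟩⟩ : ((i, j - p) : ℕ × ℕ) ∈ _)
        (Set.mem_prod.mpr ⟨Set.mem_Icc.mpr ⟨g1, g2⟩,
          Set.mem_Icc.mpr ⟨by omega, by omega⟩⟩ : ((a, b - p) : ℕ × ℕ) ∈ _) this
      have e1 : i = a := congrArg Prod.fst this
      have e2 : j - p = b - p := congrArg Prod.snd this
      exact Prod.ext e1 (by omega)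
  · -- SurjOn
    intro y hy
    rw [Set.mem_Icc] at hy
    by_cases hyS : y ∈ S
    · have h1 : 1 ≤ rk S y := rk_ge hyS
      have h2 : rk S y ≤ k * p := by rw [← hScard]; exact rk_le hyS
      obtain ⟨x, hx, hxy⟩ := hL.2.1.surjOn (Set.mem_Icc.mpr ⟨h1, h2⟩)
      rw [Set.mem_prod, Set.mem_Icc, Set.mem_Icc] at hx
      refine ⟨x, Set.mem_prod.mpr ⟨Set.mem_Icc.mpr hx.1,
        Set.mem_Icc.mpr ⟨hx.2.1, by omega⟩⟩, ?_⟩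
      show joinF k p q S L R x.1 x.2 = y
      obtain ⟨he, _⟩ := join_left hS hScard hL hR hx.1.1 hx.1.2 hx.2.1 hx.2.2
      rw [he]
      show nth S (L x.1 x.2) = y
      rw [show L x.1 x.2 = rk S y from hxy, nth_rk hyS]
    · have hyT : y ∈ Finset.Icc 1 (k*(p+q)) \ S :=
        Finset.mem_sdiff.mpr ⟨Finset.mem_Icc.mpr hy, hyS⟩
      have h1 : 1 ≤ rk _ y := rk_ge hyT
      have h2 : rk (Finset.Icc 1 (k*(p+q)) \ S) y ≤ k * q := by
        rw [← Tcard hS hScard]; exact rk_le hyT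
      obtain ⟨x, hx, hxy⟩ := hR.2.1.surjOn (Set.mem_Icc.mpr ⟨h1, h2⟩)
      rw [Set.mem_prod, Set.mem_Icc, Set.mem_Icc] at hx
      refine ⟨(x.1, p + x.2), Set.mem_prod.mpr ⟨Set.mem_Icc.mpr hx.1,
        Set.mem_Icc.mpr ⟨by omega, by omega⟩⟩, ?_⟩
      show joinF k p q S L R x.1 (p + x.2) = y
      obtain ⟨he, _⟩ := join_right hS hScard hL hR hx.1.1 hx.1.2
        (by omega : p + 1 ≤ p + x.2) (by omega)
      rw [he]
      have hx2 : p + x.2 - p = x.2 := by omega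
      rw [hx2]
      rw [show R x.1 x.2 = rk (Finset.Icc 1 (k*(p+q)) \ S) y from hxy, nth_rk hyT]
  · -- columns increase
    intro i j h1 h2 h3 h4
    by_cases hp : j ≤ p
    · obtain ⟨he, _⟩ := join_left hS hScard hL hR h1 (by omega) h3 hp
      obtain ⟨he', _⟩ := join_left hS hScard hL hR (by omega : 1 ≤ i+1) h2 h3 hp
      rw [he, he']
      have hb1 := isFilling_mem hL h1 (by omega) h3 hp
      have hb2 := isFilling_mem hL (by omega : 1 ≤ i+1) h2 h3 hp
      rw [Set.mem_Icc] at hb1 hb2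
      rw [nth_lt_nth hb1.1 (by omega) hb2.1 (by omega)]
      exact hL.2.2 i j h1 h2 h3 hp
    · obtain ⟨he, _⟩ := join_right hS hScard hL hR h1 (by omega) (by omega) h4
      obtain ⟨he', _⟩ := join_right hS hScard hL hR (by omega : 1 ≤ i+1) h2 (by omega) h4
      rw [he, he']
      have hb1 := isFilling_mem hR h1 (by omega) (by omega : 1 ≤ j - p) (by omega : j - p ≤ q)
      have hb2 := isFilling_mem hR (by omega : 1 ≤ i+1) h2 (by omega : 1 ≤ j - p)
        (by omega : j - p ≤ q)
      rw [Set.mem_Icc] at hb1 hb2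
      have hT := Tcard hS hScard
      rw [nth_lt_nth hb1.1 (by omega) hb2.1 (by omega)]
      exact hR.2.2 i (j - p) h1 h2 (by omega) (by omega)

end JoinFacts

section RoundTrip

variable {S : Finset ℕ} {L R : ℕ → ℕ → ℕ}

lemma join_split (hF : IsFilling (p+q) k F) :
    joinF k p q (splitS k p F) (splitL k p F) (splitR k p q F) = F := by
  funext i j
  by_cases hl : 1 ≤ i ∧ i ≤ k ∧ 1 ≤ j ∧ j ≤ p
  · obtain ⟨h1, h2, h3, h4⟩ := hl
    simp only [joinF, splitL, if_pos (⟨h1, h2, h3, h4⟩ : 1 ≤ i ∧ i ≤ k ∧ 1 ≤ j ∧ j ≤ p)]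
    exact nth_rk (mem_splitS_left h1 h2 h3 h4)
  · by_cases hr : 1 ≤ i ∧ i ≤ k ∧ p + 1 ≤ j ∧ j ≤ p + q
    · obtain ⟨h1, h2, h3, h4⟩ := hr
      simp only [joinF, splitR, if_neg hl,
        if_pos (⟨h1, h2, h3, h4⟩ : 1 ≤ i ∧ i ≤ k ∧ p + 1 ≤ j ∧ j ≤ p + q),
        if_pos (⟨h1, h2, (by omega : 1 ≤ j - p), (by omega : j - p ≤ q)⟩ :
          1 ≤ i ∧ i ≤ k ∧ 1 ≤ j - p ∧ j - p ≤ q)]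
      have hj : p + (j - p) = j := by omega
      rw [hj, ← splitT]
      exact nth_rk (mem_splitT_right hF h1 h2 h3 h4)
    · simp only [joinF, if_neg hl, if_neg hr]
      exact (isFilling_zero hF (by omega)).symm

variable (hS : S ⊆ Finset.Icc 1 (k*(p+q))) (hScard : S.card = k * p)
  (hL : IsFilling p k L) (hR : IsFilling q k R)

include hS hScard hL hR

lemma split_join_S : splitS k p (joinF k p q S L R) = S := by
  ext y
  constructor
  · intro hy
    obtain ⟨x, hx, hxy⟩ := Finset.mem_image.mp hy
    rw [Finset.mem_product, Finset.mem_Icc, Finset.mem_Icc] at hx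
    obtain ⟨he, hm⟩ := join_left hS hScard hL hR hx.1.1 hx.1.2 hx.2.1 hx.2.2
    rw [← hxy]
    show joinF k p q S L R x.1 x.2 ∈ S
    rw [he]
    exact hm
  · intro hy
    have h1 : 1 ≤ rk S y := rk_ge hy
    have h2 : rk S y ≤ k * p := by rw [← hScard]; exact rk_le hy
    obtain ⟨x, hx, hxy⟩ := hL.2.1.surjOn (Set.mem_Icc.mpr ⟨h1, h2⟩)
    rw [Set.mem_prod, Set.mem_Icc, Set.mem_Icc] at hx
    apply Finset.mem_image.mpr
    refine ⟨x, Finset.mem_product.mpr ⟨Finset.mem_Icc.mpr hx.1, Finset.mem_Icc.mpr hx.2⟩, ?_⟩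
    obtain ⟨he, _⟩ := join_left hS hScard hL hR hx.1.1 hx.1.2 hx.2.1 hx.2.2
    show joinF k p q S L R x.1 x.2 = y
    rw [he, show L x.1 x.2 = rk S y from hxy, nth_rk hy]

lemma split_join_L : splitL k p (joinF k p q S L R) = L := by
  have hSS := split_join_S hS hScard hL hR
  funext i j
  by_cases hl : 1 ≤ i ∧ i ≤ k ∧ 1 ≤ j ∧ j ≤ p
  · obtain ⟨h1, h2, h3, h4⟩ := hl
    obtain ⟨he, hm⟩ := join_left hS hScard hL hR h1 h2 h3 h4
    simp only [splitL, if_pos (⟨h1, h2, h3, h4⟩ : 1 ≤ i ∧ i ≤ k ∧ 1 ≤ j ∧ j ≤ p), hSS, he]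
    have hb := isFilling_mem hL h1 h2 h3 h4
    rw [Set.mem_Icc] at hb
    exact rk_nth hb.1 (by omega)
  · simp only [splitL, if_neg hl]
    exact (isFilling_zero hL (by omega)).symm

lemma split_join_R : splitR k p q (joinF k p q S L R) = R := by
  have hSS := split_join_S hS hScard hL hR
  funext i j
  by_cases hl : 1 ≤ i ∧ i ≤ k ∧ 1 ≤ j ∧ j ≤ q
  · obtain ⟨h1, h2, h3, h4⟩ := hl
    obtain ⟨he, hm⟩ := join_right hS hScard hL hR h1 h2
      (by omega : p + 1 ≤ p + j) (by omega : p + j ≤ p + q)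
    simp only [splitR, if_pos (⟨h1, h2, h3, h4⟩ : 1 ≤ i ∧ i ≤ k ∧ 1 ≤ j ∧ j ≤ q), splitT, hSS, he]
    have hj : p + j - p = j := by omega
    rw [hj]
    have hb := isFilling_mem hR h1 h2 h3 h4
    rw [Set.mem_Icc] at hb
    have hT := Tcard hS hScard
    exact rk_nth hb.1 (by omega)
  · simp only [splitR, if_neg hl]
    exact (isFilling_zero hR (by omega)).symm

end RoundTrip

section MatchTransfer

lemma matchAt_transfer {G : ℕ → ℕ → ℕ} {i i' : ℕ}
    (h : ∀ a b c d, 1 ≤ a → a ≤ k → 1 ≤ b → b ≤ 2 → 1 ≤ c → c ≤ k → 1 ≤ d → d ≤ 2 →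
      (F a (i - 1 + b) < F c (i - 1 + d) ↔ G a (i' - 1 + b) < G c (i' - 1 + d))) :
    My k U F i ↔ My k U G i' := by
  apply exists_congr; intro P
  apply and_congr_right; intro _
  constructor
  · intro hm a b c d ha1 ha2 hb1 hb2 hc1 hc2 hd1 hd2
    rw [← h a b c d ha1 ha2 hb1 hb2 hc1 hc2 hd1 hd2]
    exact hm a b c d ha1 ha2 hb1 hb2 hc1 hc2 hd1 hd2
  · intro hm a b c d ha1 ha2 hb1 hb2 hc1 hc2 hd1 hd2
    rw [h a b c d ha1 ha2 hb1 hb2 hc1 hc2 hd1 hd2]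
    exact hm a b c d ha1 ha2 hb1 hb2 hc1 hc2 hd1 hd2

lemma matchL (hF : IsFilling (p+q) k F) {i : ℕ} (h1 : 1 ≤ i) (h2 : i + 1 ≤ p) :
    My k U F i ↔ My k U (splitL k p F) i := by
  apply matchAt_transfer
  intro a b c d ha1 ha2 hb1 hb2 hc1 hc2 hd1 hd2
  have hcb : 1 ≤ i - 1 + b ∧ i - 1 + b ≤ p := by omega
  have hcd : 1 ≤ i - 1 + d ∧ i - 1 + d ≤ p := by omega
  have m1 := mem_splitS_left (F := F) (k := k) ha1 ha2 hcb.1 hcb.2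
  have m2 := mem_splitS_left (F := F) (k := k) hc1 hc2 hcd.1 hcd.2
  simp only [splitL, if_pos (⟨ha1, ha2, hcb.1, hcb.2⟩ : _ ∧ _ ∧ _ ∧ _),
    if_pos (⟨hc1, hc2, hcd.1, hcd.2⟩ : _ ∧ _ ∧ _ ∧ _)]
  exact (rk_lt_rk m1 m2).symm

lemma matchR (hF : IsFilling (p+q) k F) {i : ℕ} (h1 : 1 ≤ i) (h2 : i + 1 ≤ q) :
    My k U F (p + i) ↔ My k U (splitR k p q F) i := by
  apply matchAt_transfer
  intro a b c d ha1 ha2 hb1 hb2 hc1 hc2 hd1 hd2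
  have hcb : 1 ≤ i - 1 + b ∧ i - 1 + b ≤ q := by omega
  have hcd : 1 ≤ i - 1 + d ∧ i - 1 + d ≤ q := by omega
  have e1 : p + i - 1 + b = p + (i - 1 + b) := by omega
  have e2 : p + i - 1 + d = p + (i - 1 + d) := by omega
  have m1 := mem_splitT_right (q := q) hF ha1 ha2
    (by omega : p + 1 ≤ p + (i - 1 + b)) (by omega)
  have m2 := mem_splitT_right (q := q) hF hc1 hc2
    (by omega : p + 1 ≤ p + (i - 1 + d)) (by omega)
  simp only [splitR, if_pos (⟨ha1, ha2, hcb.1, hcb.2⟩ : _ ∧ _ ∧ _ ∧ _),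
    if_pos (⟨hc1, hc2, hcd.1, hcd.2⟩ : _ ∧ _ ∧ _ ∧ _), e1, e2]
  exact (rk_lt_rk m1 m2).symm

end MatchTransfer

variable (k) (p) (q)

def LeftAlt (F : ℕ → ℕ → ℕ) : Prop :=
  (∀ i, Odd i → i ≤ p - 1 → My k U F i) ∧
  (∀ i, Even i → 1 ≤ i → i ≤ p - 1 → ¬ My k U F i)

def FullProp (F : ℕ → ℕ → ℕ) : Prop := ∀ i, 1 ≤ i → i ≤ p - 1 → My k U F i

def RightFull (m : ℕ) (F : ℕ → ℕ → ℕ) : Prop :=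
  ∀ i, 1 ≤ i → i ≤ m - p - 1 → My k U F (p + i)

lemma altCount_eq : altCount p k U = Nat.card {F // IsFilling p k F ∧ LeftAlt k U p F} := rfl

lemma fullCount_eq : fullCount p k U = Nat.card {F // IsFilling p k F ∧ FullProp k U p F} := rfl

noncomputable def cutEquiv :
    {F : ℕ → ℕ → ℕ // IsFilling (p+q) k F ∧ LeftAlt k U p F ∧ RightFull k U p (p+q) F} ≃
    ({S : Finset ℕ // S ⊆ Finset.Icc 1 (k*(p+q)) ∧ S.card = k*p} ×
     {L : ℕ → ℕ → ℕ // IsFilling p k L ∧ LeftAlt k U p L} ×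
     {R : ℕ → ℕ → ℕ // IsFilling q k R ∧ FullProp k U q R}) where
  toFun := fun F =>
    (⟨splitS k p F.1, splitS_subset F.2.1, splitS_card F.2.1⟩,
     ⟨splitL k p F.1, splitL_filling F.2.1, by
        obtain ⟨hA1, hA2⟩ := F.2.2.1
        constructor
        · intro i hodd hle
          have h1 : 1 ≤ i := by rw [Nat.odd_iff] at hodd; omega
          exact (matchL U F.2.1 h1 (by omega)).mp (hA1 i hodd hle)
        · intro i heven h1 hle hM
          exact hA2 i heven h1 hle ((matchL U F.2.1 h1 (by omega)).mpr hM)⟩,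
     ⟨splitR k p q F.1, splitR_filling F.2.1, by
        intro i h1 hle
        have := F.2.2.2 i h1 (by omega)
        exact (matchR U F.2.1 h1 (by omega)).mp this⟩)
  invFun := fun x =>
    ⟨joinF k p q x.1.1 x.2.1.1 x.2.2.1, by
      obtain ⟨S, hS1, hS2⟩ := x.1
      obtain ⟨L, hL1, hL2⟩ := x.2.1
      obtain ⟨R, hR1, hR2⟩ := x.2.2
      have hJ := join_filling hS1 hS2 hL1 hR1
      have eL := split_join_L hS1 hS2 hL1 hR1
      have eR := split_join_R hS1 hS2 hL1 hR1
      refine ⟨hJ, ⟨?_, ?_⟩, ?_⟩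
      · intro i hodd hle
        have h1 : 1 ≤ i := by rw [Nat.odd_iff] at hodd; omega
        rw [matchL U hJ h1 (by omega), eL]
        exact hL2.1 i hodd hle
      · intro i heven h1 hle hM
        rw [matchL U hJ h1 (by omega), eL] at hM
        exact hL2.2 i heven h1 hle hM
      · intro i h1 hle
        rw [matchR U hJ h1 (by omega : i + 1 ≤ q), eR]
        exact hR2 i h1 (by omega)⟩
  left_inv := fun F => Subtype.ext (join_split F.2.1)
  right_inv := fun x => by
    obtain ⟨⟨S, hS1, hS2⟩, ⟨L, hL1, hL2⟩, ⟨R, hR1, hR2⟩⟩ := x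
    refine Prod.ext (Subtype.ext ?_) (Prod.ext (Subtype.ext ?_) (Subtype.ext ?_))
    · exact split_join_S hS1 hS2 hL1 hR1
    · exact split_join_L hS1 hS2 hL1 hR1
    · exact split_join_R hS1 hS2 hL1 hR1

lemma card_cut :
    Nat.card {F : ℕ → ℕ → ℕ //
        IsFilling (p+q) k F ∧ LeftAlt k U p F ∧ RightFull k U p (p+q) F} =
      (k*(p+q)).choose (k*p) * (altCount p k U * fullCount q k U) := by
  rw [Nat.card_congr (cutEquiv k U p q), Nat.card_prod, Nat.card_prod]
  have e : {S : Finset ℕ // S ⊆ Finset.Icc 1 (k*(p+q)) ∧ S.card = k*p} ≃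
      {S : Finset ℕ // S ∈ Finset.powersetCard (k*p) (Finset.Icc 1 (k*(p+q)))} :=
    Equiv.subtypeEquivRight (fun S => by rw [Finset.mem_powersetCard])
  have hs : Nat.card {S : Finset ℕ // S ⊆ Finset.Icc 1 (k*(p+q)) ∧ S.card = k*p}
      = (k*(p+q)).choose (k*p) := by
    rw [Nat.card_congr e, Nat.card_eq_fintype_card, Fintype.card_coe,
      Finset.card_powersetCard, Nat.card_Icc]
    norm_num
  rw [hs, altCount_eq, fullCount_eq]

section Involution

/-- validity of the cut at column `2j` in a `2n`-column filling -/
def ValidCut (n j : ℕ) (F : ℕ → ℕ → ℕ) : Prop :=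
  LeftAlt k U (2*j) F ∧ RightFull k U (2*j) (2*n) F

variable {F : ℕ → ℕ → ℕ} {n : ℕ}

lemma valid_step_down {j : ℕ} (hn : 1 ≤ n) (hj : j ≤ n) (hj1 : 1 ≤ j)
    (hV : ValidCut k U n j F) (hM : j = n ∨ My k U F (2*j)) :
    ValidCut k U n (j-1) F ∧ ¬(j - 1 = n ∨ (1 ≤ j - 1 ∧ My k U F (2*(j-1)))) := by
  obtain ⟨⟨hA1, hA2⟩, hB⟩ := hV
  refine ⟨⟨⟨?_, ?_⟩, ?_⟩, ?_⟩
  · intro i hodd hle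
    exact hA1 i hodd (by omega)
  · intro i heven h1 hle
    exact hA2 i heven h1 (by omega)
  · -- RightFull for j-1
    intro i h1 hle
    rcases Nat.lt_or_ge i 2 with h2 | h2
    · -- i = 1
      have hi : i = 1 := by omega
      have e : 2*(j-1) + i = 2*j - 1 := by omega
      rw [e]
      apply hA1
      · rw [Nat.odd_iff]; omega
      · omega
    · rcases Nat.lt_or_ge i 3 with h3 | h3
      · -- i = 2
        have hi : i = 2 := by omega
        have hjn : j < n := by omega
        have e : 2*(j-1) + i = 2*j := by omega
        rw [e]
        rcases hM with h | h
        · omega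
        · exact h
      · -- i ≥ 3
        have e : 2*(j-1) + i = 2*j + (i - 2) := by omega
        rw [e]
        exact hB (i-2) (by omega) (by omega)
  · rintro (h | ⟨h1, h2⟩)
    · omega
    · have heven : Even (2*(j-1)) := even_two_mul _
      exact hA2 (2*(j-1)) heven (by omega) (by omega) h2

lemma valid_step_up {j : ℕ} (hn : 1 ≤ n) (hj : j < n)
    (hV : ValidCut k U n j F) (hM : ¬(1 ≤ j ∧ My k U F (2*j))) :
    ValidCut k U n (j+1) F ∧ (j + 1 = n ∨ (1 ≤ j + 1 ∧ My k U F (2*(j+1)))) := by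
  obtain ⟨⟨hA1, hA2⟩, hB⟩ := hV
  have hBup : ∀ i, 1 ≤ i → i ≤ 2*n - 2*j - 1 → My k U F (2*j + i) := hB
  refine ⟨⟨⟨?_, ?_⟩, ?_⟩, ?_⟩
  · intro i hodd hle
    rw [Nat.odd_iff] at hodd
    rcases Nat.lt_or_ge i (2*j) with h | h
    · exact hA1 i (Nat.odd_iff.mpr hodd) (by omega)
    · have hi : i = 2*j + 1 := by omega
      rw [hi]
      exact hBup 1 (by omega) (by omega)
  · intro i heven h1 hle
    rw [Nat.even_iff] at heven
    rcases Nat.lt_or_ge i (2*j) with h | h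
    · exact hA2 i (Nat.even_iff.mpr heven) h1 (by omega)
    · have hi : i = 2*j := by omega
      intro hMy
      apply hM
      exact ⟨by omega, by rwa [hi] at hMy⟩
  · intro i h1 hle
    have e : 2*(j+1) + i = 2*j + (i + 2) := by omega
    rw [e]
    exact hBup (i+2) (by omega) (by omega)
  · rcases Nat.eq_or_lt_of_le (Nat.succ_le_of_lt hj) with h | h
    · exact Or.inl h
    · refine Or.inr ⟨by omega, ?_⟩
      have e : 2*(j+1) = 2*j + 2 := by omega
      rw [e]
      exact hBup 2 (by omega) (by omega)

open scoped Classical in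
lemma sum_valid (hn : 1 ≤ n) (hF : IsFilling (2*n) k F) :
    ∑ j ∈ (Finset.range (n+1)).filter (fun j => ValidCut k U n j F), (-1:ℤ)^j = 0 := by
  classical
  set MM : ℕ → Prop := fun j => j = n ∨ (1 ≤ j ∧ My k U F (2*j)) with hMM
  apply Finset.sum_involution (fun j _ => if MM j then j - 1 else j + 1)
  · -- sums to zero
    intro a ha
    rw [Finset.mem_filter, Finset.mem_range] at ha
    by_cases h : MM a
    · have ha1 : 1 ≤ a := by
        rcases h with h | h
        · omega
        · exact h.1
      rw [if_pos h]
      have e : a = (a - 1) + 1 := by omega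
      rw [e]
      simp [pow_succ]
    · rw [if_neg h, pow_succ]
      ring
  · -- not fixed point
    intro a ha _
    rw [Finset.mem_filter, Finset.mem_range] at ha
    by_cases h : MM a
    · have ha1 : 1 ≤ a := by
        rcases h with h | h
        · omega
        · exact h.1
      rw [if_pos h]
      omega
    · rw [if_neg h]
      omega
  · -- stays in the set
    intro a ha
    rw [Finset.mem_filter, Finset.mem_range] at ha
    by_cases h : MM a
    · have ha1 : 1 ≤ a := by
        rcases h with h | h
        · omega
        · exact h.1
      rw [if_pos h, Finset.mem_filter, Finset.mem_range]
      have := valid_step_down (k := k) (U := U) hn (by omega) ha1 ha.2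
        (h.imp (fun x => x) (fun x => x.2))
      exact ⟨by omega, this.1⟩
    · have han : a < n := by
        rcases Nat.eq_or_lt_of_le (by omega : a ≤ n) with h' | h'
        · exact absurd (Or.inl h') h
        · omega
      rw [if_neg h, Finset.mem_filter, Finset.mem_range]
      have := valid_step_up (k := k) (U := U) hn han ha.2 (fun hc => h (Or.inr hc))
      exact ⟨by omega, this.1⟩
  · -- involutive
    intro a ha
    rw [Finset.mem_filter, Finset.mem_range] at ha
    by_cases h : MM a
    · have ha1 : 1 ≤ a := by
        rcases h with h | h
        · omega
        · exact h.1
      have hdown := valid_step_down (k := k) (U := U) hn (by omega) ha1 ha.2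
        (h.imp (fun x => x) (fun x => x.2))
      rw [if_pos h, if_neg hdown.2]
      omega
    · have han : a < n := by
        rcases Nat.eq_or_lt_of_le (by omega : a ≤ n) with h' | h'
        · exact absurd (Or.inl h') h
        · omega
      have hup := valid_step_up (k := k) (U := U) hn han ha.2 (fun hc => h (Or.inr hc))
      rw [if_neg h, if_pos hup.2]
      omega

end Involution

section KeyIdentity

lemma card_cut' (n j : ℕ) (hj : j ≤ n) :
    Nat.card {F : ℕ → ℕ → ℕ // IsFilling (2*n) k F ∧ ValidCut k U n j F}
      = (k*(2*n)).choose (k*(2*j)) * (altCount (2*j) k U * fullCount (2*n-2*j) k U) := by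
  have h : 2*j + (2*n - 2*j) = 2*n := by omega
  have hc := card_cut k U (2*j) (2*n - 2*j)
  rw [h] at hc
  exact hc

open scoped Classical in
lemma key_identity (n : ℕ) (hn : 1 ≤ n) :
    ∑ j ∈ Finset.range (n+1), (-1:ℤ)^j *
      ((k*(2*n)).choose (k*(2*j)) * (altCount (2*j) k U * fullCount (2*n-2*j) k U)) = 0 := by
  classical
  haveI : Finite {F : ℕ → ℕ → ℕ // IsFilling (2*n) k F ∧ True} := filling_finite (2*n) k _
  haveI : Finite {F : ℕ → ℕ → ℕ // IsFilling (2*n) k F} :=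
    Finite.of_equiv {F : ℕ → ℕ → ℕ // IsFilling (2*n) k F ∧ True}
      (Equiv.subtypeEquivRight (fun F => by simp))
  letI : Fintype {F : ℕ → ℕ → ℕ // IsFilling (2*n) k F} := Fintype.ofFinite _
  have hcard : ∀ Q : (ℕ → ℕ → ℕ) → Prop, Nat.card {F : ℕ → ℕ → ℕ // IsFilling (2*n) k F ∧ Q F}
      = (Finset.univ.filter
          (fun x : {F : ℕ → ℕ → ℕ // IsFilling (2*n) k F} => Q x.1)).card := by
    intro Q
    rw [Nat.card_congr (Equiv.subtypeSubtypeEquivSubtypeInter _ Q).symm,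
      Nat.card_eq_fintype_card, Fintype.card_subtype]
  calc ∑ j ∈ Finset.range (n+1), (-1:ℤ)^j *
      ((k*(2*n)).choose (k*(2*j)) * (altCount (2*j) k U * fullCount (2*n-2*j) k U))
      = ∑ j ∈ Finset.range (n+1), ∑ x : {F : ℕ → ℕ → ℕ // IsFilling (2*n) k F},
          (if ValidCut k U n j x.1 then (-1:ℤ)^j else 0) := by
        apply Finset.sum_congr rfl
        intro j hj
        rw [Finset.mem_range] at hj
        have : ((k*(2*n)).choose (k*(2*j)) * (altCount (2*j) k U * fullCount (2*n-2*j) k U) : ℤ)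
            = ((Finset.univ.filter (fun x : {F : ℕ → ℕ → ℕ // IsFilling (2*n) k F} =>
                ValidCut k U n j x.1)).card : ℤ) := by
          rw [← hcard (ValidCut k U n j), card_cut' k U n j (by omega)]
          push_cast
          ring
        rw [this, ← Finset.sum_boole, Finset.mul_sum]
        apply Finset.sum_congr rfl
        intro x _
        by_cases h : ValidCut k U n j x.1 <;> simp [h]
    _ = ∑ x : {F : ℕ → ℕ → ℕ // IsFilling (2*n) k F}, ∑ j ∈ Finset.range (n+1),
          (if ValidCut k U n j x.1 then (-1:ℤ)^j else 0) := Finset.sum_comm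
    _ = 0 := by
        apply Finset.sum_eq_zero
        intro x _
        rw [← Finset.sum_filter]
        exact sum_valid k U hn x.2

end KeyIdentity

section Empty

lemma isFilling_zero_iff {F : ℕ → ℕ → ℕ} : IsFilling 0 k F ↔ F = fun _ _ => 0 := by
  constructor
  · intro h
    funext i j
    exact isFilling_zero h (by omega)
  · rintro rfl
    refine ⟨fun i j h => absurd rfl h, ?_, fun i j _ _ h1 h2 => by omega⟩
    have h1 : (Set.Icc 1 0 : Set ℕ) = ∅ := Set.Icc_eq_empty (by omega)
    have h2 : (Set.Icc 1 (k*0) : Set ℕ) = ∅ := by rw [Nat.mul_zero]; exact h1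
    rw [h2, show (Set.Icc 1 k ×ˢ Set.Icc 1 0 : Set (ℕ × ℕ)) = ∅ by rw [h1, Set.prod_empty]]
    exact Set.bijOn_empty _

lemma altCount_zero : altCount 0 k U = 1 := by
  rw [altCount]
  haveI : Nonempty {F : ℕ → ℕ → ℕ // IsFilling 0 k F ∧
      (∀ i, Odd i → i ≤ 0 - 1 → ∃ P ∈ U, MatchAt 2 k P F i) ∧
      (∀ i, Even i → 1 ≤ i → i ≤ 0 - 1 → ¬ ∃ P ∈ U, MatchAt 2 k P F i)} := by
    refine ⟨⟨fun _ _ => 0, (isFilling_zero_iff k).mpr rfl, ?_, ?_⟩⟩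
    · intro i hodd hle
      rw [Nat.odd_iff] at hodd
      omega
    · intro i _ h1 hle
      omega
  haveI : Subsingleton {F : ℕ → ℕ → ℕ // IsFilling 0 k F ∧
      (∀ i, Odd i → i ≤ 0 - 1 → ∃ P ∈ U, MatchAt 2 k P F i) ∧
      (∀ i, Even i → 1 ≤ i → i ≤ 0 - 1 → ¬ ∃ P ∈ U, MatchAt 2 k P F i)} := by
    constructor
    rintro ⟨F, hF, _⟩ ⟨G, hG, _⟩
    apply Subtype.ext
    show F = G
    rw [(isFilling_zero_iff k).mp hF, (isFilling_zero_iff k).mp hG]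
  exact Nat.card_unique

lemma fullCount_zero : fullCount 0 k U = 1 := by
  rw [fullCount]
  haveI : Nonempty {F : ℕ → ℕ → ℕ // IsFilling 0 k F ∧
      ∀ i, 1 ≤ i → i ≤ 0 - 1 → ∃ P ∈ U, MatchAt 2 k P F i} :=
    ⟨⟨fun _ _ => 0, (isFilling_zero_iff k).mpr rfl, fun i h1 hle => by omega⟩⟩
  haveI : Subsingleton {F : ℕ → ℕ → ℕ // IsFilling 0 k F ∧
      ∀ i, 1 ≤ i → i ≤ 0 - 1 → ∃ P ∈ U, MatchAt 2 k P F i} := by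
    constructor
    rintro ⟨F, hF, _⟩ ⟨G, hG, _⟩
    apply Subtype.ext
    show F = G
    rw [(isFilling_zero_iff k).mp hF, (isFilling_zero_iff k).mp hG]
  exact Nat.card_unique

end Empty

lemma term_eq (n a : ℕ) (ha : a ≤ n) :
    (altCount (2*a) k U : ℚ) / ((k*(2*a)).factorial : ℚ) *
      ((-1)^(n-a) * (fullCount (2*n-2*a) k U : ℚ) / ((k*(2*n-2*a)).factorial : ℚ))
    = ((-1)^n / ((k*(2*n)).factorial : ℚ)) *
      ((-1)^a * (((k*(2*n)).choose (k*(2*a)) : ℚ) *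
        ((altCount (2*a) k U : ℚ) * (fullCount (2*n-2*a) k U : ℚ)))) := by
  have hab : k*(2*a) ≤ k*(2*n) := Nat.mul_le_mul_left _ (by omega)
  have hsub : k*(2*n) - k*(2*a) = k*(2*n-2*a) := by
    have h1 : 2*n = 2*a + (2*n - 2*a) := by omega
    have h2 : k*(2*n) = k*(2*a) + k*(2*n-2*a) := by
      calc k*(2*n) = k*(2*a + (2*n-2*a)) := by rw [← h1]
      _ = k*(2*a) + k*(2*n-2*a) := by ring
    omega
  have hnat := Nat.choose_mul_factorial_mul_factorial hab
  rw [hsub] at hnat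
  have hfac : ((k*(2*n)).factorial : ℚ) = ((k*(2*n)).choose (k*(2*a)) : ℚ) *
      ((k*(2*a)).factorial : ℚ) * ((k*(2*n-2*a)).factorial : ℚ) := by
    exact_mod_cast hnat.symm
  have hsign : ((-1:ℚ))^(n-a) = (-1)^n * (-1)^a := by
    have h2 : (n - a) + 2*a = n + a := by omega
    calc ((-1:ℚ))^(n-a) = (-1)^(n-a) * ((-1)^(2*a)) := by
          rw [pow_mul]
          norm_num
    _ = (-1)^((n-a) + 2*a) := by rw [pow_add]
    _ = (-1)^(n + a) := by rw [h2]
    _ = (-1)^n * (-1)^a := by rw [pow_add]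
  have hz1 : ((k*(2*a)).factorial : ℚ) ≠ 0 := Nat.cast_ne_zero.mpr (Nat.factorial_ne_zero _)
  have hz2 : ((k*(2*n-2*a)).factorial : ℚ) ≠ 0 := Nat.cast_ne_zero.mpr (Nat.factorial_ne_zero _)
  have hz3 : (((k*(2*n)).choose (k*(2*a)) : ℕ) : ℚ) ≠ 0 :=
    Nat.cast_ne_zero.mpr (Nat.choose_pos hab).ne'
  rw [hsign, hfac]
  field_simp

end Cut

/-- Theorem: `(1 + Σ_{n≥1} Alt_{2n}^Υ t^{2n}/(2kn)!) ·
(1 + Σ_{n≥1} (-1)^n t^{2n} full_{2n}^Υ/(2kn)!) = 1` as formal power series in `t` over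
`ℚ` (the coefficient of `t^m` is indexed by `m = 2n`). -/
theorem stmt10 (k : ℕ) (hk : 1 ≤ k) (U : Set (ℕ → ℕ → ℕ))
    (hU : ∀ P ∈ U, IsFilling 2 k P) :
    (PowerSeries.mk fun m => if m = 0 then (1 : ℚ) else
        if m % 2 = 0 then (altCount m k U : ℚ) / ((k * m).factorial : ℚ) else 0) *
    (PowerSeries.mk fun m => if m = 0 then (1 : ℚ) else
        if m % 2 = 0 then
          (-1) ^ (m / 2) * (fullCount m k U : ℚ) / ((k * m).factorial : ℚ)
        else 0) = 1 := by
  classical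
  apply PowerSeries.ext
  intro m
  rw [PowerSeries.coeff_mul]
  simp only [PowerSeries.coeff_mk, PowerSeries.coeff_one]
  by_cases h0 : m = 0
  · subst h0
    rw [Finset.Nat.antidiagonal_zero, Finset.sum_singleton]
    norm_num
  · rw [if_neg h0]
    by_cases hpar : m % 2 = 0
    · -- even case
      have hn : 1 ≤ m / 2 := by omega
      set n := m / 2 with hndef
      have hm : m = 2 * n := by omega
      rw [Finset.Nat.sum_antidiagonal_eq_sum_range_succ_mk]
      rw [← Finset.sum_filter_of_ne (p := fun i => i % 2 = 0) (by
        intro x hx hfx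
        by_contra hxodd
        apply hfx
        have hx0 : x ≠ 0 := by omega
        rw [if_neg hx0, if_neg hxodd, zero_mul])]
      have hre := Finset.sum_bij'
        (s := (Finset.range (m+1)).filter (fun i => i % 2 = 0))
        (t := Finset.range (n+1))
        (f := fun x => (if x = 0 then (1:ℚ) else
            if x % 2 = 0 then (altCount x k U : ℚ) / ((k * x).factorial : ℚ) else 0) *
          (if m - x = 0 then (1:ℚ) else if (m - x) % 2 = 0 then
            (-1) ^ ((m - x) / 2) * (fullCount (m - x) k U : ℚ) /
              ((k * (m - x)).factorial : ℚ) else 0))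
        (g := fun a => (if 2*a = 0 then (1:ℚ) else
            if (2*a) % 2 = 0 then (altCount (2*a) k U : ℚ) / ((k * (2*a)).factorial : ℚ) else 0) *
          (if m - 2*a = 0 then (1:ℚ) else if (m - 2*a) % 2 = 0 then
            (-1) ^ ((m - 2*a) / 2) * (fullCount (m - 2*a) k U : ℚ) /
              ((k * (m - 2*a)).factorial : ℚ) else 0))
        (fun b _ => b / 2) (fun a _ => 2*a)
        (by
          intro b hb
          rw [Finset.mem_filter, Finset.mem_range] at hb
          rw [Finset.mem_range]
          show b / 2 < n + 1
          omega)
        (by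
          intro a ha
          rw [Finset.mem_range] at ha
          rw [Finset.mem_filter, Finset.mem_range]
          show 2 * a < m + 1 ∧ 2 * a % 2 = 0
          omega)
        (by
          intro b hb
          rw [Finset.mem_filter, Finset.mem_range] at hb
          show 2 * (b / 2) = b
          omega)
        (by
          intro a ha
          show 2 * a / 2 = a
          omega)
        (by
          intro b hb
          rw [Finset.mem_filter, Finset.mem_range] at hb
          have h2 : 2 * (b / 2) = b := by omega
          simp only [h2])
      rw [hre]
      have hA : ∀ a : ℕ, (if 2*a = 0 then (1:ℚ) else
          if (2*a) % 2 = 0 then (altCount (2*a) k U : ℚ) / ((k * (2*a)).factorial : ℚ) else 0)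
          = (altCount (2*a) k U : ℚ) / ((k * (2*a)).factorial : ℚ) := by
        intro a
        by_cases haz : a = 0
        · subst haz
          rw [if_pos (by omega : 2*0 = 0)]
          rw [altCount_zero]
          norm_num
        · rw [if_neg (by omega : ¬ 2*a = 0), if_pos (by omega : (2*a) % 2 = 0)]
      have hB : ∀ a : ℕ, a ≤ n → (if m - 2*a = 0 then (1:ℚ) else if (m - 2*a) % 2 = 0 then
          (-1) ^ ((m - 2*a) / 2) * (fullCount (m - 2*a) k U : ℚ) /
            ((k * (m - 2*a)).factorial : ℚ) else 0)
          = (-1) ^ (n - a) * (fullCount (2*n - 2*a) k U : ℚ) /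
            ((k * (2*n - 2*a)).factorial : ℚ) := by
        intro a ha
        have hma : m - 2*a = 2*n - 2*a := by omega
        rw [hma]
        by_cases haz : a = n
        · subst haz
          have e0 : 2*n - 2*n = 0 := by omega
          rw [if_pos e0, e0, fullCount_zero k U, Nat.sub_self]
          norm_num
        · have hlt : a < n := by omega
          rw [if_neg (by omega : ¬ 2*n - 2*a = 0), if_pos (by omega : (2*n - 2*a) % 2 = 0)]
          have e : (2*n - 2*a)/2 = n - a := by omega
          rw [e]
      have hterm : ∀ a ∈ Finset.range (n+1),
          (if 2*a = 0 then (1:ℚ) else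
            if (2*a) % 2 = 0 then (altCount (2*a) k U : ℚ) / ((k * (2*a)).factorial : ℚ) else 0) *
          (if m - 2*a = 0 then (1:ℚ) else if (m - 2*a) % 2 = 0 then
            (-1) ^ ((m - 2*a) / 2) * (fullCount (m - 2*a) k U : ℚ) /
              ((k * (m - 2*a)).factorial : ℚ) else 0)
          = ((-1:ℚ)^n / ((k*(2*n)).factorial : ℚ)) *
            ((-1)^a * (((k*(2*n)).choose (k*(2*a)) : ℚ) *
              ((altCount (2*a) k U : ℚ) * (fullCount (2*n-2*a) k U : ℚ)))) := by
        intro a ha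
        rw [Finset.mem_range] at ha
        rw [hA a, hB a (by omega)]
        exact term_eq k U n a (by omega)
      rw [Finset.sum_congr rfl hterm, ← Finset.mul_sum]
      have hzz : ∑ a ∈ Finset.range (n+1), ((-1:ℚ)^a * (((k*(2*n)).choose (k*(2*a)) : ℚ) *
          ((altCount (2*a) k U : ℚ) * (fullCount (2*n-2*a) k U : ℚ)))) = 0 := by
        have hki := key_identity k U n hn
        exact_mod_cast hki
      rw [hzz, mul_zero]
    · -- odd case
      apply Finset.sum_eq_zero
      rintro ⟨i, j⟩ hij
      rw [Finset.HasAntidiagonal.mem_antidiagonal] at hij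
      simp only
      by_cases hi : i % 2 = 0
      · have hj0 : j ≠ 0 := by omega
        have hj : ¬(j % 2 = 0) := by omega
        rw [if_neg hj0, if_neg hj, mul_zero]
      · have hi0 : i ≠ 0 := by omega
        rw [if_neg hi0, if_neg hi, zero_mul]
end
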